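/- arXiv:1011.1237 — 10 statements merged into one kernel-verified Lean document; each statement's English description precedes it below -/
import Mathlib

section
/- Suppose the system is operated under the MaxWeight policy with weight matrix D and the load vector satisfies ρ ∉ 𝒫 (overload). Then limsup_{t→∞} ⟨X(t)/t, D·(X(t)/t)⟩ > 0; in particular there exists a queue q with limsup_{t→∞} X_q(t)/t > 0, and any subsequential limit η of X(t)/t along a sequence attaining this limsup is nonzero. -/
open Finset Filter Topology

/-- A nonnegative bounded real sequence whose limsup is ≤ 0 tends to 0. -/
lemma tendsto_zero_of_limsup_le {f : ℕ → ℝ} (h0 : ∀ t, 0 ≤ f t) {B : ℝ} (hB : ∀ t, f t ≤ B)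
    (hL : limsup f atTop ≤ 0) : Tendsto f atTop (𝓝 0) := by
  have hbdd : IsBoundedUnder (· ≤ ·) atTop f := isBoundedUnder_of ⟨B, hB⟩
  refine tendsto_order.2 ⟨fun a ha => Eventually.of_forall fun t => lt_of_lt_of_le ha (h0 t),
    fun a ha => ?_⟩
  exact eventually_lt_of_limsup_lt (lt_of_le_of_lt hL ha) hbdd

/-- The stability region: loads dominated by a convex combination of service vectors. -/
def stabRegion {Q N : ℕ} (S : Fin N → Fin Q → ℝ) : Set (Fin Q → ℝ) :=
  {r | (∀ q, 0 ≤ r q) ∧ ∃ α : Fin N → ℝ, (∀ i, 0 ≤ α i) ∧ (∑ i, α i) = 1 ∧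
    ∀ q, r q ≤ ∑ i, α i * S i q}

/-- under MaxWeight in overload, the quadratic limsup is positive, some queue's
scaled backlog has positive limsup, and any subsequential limit attaining the limsup is nonzero. -/
theorem stmt0 {Q N : ℕ} (hQ : 0 < Q) (hN : 0 < N)
    (A : ℕ → Fin Q → ℝ) (Abar : Fin Q → ℝ)
    (hA0 : ∀ t q, 0 ≤ A t q) (hAbar : ∀ t q, A t q ≤ Abar q)
    (ρ : Fin Q → ℝ) (hρpos : ∀ q, 0 < ρ q)
    (hρ : ∀ q, Tendsto (fun t : ℕ => (∑ s ∈ Finset.range t, A s q) / (t : ℝ))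
      atTop (𝓝 (ρ q)))
    (S : Fin N → Fin Q → ℝ) (hS : ∀ i q, 0 ≤ S i q)
    (σ : ℕ → Fin N)
    (d : Fin Q → ℝ) (hd : ∀ q, 0 < d q)
    (X : ℕ → Fin Q → ℝ) (hX0 : ∀ q, X 0 q = 0)
    (hXrec : ∀ t q, X (t + 1) q = X t q + A t q - min (S (σ t) q) (X t q))
    (hMW : ∀ t j, ∑ q, S j q * (d q * X t q) ≤ ∑ q, S (σ t) q * (d q * X t q))
    (hover : ρ ∉ stabRegion S) :
    0 < limsup (fun t : ℕ => ∑ q, (X t q / (t : ℝ)) * (d q * (X t q / (t : ℝ)))) atTop ∧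
    (∃ q, 0 < limsup (fun t : ℕ => X t q / (t : ℝ)) atTop) ∧
    ∀ (tc : ℕ → ℕ) (η : Fin Q → ℝ), StrictMono tc →
      Tendsto (fun c => fun q => X (tc c) q / (tc c : ℝ)) atTop (𝓝 η) →
      Tendsto (fun c => ∑ q, (X (tc c) q / (tc c : ℝ)) * (d q * (X (tc c) q / (tc c : ℝ))))
        atTop
        (𝓝 (limsup (fun t : ℕ => ∑ q, (X t q / (t : ℝ)) * (d q * (X t q / (t : ℝ)))) atTop)) →
      η ≠ 0 := by
  -- basic facts
  have hAbar0 : ∀ q, 0 ≤ Abar q := fun q => (hA0 0 q).trans (hAbar 0 q)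
  have hXnn : ∀ t q, 0 ≤ X t q := by
    intro t
    induction t with
    | zero => intro q; rw [hX0]
    | succ t ih =>
      intro q
      rw [hXrec]
      have h1 := min_le_right (S (σ t) q) (X t q)
      have := hA0 t q
      linarith
  have hXub : ∀ t q, X t q ≤ (t : ℝ) * Abar q := by
    intro t
    induction t with
    | zero => intro q; rw [hX0]; simp
    | succ t ih =>
      intro q
      rw [hXrec]
      have h1 : 0 ≤ min (S (σ t) q) (X t q) := le_min (hS _ q) (hXnn t q)
      have h2 := hAbar t q
      have h3 := ih q
      push_cast
      linarith
  have hXlb : ∀ t q,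
      (∑ s ∈ Finset.range t, A s q) - (∑ s ∈ Finset.range t, S (σ s) q) ≤ X t q := by
    intro t
    induction t with
    | zero => intro q; simp [hX0]
    | succ t ih =>
      intro q
      rw [Finset.sum_range_succ, Finset.sum_range_succ, hXrec]
      have h1 := min_le_left (S (σ t) q) (X t q)
      linarith [ih q]
  -- the scaled processes
  set g : Fin Q → ℕ → ℝ := fun q t => X t q / (t : ℝ) with hg
  have hgnn : ∀ q t, 0 ≤ g q t := fun q t => div_nonneg (hXnn t q) (Nat.cast_nonneg t)
  have hgub : ∀ q t, g q t ≤ Abar q := by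
    intro q t
    rcases Nat.eq_zero_or_pos t with h | h
    · subst h; simp [hg, hX0, hAbar0 q]
    · have ht : (0 : ℝ) < t := by exact_mod_cast h
      rw [hg]
      rw [div_le_iff₀ ht]
      calc X t q ≤ (t : ℝ) * Abar q := hXub t q
        _ = Abar q * t := mul_comm _ _
  set f : ℕ → ℝ := fun t => ∑ q, g q t * (d q * g q t) with hf
  have hfnn : ∀ t, 0 ≤ f t := fun t =>
    Finset.sum_nonneg fun q _ => mul_nonneg (hgnn q t) (mul_nonneg (hd q).le (hgnn q t))
  have hfub : ∀ t, f t ≤ ∑ q, Abar q * (d q * Abar q) := by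
    intro t
    refine Finset.sum_le_sum fun q _ => ?_
    have h1 := hgnn q t
    have h2 := hgub q t
    have h3 := (hd q).le
    have h4 : d q * g q t ≤ d q * Abar q := mul_le_mul_of_nonneg_left h2 h3
    exact mul_le_mul h2 h4 (mul_nonneg h3 h1) (hAbar0 q)
  -- main claim: f does not tend to 0
  have hnot : ¬ Tendsto f atTop (𝓝 0) := by
    intro hften
    -- each g q tends to 0
    have hg0 : ∀ q, Tendsto (g q) atTop (𝓝 0) := by
      intro q
      have hterm : ∀ t, g q t * (d q * g q t) ≤ f t := by
        intro t
        exact Finset.single_le_sum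
          (fun r _ => mul_nonneg (hgnn r t) (mul_nonneg (hd r).le (hgnn r t))) (Finset.mem_univ q)
      have hsq : Tendsto (fun t => g q t * (d q * g q t)) atTop (𝓝 0) :=
        squeeze_zero (fun t => mul_nonneg (hgnn q t) (mul_nonneg (hd q).le (hgnn q t)))
          hterm hften
      have hsq2 : Tendsto (fun t => (g q t) ^ 2) atTop (𝓝 0) := by
        have : Tendsto (fun t => (g q t * (d q * g q t)) / d q) atTop (𝓝 (0 / d q)) :=
          hsq.div_const _
        rw [zero_div] at this
        refine this.congr fun t => ?_
        have hdne : d q ≠ 0 := (hd q).ne'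
        field_simp
      have : Tendsto (fun t => Real.sqrt ((g q t) ^ 2)) atTop (𝓝 (Real.sqrt 0)) :=
        (Real.continuous_sqrt.tendsto 0).comp hsq2
      rw [Real.sqrt_zero] at this
      refine this.congr fun t => ?_
      exact Real.sqrt_sq (hgnn q t)
    -- counting fractions of time each service vector is used
    set cnt : Fin N → ℕ → ℝ :=
      fun i t => ∑ s ∈ Finset.range t, (if σ s = i then (1 : ℝ) else 0) with hcnt
    have hdecomp : ∀ t q,
        (∑ s ∈ Finset.range t, S (σ s) q) = ∑ i, cnt i t * S i q := by
      intro t q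
      simp only [hcnt, Finset.sum_mul]
      rw [Finset.sum_comm]
      refine Finset.sum_congr rfl fun s _ => ?_
      simp [ite_mul, Finset.sum_ite_eq]
    have hcntsum : ∀ t, ∑ i, cnt i t = (t : ℝ) := by
      intro t
      simp only [hcnt]
      rw [Finset.sum_comm]
      simp [Finset.sum_ite_eq]
    have hcnt0 : ∀ i t, 0 ≤ cnt i t :=
      fun i t => Finset.sum_nonneg fun s _ => by positivity
    have hcntub : ∀ i t, cnt i t ≤ (t : ℝ) := by
      intro i t
      calc cnt i t ≤ ∑ _s ∈ Finset.range t, (1 : ℝ) :=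
            Finset.sum_le_sum fun s _ => by split <;> norm_num
        _ = t := by simp
    set α : ℕ → Fin N → ℝ := fun t i => cnt i t / t with hα
    have hα0 : ∀ t i, 0 ≤ α t i := fun t i => div_nonneg (hcnt0 i t) (Nat.cast_nonneg t)
    have hα1 : ∀ t i, α t i ≤ 1 := by
      intro t i
      rcases Nat.eq_zero_or_pos t with h | h
      · subst h; simp [hα]
      · have ht : (0 : ℝ) < t := by exact_mod_cast h
        rw [hα, div_le_one ht]
        exact hcntub i t
    have hmem : ∀ t, α t ∈ Metric.closedBall (0 : Fin N → ℝ) 1 := by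
      intro t
      rw [Metric.mem_closedBall, dist_zero_right]
      rw [pi_norm_le_iff_of_nonneg zero_le_one]
      intro i
      rw [Real.norm_eq_abs, abs_le]
      exact ⟨by linarith [hα0 t i], hα1 t i⟩
    obtain ⟨a, -, φ, hφ, hconv⟩ :=
      tendsto_subseq_of_bounded Metric.isBounded_closedBall hmem
    have hco : ∀ i, Tendsto (fun c => α (φ c) i) atTop (𝓝 (a i)) :=
      fun i => tendsto_pi_nhds.1 hconv i
    have hφtop : Tendsto φ atTop atTop := hφ.tendsto_atTop
    have ha0 : ∀ i, 0 ≤ a i := fun i =>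
      ge_of_tendsto (hco i) (Eventually.of_forall fun c => hα0 (φ c) i)
    have hasum : ∑ i, a i = 1 := by
      have h1 : Tendsto (fun c => ∑ i, α (φ c) i) atTop (𝓝 (∑ i, a i)) :=
        tendsto_finset_sum _ fun i _ => hco i
      have heq : (fun c => ∑ i, α (φ c) i) =ᶠ[atTop] fun _ => (1 : ℝ) := by
        filter_upwards [hφtop.eventually_ge_atTop 1] with c hc
        have ht : (0 : ℝ) < (φ c : ℝ) := by exact_mod_cast hc
        simp only [hα]
        rw [← Finset.sum_div, hcntsum, div_self ht.ne']
      exact tendsto_nhds_unique (h1.congr' heq) tendsto_const_nhds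
    -- the key inequality and contradiction
    have hkey : ∀ q, ρ q ≤ ∑ i, a i * S i q := by
      intro q
      have hLHS : Tendsto (fun c => (∑ s ∈ Finset.range (φ c), A s q) / (φ c : ℝ))
          atTop (𝓝 (ρ q)) := (hρ q).comp hφtop
      have hXpart : Tendsto (fun c => g q (φ c)) atTop (𝓝 0) := (hg0 q).comp hφtop
      have hSpart : Tendsto (fun c => ∑ i, α (φ c) i * S i q) atTop
          (𝓝 (∑ i, a i * S i q)) :=
        tendsto_finset_sum _ fun i _ => (hco i).mul_const _
      have hRHS : Tendsto (fun c => g q (φ c) + ∑ i, α (φ c) i * S i q) atTop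
          (𝓝 (0 + ∑ i, a i * S i q)) := hXpart.add hSpart
      rw [zero_add] at hRHS
      refine le_of_tendsto_of_tendsto hLHS hRHS ?_
      filter_upwards [hφtop.eventually_ge_atTop 1] with c hc
      set t := φ c
      have ht : (0 : ℝ) < (t : ℝ) := by exact_mod_cast hc
      have hb : (∑ s ∈ Finset.range t, A s q) ≤ X t q + ∑ i, cnt i t * S i q := by
        have := hXlb t q
        rw [hdecomp t q] at this
        linarith
      calc (∑ s ∈ Finset.range t, A s q) / (t : ℝ)
          ≤ (X t q + ∑ i, cnt i t * S i q) / (t : ℝ) := by gcongr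
        _ = g q t + ∑ i, α t i * S i q := by
            rw [add_div, Finset.sum_div]
            congr 1
            refine Finset.sum_congr rfl fun i _ => ?_
            rw [hα, div_mul_eq_mul_div]
    exact hover ⟨fun q => (hρpos q).le, a, ha0, hasum, hkey⟩
  -- Part 1: positive limsup of the quadratic
  have hfbdd : IsBoundedUnder (· ≤ ·) atTop f :=
    isBoundedUnder_of ⟨∑ q, Abar q * (d q * Abar q), hfub⟩
  have hpos : 0 < limsup f atTop := by
    by_contra h
    push_neg at h
    exact hnot (tendsto_zero_of_limsup_le hfnn hfub h)
  refine ⟨hpos, ?_, ?_⟩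
  -- Part 2: some queue has positive limsup
  · by_contra h
    push_neg at h
    have hg0 : ∀ q, Tendsto (g q) atTop (𝓝 0) := fun q =>
      tendsto_zero_of_limsup_le (hgnn q) (hgub q) (h q)
    have : Tendsto f atTop (𝓝 (∑ q : Fin Q, (0 : ℝ) * (d q * 0))) :=
      tendsto_finset_sum _ fun q _ => (hg0 q).mul ((hg0 q).const_mul _)
    simp only [mul_zero, zero_mul, Finset.sum_const_zero] at this
    exact hnot this
  -- Part 3: subsequential limits attaining the limsup are nonzero
  · intro tc η htc hη hlim
    intro hη0
    subst hη0
    have hco : ∀ q, Tendsto (fun c => X (tc c) q / (tc c : ℝ)) atTop (𝓝 0) :=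
      fun q => tendsto_pi_nhds.1 hη q
    have h2 : Tendsto (fun c => ∑ q, (X (tc c) q / (tc c : ℝ)) *
        (d q * (X (tc c) q / (tc c : ℝ)))) atTop (𝓝 (∑ q : Fin Q, (0 : ℝ) * (d q * 0))) :=
      tendsto_finset_sum _ fun q _ => (hco q).mul ((hco q).const_mul _)
    simp only [mul_zero, zero_mul, Finset.sum_const_zero] at h2
    have := tendsto_nhds_unique hlim h2
    rw [this] at hpos
    exact lt_irrefl 0 hpos
end

section
/- Suppose the system is operated under the MaxWeight policy with weight matrix D and ρ ∉ 𝒫. Then the limit η := lim_{t→∞} X(t)/t exists and is nonzero, and η is the unique minimizer of x ↦ ⟨x, D·x⟩ over the set Ψ(ρ,𝒮); in particular η depends only on ρ, 𝒮 and D and not on the particular arrival trace. Equivalently, η is the unique vector of the form η = (ρ − Σ_{m=1}^N α_m S_m)⁺ with α_m ≥ 0, Σ_{m=1}^N α_m = 1, such that ⟨η, D·S_m⟩ ≥ ⟨η, D·S_k⟩ for every k whenever α_m > 0. -/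
open Finset Filter Topology

/-- The set Ψ(ρ,𝒮) = {(ρ − Σ α_m S_m)⁺ : α ≥ 0, Σ α ≤ 1}. -/
def Psi {Q N : ℕ} (ρ : Fin Q → ℝ) (S : Fin N → Fin Q → ℝ) : Set (Fin Q → ℝ) :=
  {x | ∃ α : Fin N → ℝ, (∀ m, 0 ≤ α m) ∧ (∑ m, α m) ≤ 1 ∧
    x = fun q => max (ρ q - ∑ m, α m * S m q) 0}


lemma max_sq_le' (x : ℝ) : (max x 0)^2 ≤ x^2 := by
  rcases le_or_gt x 0 with h | h
  · rw [max_eq_right h]; simpa using sq_nonneg x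
  · rw [max_eq_left h.le]

lemma max_sq_le (a e : ℝ) :
    (max (a - e) 0)^2 ≤ (max a 0)^2 - 2*(max a 0)*e + e^2 := by
  rcases le_or_gt a 0 with h | h
  · rw [max_eq_right h]
    have h1 : max (a - e) 0 ≤ |e| := max_le (by cases abs_cases e <;> nlinarith) (abs_nonneg e)
    have h2 : 0 ≤ max (a - e) 0 := le_max_right _ _
    nlinarith [sq_abs e]
  · rw [max_eq_left h.le]
    nlinarith [max_sq_le' (a - e)]

lemma kkt_of_min {Q N : ℕ} (ρ : Fin Q → ℝ) (S : Fin N → Fin Q → ℝ)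
    (d : Fin Q → ℝ) (hd : ∀ q, 0 < d q)
    (α : Fin N → ℝ) (hα0 : ∀ m, 0 ≤ α m) (hα1 : ∑ m, α m = 1)
    (hmin : ∀ γ : Fin N → ℝ, (∀ m, 0 ≤ γ m) → (∑ m, γ m) ≤ 1 →
      (∑ q, d q * (max (ρ q - ∑ m, α m * S m q) 0)^2)
        ≤ ∑ q, d q * (max (ρ q - ∑ m, γ m * S m q) 0)^2) :
    ∀ m, 0 < α m → ∀ k,
      (∑ q, d q * S k q * max (ρ q - ∑ m', α m' * S m' q) 0)
        ≤ ∑ q, d q * S m q * max (ρ q - ∑ m', α m' * S m' q) 0 := by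
  intro m hm k
  by_contra hcon
  push_neg at hcon
  set η : Fin Q → ℝ := fun q => max (ρ q - ∑ m', α m' * S m' q) 0 with hη
  set u : Fin Q → ℝ := fun q => S k q - S m q with hu
  set c : ℝ := ∑ q, d q * η q * u q with hc
  have hcpos : 0 < c := by
    have : c = (∑ q, d q * S k q * η q) - ∑ q, d q * S m q * η q := by
      rw [hc, ← Finset.sum_sub_distrib]
      congr 1; ext q; simp only [hu]; ring
    rw [this]
    linarith
  have hkm : k ≠ m := by
    rintro rfl; exact absurd rfl hcon.ne
  set Cu : ℝ := ∑ q, d q * (u q)^2 with hCu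
  have hCu0 : 0 ≤ Cu := Finset.sum_nonneg fun q _ => mul_nonneg (hd q).le (sq_nonneg _)
  set ε : ℝ := min (α m) (c / (Cu + 1)) with hε
  have hεpos : 0 < ε := lt_min hm (div_pos hcpos (by linarith))
  have hεm : ε ≤ α m := min_le_left _ _
  have hεc : ε * Cu < 2 * c := by
    have h1 : ε ≤ c / (Cu + 1) := min_le_right _ _
    have h2 : ε * Cu ≤ (c / (Cu + 1)) * Cu := mul_le_mul_of_nonneg_right h1 hCu0
    have h3 : (c / (Cu + 1)) * Cu ≤ c := by
      rw [div_mul_eq_mul_div, div_le_iff₀ (by linarith : (0:ℝ) < Cu + 1)]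
      nlinarith
    linarith
  set β : Fin N → ℝ := fun j => α j + ε * ((if j = k then 1 else 0) - (if j = m then 1 else 0))
    with hβ
  have hβ0 : ∀ j, 0 ≤ β j := by
    intro j
    by_cases hjk : j = k
    · subst hjk; simp [hβ, hkm]; nlinarith [hα0 j]
    · by_cases hjm : j = m
      · subst hjm; simp [hβ, hjk]; nlinarith [hα0 j, hεm]
      · simp [hβ, hjk, hjm]; nlinarith [hα0 j]
  have hβ1 : ∑ j, β j ≤ 1 := by
    simp only [hβ]
    rw [Finset.sum_add_distrib, hα1]
    rw [show ∑ j, ε * ((if j = k then (1:ℝ) else 0) - (if j = m then 1 else 0))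
        = ε * ((∑ j, if j = k then (1:ℝ) else 0) - ∑ j, if j = m then (1:ℝ) else 0) by
      rw [← Finset.sum_sub_distrib, Finset.mul_sum]]
    rw [Finset.sum_ite_eq' univ k, Finset.sum_ite_eq' univ m]
    simp
  have hlin : ∀ q, ρ q - ∑ j, β j * S j q = (ρ q - ∑ j, α j * S j q) - ε * u q := by
    intro q
    have hterm2 : ∀ j, β j * S j q
        = α j * S j q + ((if j = k then ε * S k q else 0) - (if j = m then ε * S m q else 0)) := by
      intro j
      by_cases hjk : j = k
      · subst hjk; simp [hβ, hkm]; ring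
      · by_cases hjm : j = m
        · subst hjm; simp [hβ, hjk]; ring
        · simp [hβ, hjk, hjm]
    have : ∑ j, β j * S j q = (∑ j, α j * S j q) + ε * u q := by
      rw [Finset.sum_congr rfl fun j _ => hterm2 j, Finset.sum_add_distrib,
        Finset.sum_sub_distrib, Finset.sum_ite_eq' univ k, Finset.sum_ite_eq' univ m]
      simp [hu]
      ring
    rw [this]; ring
  have hbound : (∑ q, d q * (max (ρ q - ∑ m', β m' * S m' q) 0)^2)
      ≤ (∑ q, d q * (η q)^2) - 2*ε*c + ε^2 * Cu := by
    have hterm : ∀ q, d q * (max (ρ q - ∑ m', β m' * S m' q) 0)^2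
        ≤ d q * ((η q)^2 - 2 * η q * (ε * u q) + (ε * u q)^2) := by
      intro q
      apply mul_le_mul_of_nonneg_left _ (hd q).le
      rw [hlin q]
      exact max_sq_le _ _
    calc (∑ q, d q * (max (ρ q - ∑ m', β m' * S m' q) 0)^2)
        ≤ ∑ q, d q * ((η q)^2 - 2 * η q * (ε * u q) + (ε * u q)^2) :=
          Finset.sum_le_sum fun q _ => hterm q
      _ = (∑ q, d q * (η q)^2) - 2*ε*c + ε^2 * Cu := by
          rw [hc, hCu, Finset.mul_sum, Finset.mul_sum,
            ← Finset.sum_sub_distrib, ← Finset.sum_add_distrib]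
          congr 1; ext q; ring
  have hlt : (∑ q, d q * (max (ρ q - ∑ m', β m' * S m' q) 0)^2)
      < ∑ q, d q * (η q)^2 := by
    have : ε^2 * Cu < 2*ε*c := by nlinarith
    linarith
  exact absurd (hmin β hβ0 hβ1) (by simp only [hη] at hlt; linarith)


lemma eta_exists {Q N : ℕ} (hN : 0 < N)
    (ρ : Fin Q → ℝ) (S : Fin N → Fin Q → ℝ) (hS : ∀ i q, 0 ≤ S i q)
    (d : Fin Q → ℝ) (hd : ∀ q, 0 < d q) :
    ∃ α : Fin N → ℝ, (∀ m, 0 ≤ α m) ∧ (∑ m, α m) = 1 ∧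
      ∀ β : Fin N → ℝ, (∀ m, 0 ≤ β m) → (∑ m, β m) ≤ 1 →
        (∑ q, d q * (max (ρ q - ∑ m, α m * S m q) 0)^2)
          ≤ ∑ q, d q * (max (ρ q - ∑ m, β m * S m q) 0)^2 := by
  set h : (Fin N → ℝ) → ℝ :=
    fun β => ∑ q, d q * (max (ρ q - ∑ m, β m * S m q) 0)^2 with hh
  set Δ : Set (Fin N → ℝ) := {β | (∀ m, 0 ≤ β m) ∧ ∑ m, β m ≤ 1} with hΔ
  have hcont : Continuous h := by
    apply continuous_finset_sum
    intro q _
    exact continuous_const.mul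
      (((continuous_const.sub (continuous_finset_sum _
        (fun m _ => (continuous_apply m).mul continuous_const))).max continuous_const).pow 2)
  have hclosed : IsClosed Δ := by
    have h1 : IsClosed {β : Fin N → ℝ | ∀ m, 0 ≤ β m} := by
      have : {β : Fin N → ℝ | ∀ m, 0 ≤ β m} = ⋂ m, {β | 0 ≤ β m} := by
        ext β; simp [Set.mem_iInter]
      rw [this]
      exact isClosed_iInter fun m => isClosed_le continuous_const (continuous_apply m)
    have h2 : IsClosed {β : Fin N → ℝ | ∑ m, β m ≤ 1} :=
      isClosed_le (continuous_finset_sum _ fun m _ => continuous_apply m) continuous_const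
    exact (h1.inter h2)
  have hsub : Δ ⊆ Set.Icc (0 : Fin N → ℝ) 1 := by
    rintro β ⟨hb0, hb1⟩
    refine ⟨fun m => hb0 m, fun m => ?_⟩
    calc β m ≤ ∑ m', β m' := Finset.single_le_sum (fun i _ => hb0 i) (mem_univ m)
    _ ≤ 1 := hb1
  have hcomp : IsCompact Δ := (isCompact_Icc).of_isClosed_subset hclosed hsub
  have hne : (0 : Fin N → ℝ) ∈ Δ := ⟨fun m => le_refl 0, by simp⟩
  obtain ⟨α0, hα0, hmin⟩ := hcomp.exists_isMinOn ⟨0, hne⟩ hcont.continuousOn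
  set i0 : Fin N := ⟨0, hN⟩
  set α : Fin N → ℝ := fun m => α0 m + (if m = i0 then 1 - ∑ m', α0 m' else 0) with hα
  have hα0nn := hα0.1
  have hα0le := hα0.2
  have hαnn : ∀ m, 0 ≤ α m := by
    intro m
    by_cases hmi : m = i0
    · simp only [hα, hmi, if_pos]
      linarith [hα0nn i0]
    · simp only [hα, if_neg hmi, add_zero]
      exact hα0nn m
  have hαsum : ∑ m, α m = 1 := by
    simp only [hα, Finset.sum_add_distrib, Finset.sum_ite_eq' univ i0, mem_univ, if_true]
    ring
  have hserv : ∀ q, ∑ m, α0 m * S m q ≤ ∑ m, α m * S m q := by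
    intro q
    have : ∑ m, α m * S m q
        = ∑ m, α0 m * S m q + (1 - ∑ m', α0 m') * S i0 q := by
      have hterm : ∀ m, α m * S m q
          = α0 m * S m q + (if m = i0 then (1 - ∑ m', α0 m') * S i0 q else 0) := by
        intro m
        by_cases hmi : m = i0
        · simp only [hα, hmi, if_pos]; ring
        · simp only [hα, if_neg hmi]; ring
      rw [Finset.sum_congr rfl fun m _ => hterm m, Finset.sum_add_distrib,
        Finset.sum_ite_eq' univ i0]
      simp
    rw [this]
    nlinarith [hS i0 q]
  have hαΔ : α ∈ Δ := ⟨hαnn, le_of_eq hαsum⟩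
  have hle : h α ≤ h α0 := by
    apply Finset.sum_le_sum
    intro q _
    have h1 : max (ρ q - ∑ m, α m * S m q) 0 ≤ max (ρ q - ∑ m, α0 m * S m q) 0 :=
      max_le_max (by linarith [hserv q]) le_rfl
    have h2 : (0:ℝ) ≤ max (ρ q - ∑ m, α m * S m q) 0 := le_max_right _ _
    exact mul_le_mul_of_nonneg_left (pow_le_pow_left₀ h2 h1 2) (hd q).le
  exact ⟨α, hαnn, hαsum, fun β hβ0 hβ1 => le_trans hle (hmin ⟨hβ0, hβ1⟩)⟩


lemma min_unique {Q N : ℕ} (ρ : Fin Q → ℝ) (S : Fin N → Fin Q → ℝ)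
    (d : Fin Q → ℝ) (hd : ∀ q, 0 < d q)
    (α β : Fin N → ℝ) (hα0 : ∀ m, 0 ≤ α m) (hα1 : ∑ m, α m ≤ 1)
    (hβ0 : ∀ m, 0 ≤ β m) (hβ1 : ∑ m, β m ≤ 1)
    (hmin : ∀ γ : Fin N → ℝ, (∀ m, 0 ≤ γ m) → (∑ m, γ m) ≤ 1 →
      (∑ q, d q * (max (ρ q - ∑ m, α m * S m q) 0)^2)
        ≤ ∑ q, d q * (max (ρ q - ∑ m, γ m * S m q) 0)^2)
    (heq : (∑ q, d q * (max (ρ q - ∑ m, β m * S m q) 0)^2)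
        ≤ ∑ q, d q * (max (ρ q - ∑ m, α m * S m q) 0)^2) :
    ∀ q, max (ρ q - ∑ m, α m * S m q) 0 = max (ρ q - ∑ m, β m * S m q) 0 := by
  set γ : Fin N → ℝ := fun m => (α m + β m)/2 with hγ
  have hγ0 : ∀ m, 0 ≤ γ m := fun m => by
    simp only [hγ]; linarith [hα0 m, hβ0 m]
  have hγ1 : ∑ m, γ m ≤ 1 := by
    simp only [hγ]
    rw [show ∑ m, (α m + β m)/2 = ((∑ m, α m) + (∑ m, β m))/2 by
      rw [← Finset.sum_add_distrib, Finset.sum_div]]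
    linarith
  set M : Fin Q → ℝ := fun q => max (ρ q - ∑ m, α m * S m q) 0 with hM
  set L : Fin Q → ℝ := fun q => max (ρ q - ∑ m, β m * S m q) 0 with hL
  have hmid : ∀ q, max (ρ q - ∑ m, γ m * S m q) 0 ≤ (M q + L q)/2 := by
    intro q
    have hc : ρ q - ∑ m, γ m * S m q
        = ((ρ q - ∑ m, α m * S m q) + (ρ q - ∑ m, β m * S m q))/2 := by
      have : ∑ m, γ m * S m q = ((∑ m, α m * S m q) + (∑ m, β m * S m q))/2 := by
        simp only [hγ]
        rw [← Finset.sum_add_distrib, Finset.sum_div]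
        congr 1; ext m; ring
      rw [this]; ring
    rw [hc]
    apply max_le
    · have h1 : ρ q - ∑ m, α m * S m q ≤ M q := le_max_left _ _
      have h2 : ρ q - ∑ m, β m * S m q ≤ L q := le_max_left _ _
      linarith
    · have h1 : (0:ℝ) ≤ M q := le_max_right _ _
      have h2 : (0:ℝ) ≤ L q := le_max_right _ _
      linarith
  have hkey : ∑ q, d q * ((M q - L q)/2)^2 ≤ 0 := by
    have h1 : (∑ q, d q * (max (ρ q - ∑ m, α m * S m q) 0)^2)
        ≤ ∑ q, d q * (max (ρ q - ∑ m, γ m * S m q) 0)^2 := hmin γ hγ0 hγ1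
    have h2 : ∑ q, d q * (max (ρ q - ∑ m, γ m * S m q) 0)^2
        ≤ ∑ q, d q * ((M q + L q)/2)^2 := by
      apply Finset.sum_le_sum
      intro q _
      have h0 : (0:ℝ) ≤ max (ρ q - ∑ m, γ m * S m q) 0 := le_max_right _ _
      exact mul_le_mul_of_nonneg_left (pow_le_pow_left₀ h0 (hmid q) 2) (hd q).le
    have h3 : ∑ q, d q * ((M q + L q)/2)^2
        = (∑ q, d q * (M q)^2)/2 + (∑ q, d q * (L q)^2)/2 - ∑ q, d q * ((M q - L q)/2)^2 := by
      rw [Finset.sum_div, Finset.sum_div, ← Finset.sum_add_distrib, ← Finset.sum_sub_distrib]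
      congr 1; ext q; ring
    have h4 : (∑ q, d q * (L q)^2) ≤ ∑ q, d q * (M q)^2 := heq
    have h5 : (∑ q, d q * (M q)^2) ≤ ∑ q, d q * (max (ρ q - ∑ m, γ m * S m q) 0)^2 := h1
    linarith
  intro q
  have hz : d q * ((M q - L q)/2)^2 = 0 := by
    have hnn : ∀ r ∈ (univ : Finset (Fin Q)), 0 ≤ d r * ((M r - L r)/2)^2 :=
      fun r _ => mul_nonneg (hd r).le (sq_nonneg _)
    have := (Finset.sum_eq_zero_iff_of_nonneg hnn).mp
      (le_antisymm hkey (Finset.sum_nonneg hnn)) q (mem_univ q)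
    exact this
  have h6 : (M q - L q)/2 = 0 := by
    rcases mul_eq_zero.mp hz with h | h
    · exact absurd h (hd q).ne'
    · exact pow_eq_zero_iff two_ne_zero |>.mp h
  show M q = L q
  linarith


lemma vi_of_kkt {Q N : ℕ} (ρ : Fin Q → ℝ) (S : Fin N → Fin Q → ℝ) (hS : ∀ i q, 0 ≤ S i q)
    (d : Fin Q → ℝ) (hd : ∀ q, 0 < d q)
    (α : Fin N → ℝ) (hα0 : ∀ m, 0 ≤ α m) (hα1 : ∑ m, α m = 1)
    (η : Fin Q → ℝ) (hηdef : η = fun q => max (ρ q - ∑ m', α m' * S m' q) 0)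
    (hkkt : ∀ m, 0 < α m → ∀ k,
      (∑ q, d q * S k q * η q) ≤ ∑ q, d q * S m q * η q)
    (β : Fin N → ℝ) (hβ0 : ∀ m, 0 ≤ β m) (hβ1 : ∑ m, β m ≤ 1) :
    (∑ q, d q * η q * η q) ≤ ∑ q, d q * η q * max (ρ q - ∑ m', β m' * S m' q) 0 := by
  have hηnn : ∀ q, 0 ≤ η q := by intro q; rw [hηdef]; exact le_max_right _ _
  set w : Fin N → ℝ := fun j => ∑ q, d q * S j q * η q with hw
  have hwnn : ∀ j, 0 ≤ w j :=
    fun j => Finset.sum_nonneg fun q _ =>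
      mul_nonneg (mul_nonneg (hd q).le (hS j q)) (hηnn q)
  obtain ⟨m0, hm0⟩ : ∃ m0, 0 < α m0 := by
    by_contra hcon
    push_neg at hcon
    have : ∑ m, α m = 0 := Finset.sum_eq_zero fun m _ => le_antisymm (hcon m) (hα0 m)
    rw [hα1] at this; norm_num at this
  set M : ℝ := w m0 with hM
  have hwM : ∀ j, w j ≤ M := fun j => hkkt m0 hm0 j
  have hMnn : 0 ≤ M := hwnn m0
  -- ∑_j α_j w_j = M
  have hαw : ∑ j, α j * w j = M := by
    have : ∀ j, α j * w j = α j * M := by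
      intro j
      rcases eq_or_lt_of_le (hα0 j) with h | h
      · rw [← h]; ring
      · have h1 : M ≤ w j := hkkt j h m0
        have h2 : w j ≤ M := hwM j
        rw [le_antisymm h2 h1]
    rw [Finset.sum_congr rfl fun j _ => this j, ← Finset.sum_mul, hα1, one_mul]
  -- ∑ d η η = ∑ d η ρ - M
  have hswap : ∀ γ : Fin N → ℝ, ∑ q, d q * η q * (∑ m', γ m' * S m' q) = ∑ j, γ j * w j := by
    intro γ
    calc ∑ q, d q * η q * (∑ m', γ m' * S m' q)
        = ∑ q, ∑ m', γ m' * (d q * S m' q * η q) :=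
          Finset.sum_congr rfl fun q _ => by
            rw [Finset.mul_sum]; exact Finset.sum_congr rfl fun m _ => by ring
      _ = ∑ j, ∑ q, γ j * (d q * S j q * η q) := Finset.sum_comm
      _ = ∑ j, γ j * w j :=
          Finset.sum_congr rfl fun j _ => by rw [hw, Finset.mul_sum]
  have hηη : ∑ q, d q * η q * η q = (∑ q, d q * η q * ρ q) - M := by
    have hpt : ∀ q, d q * η q * η q
        = d q * η q * ρ q - d q * η q * (∑ m', α m' * S m' q) := by
      intro q
      rcases le_or_gt (ρ q - ∑ m', α m' * S m' q) 0 with h | h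
      · have hz : η q = 0 := by rw [hηdef]; exact max_eq_right h
        rw [hz]; ring
      · have hz : η q = ρ q - ∑ m', α m' * S m' q := by rw [hηdef]; exact max_eq_left h.le
        nth_rewrite 2 [hz]
        ring
    rw [Finset.sum_congr rfl fun q _ => hpt q, Finset.sum_sub_distrib, hswap α, hαw]
  have hβw : ∑ j, β j * w j ≤ M := by
    calc ∑ j, β j * w j ≤ ∑ j, β j * M :=
          Finset.sum_le_sum fun j _ => mul_le_mul_of_nonneg_left (hwM j) (hβ0 j)
      _ = (∑ j, β j) * M := (Finset.sum_mul _ _ _).symm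
      _ ≤ 1 * M := mul_le_mul_of_nonneg_right hβ1 hMnn
      _ = M := one_mul M
  have hfin : (∑ q, d q * η q * ρ q) - ∑ j, β j * w j
      ≤ ∑ q, d q * η q * max (ρ q - ∑ m', β m' * S m' q) 0 := by
    rw [← hswap β, ← Finset.sum_sub_distrib]
    apply Finset.sum_le_sum
    intro q _
    have h1 : ρ q - ∑ m', β m' * S m' q ≤ max (ρ q - ∑ m', β m' * S m' q) 0 := le_max_left _ _
    have h2 : 0 ≤ d q * η q := mul_nonneg (hd q).le (hηnn q)
    nlinarith
  linarith


lemma abel_sum (Y e : ℕ → ℝ) (t : ℕ) :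
    ∑ s ∈ range t, Y s * e s
      = Y t * (∑ u ∈ range t, e u)
        - ∑ s ∈ range t, (Y (s+1) - Y s) * (∑ u ∈ range (s+1), e u) := by
  induction t with
  | zero => simp
  | succ t ih =>
    rw [Finset.sum_range_succ, ih, Finset.sum_range_succ (fun s => (Y (s+1) - Y s) * _),
      Finset.sum_range_succ e]
    ring

lemma noise_lim (Y e : ℕ → ℝ) (K : ℝ) (hK : 0 ≤ K)
    (hY : ∀ s, |Y s| ≤ K * s) (hYd : ∀ s, |Y (s+1) - Y s| ≤ K)
    (hb : Tendsto (fun t : ℕ => (∑ u ∈ range t, e u) / (t:ℝ)) atTop (𝓝 0)) :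
    Tendsto (fun t : ℕ => (∑ s ∈ range t, Y s * e s) / (t:ℝ)^2) atTop (𝓝 0) := by
  set b : ℕ → ℝ := fun t => ∑ u ∈ range t, e u with hbdef
  set u : ℕ → ℝ := fun s => |b (s+1)| / (s+1 : ℝ) with hudef
  have hu0 : ∀ s, 0 ≤ u s := fun s => div_nonneg (abs_nonneg _) (by positivity)
  have hutend : Tendsto u atTop (𝓝 0) := by
    have h1 : Tendsto (fun t : ℕ => |b t| / (t:ℝ)) atTop (𝓝 0) := by
      have := hb.abs
      simp only [abs_zero] at this
      refine this.congr fun t => ?_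
      rw [abs_div, Nat.abs_cast]
    have h2 := h1.comp (tendsto_add_atTop_nat 1)
    refine h2.congr fun s => ?_
    simp [hudef, Function.comp]
  have hcesaro : Tendsto (fun t : ℕ => (t:ℝ)⁻¹ * ∑ s ∈ range t, u s) atTop (𝓝 0) :=
    hutend.cesaro
  set g : ℕ → ℝ := fun t => K * |b t / t| + K * ((t:ℝ)⁻¹ * ∑ s ∈ range t, u s) with hgdef
  have hg : Tendsto g atTop (𝓝 0) := by
    have h1 : Tendsto (fun t : ℕ => K * |b t / t|) atTop (𝓝 (K * 0)) := by
      apply Tendsto.const_mul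
      have := hb.abs; simpa using this
    have h2 := hcesaro.const_mul K
    have := (h1.add (h2 : Tendsto _ atTop (𝓝 (K * 0))))
    simpa using this
  apply squeeze_zero_norm' _ hg
  filter_upwards [eventually_ge_atTop 1] with t ht
  have htpos : (0:ℝ) < t := by exact_mod_cast ht
  -- bound on the numerator
  have hnum : |∑ s ∈ range t, Y s * e s| ≤ K * t * |b t| + K * (t * ∑ s ∈ range t, u s) := by
    rw [abel_sum Y e t]
    have h1 : |Y t * b t| ≤ K * t * |b t| := by
      rw [abs_mul]
      exact mul_le_mul_of_nonneg_right (hY t) (abs_nonneg _)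
    have h2 : |∑ s ∈ range t, (Y (s+1) - Y s) * b (s+1)| ≤ K * (t * ∑ s ∈ range t, u s) := by
      calc |∑ s ∈ range t, (Y (s+1) - Y s) * b (s+1)|
          ≤ ∑ s ∈ range t, |(Y (s+1) - Y s) * b (s+1)| := Finset.abs_sum_le_sum_abs _ _
        _ ≤ ∑ s ∈ range t, K * (t * u s) := by
            apply Finset.sum_le_sum
            intro s hs
            rw [abs_mul]
            have hs' : (s:ℝ) + 1 ≤ t := by
              have := Finset.mem_range.mp hs
              exact_mod_cast Nat.succ_le_of_lt this
            have hbs : |b (s+1)| = ((s:ℝ)+1) * u s := by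
              rw [hudef]
              field_simp
            have hble : |b (s+1)| ≤ t * u s := by
              rw [hbs]
              exact mul_le_mul_of_nonneg_right hs' (hu0 s)
            calc |Y (s+1) - Y s| * |b (s+1)| ≤ K * |b (s+1)| :=
                  mul_le_mul_of_nonneg_right (hYd s) (abs_nonneg _)
              _ ≤ K * (t * u s) := mul_le_mul_of_nonneg_left hble hK
        _ = K * (t * ∑ s ∈ range t, u s) := by
            rw [← Finset.mul_sum, ← Finset.mul_sum]
    calc |Y t * b t - ∑ s ∈ range t, (Y (s+1) - Y s) * b (s+1)|
        ≤ |Y t * b t| + |∑ s ∈ range t, (Y (s+1) - Y s) * b (s+1)| := abs_sub _ _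
      _ ≤ K * t * |b t| + K * (t * ∑ s ∈ range t, u s) := add_le_add h1 h2
  -- conclude
  have ht2 : (0:ℝ) < (t:ℝ)^2 := by positivity
  rw [Real.norm_eq_abs, abs_div, abs_pow, Nat.abs_cast]
  rw [div_le_iff₀ ht2]
  have hgt : g t * (t:ℝ)^2 = K * t * (|b t / t| * t) + K * (t * (t * ((t:ℝ)⁻¹ * ∑ s ∈ range t, u s))) := by
    rw [hgdef]; ring
  rw [hgt]
  have e1 : |b t / (t:ℝ)| * t = |b t| := by
    rw [abs_div, Nat.abs_cast, div_mul_cancel₀]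
    exact htpos.ne'
  have e2 : (t:ℝ) * ((t:ℝ)⁻¹ * ∑ s ∈ range t, u s) = ∑ s ∈ range t, u s := by
    rw [← mul_assoc, mul_inv_cancel₀ htpos.ne', one_mul]
  rw [e1, e2]
  exact hnum


set_option maxHeartbeats 1000000 in
/-- under MaxWeight in overload, X(t)/t converges to a nonzero η, which is the
unique minimizer of ⟨x, D x⟩ over Ψ(ρ,𝒮), and equivalently the unique fixed point. -/
theorem stmt1 {Q N : ℕ} (hQ : 0 < Q) (hN : 0 < N)
    (A : ℕ → Fin Q → ℝ) (Abar : Fin Q → ℝ)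
    (hA0 : ∀ t q, 0 ≤ A t q) (hAbar : ∀ t q, A t q ≤ Abar q)
    (ρ : Fin Q → ℝ) (hρpos : ∀ q, 0 < ρ q)
    (hρ : ∀ q, Tendsto (fun t : ℕ => (∑ s ∈ Finset.range t, A s q) / (t : ℝ))
      atTop (𝓝 (ρ q)))
    (S : Fin N → Fin Q → ℝ) (hS : ∀ i q, 0 ≤ S i q)
    (σ : ℕ → Fin N)
    (d : Fin Q → ℝ) (hd : ∀ q, 0 < d q)
    (X : ℕ → Fin Q → ℝ) (hX0 : ∀ q, X 0 q = 0)
    (hXrec : ∀ t q, X (t + 1) q = X t q + A t q - min (S (σ t) q) (X t q))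
    (hMW : ∀ t j, ∑ q, S j q * (d q * X t q) ≤ ∑ q, S (σ t) q * (d q * X t q))
    (hover : ρ ∉ stabRegion S) :
    ∃ η : Fin Q → ℝ,
      Tendsto (fun t : ℕ => fun q => X t q / (t : ℝ)) atTop (𝓝 η) ∧
      η ≠ 0 ∧
      η ∈ Psi ρ S ∧
      (∀ x ∈ Psi ρ S, x ≠ η →
        ∑ q, η q * (d q * η q) < ∑ q, x q * (d q * x q)) ∧
      (∃ α : Fin N → ℝ, (∀ m, 0 ≤ α m) ∧ (∑ m, α m) = 1 ∧
        (η = fun q => max (ρ q - ∑ m, α m * S m q) 0) ∧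
        ∀ m, 0 < α m → ∀ k,
          ∑ q, S k q * (d q * η q) ≤ ∑ q, S m q * (d q * η q)) ∧
      (∀ η' : Fin Q → ℝ,
        (∃ α : Fin N → ℝ, (∀ m, 0 ≤ α m) ∧ (∑ m, α m) = 1 ∧
          (η' = fun q => max (ρ q - ∑ m, α m * S m q) 0) ∧
          ∀ m, 0 < α m → ∀ k,
            ∑ q, S k q * (d q * η' q) ≤ ∑ q, S m q * (d q * η' q)) →
        η' = η) := by
  classical
  obtain ⟨α, hαnn, hαsum, hαmin⟩ := eta_exists hN ρ S hS d hd
  set η : Fin Q → ℝ := fun q => max (ρ q - ∑ m, α m * S m q) 0 with hηdef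
  have hηnn : ∀ q, 0 ≤ η q := fun q => le_max_right _ _
  have hkkt : ∀ m, 0 < α m → ∀ k,
      (∑ q, d q * S k q * η q) ≤ ∑ q, d q * S m q * η q := by
    intro m hm k
    simpa [hηdef] using kkt_of_min ρ S d hd α hαnn hαsum hαmin m hm k
  -- membership
  have hmem : η ∈ Psi ρ S := ⟨α, hαnn, hαsum.le, hηdef⟩
  -- nonzero
  have hηne : η ≠ 0 := by
    intro h0
    apply hover
    refine ⟨fun q => (hρpos q).le, α, hαnn, hαsum, fun q => ?_⟩
    have h1 : η q = 0 := by rw [h0]; rfl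
    have h2 : ρ q - ∑ m, α m * S m q ≤ η q := le_max_left _ _
    linarith [h2, h1.symm ▸ h2]
  -- strict minimality
  have hform : ∀ z : Fin Q → ℝ, ∑ q, z q * (d q * z q) = ∑ q, d q * (z q)^2 :=
    fun z => Finset.sum_congr rfl fun q _ => by ring
  have hstrict : ∀ x ∈ Psi ρ S, x ≠ η →
      ∑ q, η q * (d q * η q) < ∑ q, x q * (d q * x q) := by
    rintro x ⟨β, hβ0, hβ1, rfl⟩ hne
    rw [hform, hform]
    have hle : (∑ q, d q * (η q)^2)
        ≤ ∑ q, d q * ((fun q => max (ρ q - ∑ m, β m * S m q) 0) q)^2 := by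
      simpa [hηdef] using hαmin β hβ0 hβ1
    rcases lt_or_eq_of_le hle with h | h
    · exact h
    · exfalso
      apply hne
      funext q
      have := min_unique ρ S d hd α β hαnn hαsum.le hβ0 hβ1 hαmin (le_of_eq ?_)
      · exact (this q).symm
      · simpa [hηdef] using h.symm
  -- KKT statement in theorem form
  have hkktform : ∀ (ζ : Fin Q → ℝ) (j : Fin N),
      ∑ q, S j q * (d q * ζ q) = ∑ q, d q * S j q * ζ q :=
    fun ζ j => Finset.sum_congr rfl fun q _ => by ring
  have hkkt' : ∃ α' : Fin N → ℝ, (∀ m, 0 ≤ α' m) ∧ (∑ m, α' m) = 1 ∧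
      (η = fun q => max (ρ q - ∑ m, α' m * S m q) 0) ∧
      ∀ m, 0 < α' m → ∀ k,
        ∑ q, S k q * (d q * η q) ≤ ∑ q, S m q * (d q * η q) := by
    exact ⟨α, hαnn, hαsum, hηdef, fun m hm k => by
      rw [hkktform, hkktform]; exact hkkt m hm k⟩
  -- uniqueness of fixed point
  have huniq : ∀ η' : Fin Q → ℝ,
      (∃ α' : Fin N → ℝ, (∀ m, 0 ≤ α' m) ∧ (∑ m, α' m) = 1 ∧
        (η' = fun q => max (ρ q - ∑ m, α' m * S m q) 0) ∧
        ∀ m, 0 < α' m → ∀ k,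
          ∑ q, S k q * (d q * η' q) ≤ ∑ q, S m q * (d q * η' q)) →
      η' = η := by
    rintro η' ⟨α', hα'0, hα'1, hη'def, hα'kkt⟩
    have hη'kkt : ∀ m, 0 < α' m → ∀ k,
        (∑ q, d q * S k q * η' q) ≤ ∑ q, d q * S m q * η' q := by
      intro m hm k
      rw [← hkktform, ← hkktform]; exact hα'kkt m hm k
    have hvi1 : (∑ q, d q * η' q * η' q) ≤ ∑ q, d q * η' q * η q := by
      have := vi_of_kkt ρ S hS d hd α' hα'0 hα'1 η' hη'def hη'kkt α hαnn hαsum.le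
      simpa [hηdef] using this
    have hvi2 : (∑ q, d q * η q * η q) ≤ ∑ q, d q * η q * η' q := by
      have := vi_of_kkt ρ S hS d hd α hαnn hαsum η hηdef hkkt α' hα'0 hα'1.le
      calc (∑ q, d q * η q * η q)
          ≤ ∑ q, d q * η q * max (ρ q - ∑ m', α' m' * S m' q) 0 := this
        _ = ∑ q, d q * η q * η' q := by
            apply Finset.sum_congr rfl
            intro q _
            rw [hη'def]
    have hcross : (∑ q, d q * η' q * η q) = ∑ q, d q * η q * η' q :=
      Finset.sum_congr rfl fun q _ => by ring
    have hsum0 : (∑ q, d q * (η q - η' q)^2) ≤ 0 := by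
      have hexp : (∑ q, d q * (η q - η' q)^2)
          = (∑ q, d q * η q * η q) + (∑ q, d q * η' q * η' q)
            - 2 * ∑ q, d q * η q * η' q := by
        rw [Finset.mul_sum, ← Finset.sum_add_distrib, ← Finset.sum_sub_distrib]
        exact Finset.sum_congr rfl fun q _ => by ring
      rw [hexp]
      linarith [hvi1, hvi2, hcross]
    funext q
    have hnn : ∀ r ∈ (univ : Finset (Fin Q)), 0 ≤ d r * (η r - η' r)^2 :=
      fun r _ => mul_nonneg (hd r).le (sq_nonneg _)
    have hz := (Finset.sum_eq_zero_iff_of_nonneg hnn).mp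
      (le_antisymm hsum0 (Finset.sum_nonneg hnn)) q (mem_univ q)
    rcases mul_eq_zero.mp hz with h | h
    · exact absurd h (hd q).ne'
    · have := pow_eq_zero_iff two_ne_zero |>.mp h
      linarith
  -- CONVERGENCE
  have hconv : Tendsto (fun t : ℕ => fun q => X t q / (t : ℝ)) atTop (𝓝 η) := by
    -- constants
    set Amax : ℝ := ∑ q, Abar q with hAmaxdef
    have hAbar0 : ∀ q, 0 ≤ Abar q := fun q => le_trans (hA0 0 q) (hAbar 0 q)
    have hAmax0 : 0 ≤ Amax := Finset.sum_nonneg fun q _ => hAbar0 q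
    have hAle : ∀ t q, A t q ≤ Amax := fun t q =>
      le_trans (hAbar t q) (Finset.single_le_sum (fun i _ => hAbar0 i) (mem_univ q))
    have hρA : ∀ q, ρ q ≤ Abar q := by
      intro q
      apply le_of_tendsto (hρ q)
      filter_upwards [eventually_ge_atTop 1] with t ht
      have htpos : (0:ℝ) < t := by exact_mod_cast ht
      rw [div_le_iff₀ htpos]
      calc ∑ s ∈ range t, A s q ≤ ∑ s ∈ range t, Abar q :=
            Finset.sum_le_sum fun s _ => hAbar s q
        _ = Abar q * t := by rw [Finset.sum_const, Finset.card_range, nsmul_eq_mul]; ring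
    have hρle : ∀ q, ρ q ≤ Amax := fun q =>
      le_trans (hρA q) (Finset.single_le_sum (fun i _ => hAbar0 i) (mem_univ q))
    have hSαnn : ∀ q, 0 ≤ ∑ m, α m * S m q :=
      fun q => Finset.sum_nonneg fun m _ => mul_nonneg (hαnn m) (hS m q)
    have hηle : ∀ q, η q ≤ Amax := by
      intro q
      apply max_le _ hAmax0
      linarith [hρle q, hSαnn q]
    set Smax : ℝ := ∑ i, ∑ q, S i q with hSmaxdef
    have hSmax : ∀ i q, S i q ≤ Smax := by
      intro i q
      calc S i q ≤ ∑ q', S i q' := Finset.single_le_sum (fun r _ => hS i r) (mem_univ q)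
        _ ≤ Smax := Finset.single_le_sum
            (fun r _ => Finset.sum_nonneg fun q' _ => hS r q') (mem_univ i)
    have hSmax0 : 0 ≤ Smax :=
      Finset.sum_nonneg fun i _ => Finset.sum_nonneg fun q _ => hS i q
    -- workload bounds
    have hXnn : ∀ t q, 0 ≤ X t q := by
      intro t
      induction t with
      | zero => intro q; rw [hX0]
      | succ t ih =>
        intro q
        rw [hXrec]
        have h1 := min_le_right (S (σ t) q) (X t q)
        linarith [hA0 t q, ih q]
    have hXub : ∀ t q, X t q ≤ t * Amax := by
      intro t
      induction t with
      | zero => intro q; rw [hX0]; simp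
      | succ t ih =>
        intro q
        rw [hXrec]
        have h1 : 0 ≤ min (S (σ t) q) (X t q) := le_min (hS _ q) (hXnn t q)
        have h2 := hAle t q
        have h3 := ih q
        push_cast
        linarith
    set Y : ℕ → Fin Q → ℝ := fun t q => X t q - t * η q with hYdef2
    have hYabs : ∀ t q, |Y t q| ≤ Amax * t := by
      intro t q
      have ht0 : (0:ℝ) ≤ t := Nat.cast_nonneg t
      rw [abs_le]
      constructor
      · have := mul_le_mul_of_nonneg_left (hηle q) ht0
        simp only [hYdef2]
        nlinarith [hXnn t q]
      · simp only [hYdef2]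
        nlinarith [mul_nonneg ht0 (hηnn q), hXub t q]
    set K1 : ℝ := 2*Amax + Smax with hK1def
    have hK10 : 0 ≤ K1 := by simp only [hK1def]; linarith
    have hYd : ∀ t q, |Y (t+1) q - Y t q| ≤ K1 := by
      intro t q
      have hstep : Y (t+1) q - Y t q = A t q - min (S (σ t) q) (X t q) - η q := by
        simp only [hYdef2, hXrec t q]
        push_cast
        ring
      rw [hstep, abs_le]
      have h1 : 0 ≤ min (S (σ t) q) (X t q) := le_min (hS _ q) (hXnn t q)
      have h2 : min (S (σ t) q) (X t q) ≤ Smax := le_trans (min_le_left _ _) (hSmax _ q)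
      constructor
      · simp only [hK1def]; linarith [hA0 t q, hηle q]
      · simp only [hK1def]; linarith [hAle t q, hηnn q]
    set dsum : ℝ := ∑ q, d q with hdsumdef
    set C : ℝ := dsum * K1^2 + 2*dsum*Smax^2 with hCdef
    set V : ℕ → ℝ := fun t => ∑ q, d q * (Y t q)^2 with hVdef
    set Nt : ℕ → ℝ := fun t => ∑ q, d q * Y t q * (A t q - ρ q) with hNtdef
    -- DRIFT
    have hdrift : ∀ t, V (t+1) ≤ V t + 2 * Nt t + C := by
      intro t
      set Dep : Fin Q → ℝ := fun q => min (S (σ t) q) (X t q) with hDepdef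
      set Δ : Fin Q → ℝ := fun q => A t q - Dep q - η q with hΔdef
      have hYstep : ∀ q, Y (t+1) q = Y t q + Δ q := by
        intro q
        simp only [hYdef2, hΔdef, hDepdef, hXrec t q]
        push_cast
        ring
      have hDepnn : ∀ q, 0 ≤ Dep q := fun q => le_min (hS _ q) (hXnn t q)
      have hDeple : ∀ q, Dep q ≤ Smax := fun q => le_trans (min_le_left _ _) (hSmax _ q)
      have hΔabs : ∀ q, |Δ q| ≤ K1 := by
        intro q
        rw [abs_le]
        constructor
        · simp only [hΔdef, hK1def]; linarith [hA0 t q, hDeple q, hηle q]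
        · simp only [hΔdef, hK1def]; linarith [hAle t q, hDepnn q, hηnn q]
      have hVexp : V (t+1) = V t + 2 * (∑ q, d q * Y t q * Δ q) + ∑ q, d q * (Δ q)^2 := by
        simp only [hVdef]
        rw [Finset.mul_sum, ← Finset.sum_add_distrib, ← Finset.sum_add_distrib]
        exact Finset.sum_congr rfl fun q _ => by rw [hYstep q]; ring
      have hquad : ∑ q, d q * (Δ q)^2 ≤ dsum * K1^2 := by
        rw [hdsumdef, Finset.sum_mul]
        apply Finset.sum_le_sum
        intro q _
        have h1 : (Δ q)^2 ≤ K1^2 := by nlinarith [hΔabs q, abs_nonneg (Δ q), sq_abs (Δ q)]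
        exact mul_le_mul_of_nonneg_left h1 (hd q).le
      have hcross : ∑ q, d q * Y t q * Δ q ≤ Nt t + dsum * Smax^2 := by
        have hsplit : ∑ q, d q * Y t q * Δ q
            = Nt t + (∑ q, d q * Y t q * (ρ q - η q - (∑ m, α m * S m q)))
              + (∑ q, d q * Y t q * ((∑ m, α m * S m q) - Dep q)) := by
          simp only [hNtdef]
          rw [← Finset.sum_add_distrib, ← Finset.sum_add_distrib]
          exact Finset.sum_congr rfl fun q _ => by simp only [hΔdef]; ring
        have hR1 : (∑ q, d q * Y t q * (ρ q - η q - (∑ m, α m * S m q))) ≤ 0 := by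
          apply Finset.sum_nonpos
          intro q _
          rcases lt_or_eq_of_le (hηnn q) with h | h
          · have ha : η q = ρ q - ∑ m, α m * S m q := by
              rcases le_or_gt (ρ q - ∑ m, α m * S m q) 0 with hle2 | hlt2
              · exfalso
                have : η q = 0 := max_eq_right hle2
                linarith
              · exact max_eq_left hlt2.le
            have hz : ρ q - η q - ∑ m, α m * S m q = 0 := by rw [ha]; ring
            rw [hz, mul_zero]
          · have ha : ρ q - ∑ m, α m * S m q ≤ 0 := by
              by_contra hc
              push_neg at hc
              have : η q = ρ q - ∑ m, α m * S m q := max_eq_left hc.le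
              linarith
            have hY0 : Y t q = X t q := by simp [hYdef2, ← h]
            have hrw : d q * Y t q * (ρ q - η q - ∑ m, α m * S m q)
                = d q * X t q * (ρ q - ∑ m, α m * S m q) := by
              rw [hY0, ← h]; ring
            rw [hrw]
            exact mul_nonpos_of_nonneg_of_nonpos
              (mul_nonneg (hd q).le (hXnn t q)) ha
        have hR2 : (∑ q, d q * Y t q * ((∑ m, α m * S m q) - Dep q)) ≤ dsum * Smax^2 := by
          have hYX : ∑ q, d q * Y t q * ((∑ m, α m * S m q) - Dep q)
              = (∑ q, d q * X t q * ((∑ m, α m * S m q) - Dep q))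
                - (t:ℝ) * ∑ q, d q * η q * ((∑ m, α m * S m q) - Dep q) := by
            rw [Finset.mul_sum, ← Finset.sum_sub_distrib]
            exact Finset.sum_congr rfl fun q _ => by simp only [hYdef2]; ring
          have hXa : ∑ q, d q * X t q * (∑ m, α m * S m q)
              ≤ ∑ q, S (σ t) q * (d q * X t q) := by
            calc ∑ q, d q * X t q * (∑ m, α m * S m q)
                = ∑ q, ∑ m, α m * (S m q * (d q * X t q)) := by
                  refine Finset.sum_congr rfl fun q _ => ?_
                  rw [Finset.mul_sum]
                  exact Finset.sum_congr rfl fun m _ => by ring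
              _ = ∑ m, ∑ q, α m * (S m q * (d q * X t q)) := Finset.sum_comm
              _ = ∑ m, α m * (∑ q, S m q * (d q * X t q)) := by
                  exact Finset.sum_congr rfl fun m _ => by rw [Finset.mul_sum]
              _ ≤ ∑ m, α m * (∑ q, S (σ t) q * (d q * X t q)) :=
                  Finset.sum_le_sum fun m _ =>
                    mul_le_mul_of_nonneg_left (hMW t m) (hαnn m)
              _ = ∑ q, S (σ t) q * (d q * X t q) := by
                  rw [← Finset.sum_mul, hαsum, one_mul]
          have hXb : ∑ q, S (σ t) q * (d q * X t q) - dsum * Smax^2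
              ≤ ∑ q, d q * X t q * Dep q := by
            rw [hdsumdef, Finset.sum_mul, ← Finset.sum_sub_distrib]
            apply Finset.sum_le_sum
            intro q _
            simp only [hDepdef]
            rcases le_total (S (σ t) q) (X t q) with h | h
            · rw [min_eq_left h]
              nlinarith [mul_nonneg (hd q).le (sq_nonneg Smax)]
            · rw [min_eq_right h]
              have key : X t q * (S (σ t) q - X t q) ≤ Smax * Smax := by
                nlinarith [hXnn t q, hSmax (σ t) q, hS (σ t) q]
              have key2 := mul_le_mul_of_nonneg_left key (hd q).le
              nlinarith [key2]
          have hXpart : ∑ q, d q * X t q * ((∑ m, α m * S m q) - Dep q)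
              ≤ dsum * Smax^2 := by
            have hexp : ∑ q, d q * X t q * ((∑ m, α m * S m q) - Dep q)
                = (∑ q, d q * X t q * (∑ m, α m * S m q))
                  - ∑ q, d q * X t q * Dep q := by
              rw [← Finset.sum_sub_distrib]
              exact Finset.sum_congr rfl fun q _ => by ring
            rw [hexp]
            linarith
          have hηpart : 0 ≤ ∑ q, d q * η q * ((∑ m, α m * S m q) - Dep q) := by
            obtain ⟨m0, hm0⟩ : ∃ m0, 0 < α m0 := by
              by_contra hcon
              push_neg at hcon
              have : ∑ m, α m = 0 :=
                Finset.sum_eq_zero fun m _ => le_antisymm (hcon m) (hαnn m)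
              rw [hαsum] at this
              norm_num at this
            have hw := hkkt m0 hm0
            have h1 : ∑ q, d q * η q * (∑ m, α m * S m q)
                = ∑ m, α m * (∑ q, d q * S m q * η q) := by
              calc ∑ q, d q * η q * (∑ m, α m * S m q)
                  = ∑ q, ∑ m, α m * (d q * S m q * η q) := by
                    refine Finset.sum_congr rfl fun q _ => ?_
                    rw [Finset.mul_sum]
                    exact Finset.sum_congr rfl fun m _ => by ring
                _ = ∑ m, ∑ q, α m * (d q * S m q * η q) := Finset.sum_comm
                _ = ∑ m, α m * (∑ q, d q * S m q * η q) := by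
                    exact Finset.sum_congr rfl fun m _ => by rw [Finset.mul_sum]
            have h2 : ∑ m, α m * (∑ q, d q * S m q * η q)
                = ∑ q, d q * S m0 q * η q := by
              have hterm : ∀ m, α m * (∑ q, d q * S m q * η q)
                  = α m * (∑ q, d q * S m0 q * η q) := by
                intro m
                rcases eq_or_lt_of_le (hαnn m) with hm | hm
                · rw [← hm]; ring
                · congr 1
                  exact le_antisymm (hw m) (hkkt m hm m0)
              rw [Finset.sum_congr rfl fun m _ => hterm m, ← Finset.sum_mul, hαsum, one_mul]
            have h3 : ∑ q, d q * η q * Dep q ≤ ∑ q, d q * S (σ t) q * η q := by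
              apply Finset.sum_le_sum
              intro q _
              have := mul_le_mul_of_nonneg_left (min_le_left (S (σ t) q) (X t q))
                (mul_nonneg (hd q).le (hηnn q))
              simp only [hDepdef]
              nlinarith [this]
            have h4 := hw (σ t)
            have hexp : ∑ q, d q * η q * ((∑ m, α m * S m q) - Dep q)
                = (∑ q, d q * η q * (∑ m, α m * S m q)) - ∑ q, d q * η q * Dep q := by
              rw [← Finset.sum_sub_distrib]
              exact Finset.sum_congr rfl fun q _ => by ring
            rw [hexp, h1, h2]
            linarith
          have ht0 : (0:ℝ) ≤ t := Nat.cast_nonneg t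
          rw [hYX]
          nlinarith [mul_nonneg ht0 hηpart]
        rw [hsplit]
        linarith
      rw [hVexp]
      simp only [hCdef]
      linarith
    -- TELESCOPE
    have hV0 : V 0 = 0 := by
      simp only [hVdef]
      apply Finset.sum_eq_zero
      intro q _
      simp [hYdef2, hX0 q]
    have htel : ∀ t, V t ≤ 2 * (∑ s ∈ range t, Nt s) + C * t := by
      intro t
      induction t with
      | zero => simp [hV0]
      | succ t ih =>
        have := hdrift t
        rw [Finset.sum_range_succ]
        push_cast
        linarith
    -- NOISE LIMIT
    have hNlim : Tendsto (fun t : ℕ => (∑ s ∈ range t, Nt s)/(t:ℝ)^2) atTop (𝓝 0) := by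
      have hswap : ∀ t, ∑ s ∈ range t, Nt s
          = ∑ q, d q * (∑ s ∈ range t, Y s q * (A s q - ρ q)) := by
        intro t
        simp only [hNtdef]
        rw [Finset.sum_comm]
        exact Finset.sum_congr rfl fun q _ => by
          rw [Finset.mul_sum]
          exact Finset.sum_congr rfl fun s _ => by ring
      have hfeq : (fun t : ℕ => (∑ s ∈ range t, Nt s)/(t:ℝ)^2)
          = fun t : ℕ => ∑ q, d q * ((∑ s ∈ range t, Y s q * (A s q - ρ q))/(t:ℝ)^2) := by
        funext t
        rw [hswap t, Finset.sum_div]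
        exact Finset.sum_congr rfl fun q _ => by rw [mul_div_assoc]
      rw [hfeq]
      have : (0:ℝ) = ∑ q : Fin Q, d q * 0 := by simp
      rw [this]
      apply tendsto_finset_sum
      intro q _
      apply Tendsto.const_mul
      apply noise_lim _ _ (Amax + K1) (by linarith)
      · intro s
        calc |Y s q| ≤ Amax * s := hYabs s q
          _ ≤ (Amax + K1) * s := by nlinarith [Nat.cast_nonneg (α := ℝ) s]
      · intro s
        calc |Y (s+1) q - Y s q| ≤ K1 := hYd s q
          _ ≤ Amax + K1 := by linarith
      · have h1 : Tendsto (fun t : ℕ => (∑ s ∈ range t, A s q)/(t:ℝ) - ρ q)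
            atTop (𝓝 0) := by
          have := (hρ q).sub_const (ρ q)
          simpa using this
        apply h1.congr'
        filter_upwards [eventually_ge_atTop 1] with t ht
        have htne : (t:ℝ) ≠ 0 := by positivity
        rw [Finset.sum_sub_distrib, Finset.sum_const, Finset.card_range]
        field_simp
        rw [nsmul_eq_mul]
    -- V LIMIT
    have hVlim : Tendsto (fun t : ℕ => V t/(t:ℝ)^2) atTop (𝓝 0) := by
      have hg : Tendsto (fun t : ℕ => 2 * ((∑ s ∈ range t, Nt s)/(t:ℝ)^2) + C/(t:ℝ))
          atTop (𝓝 0) := by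
        have h1 := hNlim.const_mul 2
        have h2 := tendsto_const_div_atTop_nhds_zero_nat C
        have := h1.add h2
        simpa using this
      apply squeeze_zero_norm' _ hg
      filter_upwards [eventually_ge_atTop 1] with t ht
      have htpos : (0:ℝ) < t := by exact_mod_cast ht
      have ht2 : (0:ℝ) < (t:ℝ)^2 := by positivity
      have hVnn : 0 ≤ V t :=
        Finset.sum_nonneg fun q _ => mul_nonneg (hd q).le (sq_nonneg _)
      rw [Real.norm_eq_abs, abs_of_nonneg (div_nonneg hVnn ht2.le), div_le_iff₀ ht2]
      have hgt : (2 * ((∑ s ∈ range t, Nt s)/(t:ℝ)^2) + C/(t:ℝ)) * (t:ℝ)^2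
          = 2 * (∑ s ∈ range t, Nt s) + C * t := by
        field_simp
      rw [hgt]
      exact htel t
    -- PER COORDINATE
    rw [tendsto_pi_nhds]
    intro q
    have hsq : Tendsto (fun t : ℕ => (X t q/(t:ℝ) - η q)^2) atTop (𝓝 0) := by
      have hg := hVlim.const_mul (d q)⁻¹
      rw [mul_zero] at hg
      apply squeeze_zero_norm' _ hg
      filter_upwards [eventually_ge_atTop 1] with t ht
      have htpos : (0:ℝ) < t := by exact_mod_cast ht
      have hXYq : X t q/(t:ℝ) - η q = Y t q / t := by
        simp only [hYdef2]
        field_simp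
      rw [Real.norm_eq_abs, abs_of_nonneg (sq_nonneg _), hXYq, div_pow]
      have h1 : d q * (Y t q)^2 ≤ V t :=
        Finset.single_le_sum
          (fun r _ => mul_nonneg (hd r).le (sq_nonneg _)) (mem_univ q)
      have h2 : (Y t q)^2 ≤ (d q)⁻¹ * V t := by
        rw [inv_mul_eq_div, le_div_iff₀ (hd q)]
        linarith [h1]
      calc (Y t q)^2 / (t:ℝ)^2 ≤ ((d q)⁻¹ * V t) / (t:ℝ)^2 := by gcongr
        _ = (d q)⁻¹ * (V t / (t:ℝ)^2) := by rw [mul_div_assoc]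
    have habs : Tendsto (fun t : ℕ => |X t q/(t:ℝ) - η q|) atTop (𝓝 0) := by
      have h1 := (Real.continuous_sqrt.tendsto 0).comp hsq
      rw [Real.sqrt_zero] at h1
      refine h1.congr fun t => ?_
      simp [Real.sqrt_sq_eq_abs]
    have hsub : Tendsto (fun t : ℕ => X t q/(t:ℝ) - η q) atTop (𝓝 0) :=
      (tendsto_zero_iff_abs_tendsto_zero _).mpr habs
    have := hsub.add_const (η q)
    simpa using this
  exact ⟨η, hconv, hηne, hmem, hstrict, hkkt', huniq⟩
end

section
/- Let A : ℕ → ℝ^Q be a bounded nonnegative sequence whose Cesàro averages converge: lim_{T→∞} (1/T)·Σ_{t=0}^{T−1} A(t) = ρ. If {t_n} and {t'_n} are increasing unbounded sequences of naturals with t'_n < t_n for all large n and lim_{n→∞} (t_n − t'_n)/t_n = χ ∈ (0,1], then lim_{n→∞} (1/(t_n − t'_n))·Σ_{t=t'_n}^{t_n−1} A(t) = ρ. -/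
open Finset Filter Topology

/-- Cesàro averages over sub-intervals that grow linearly in time converge
to the same long-run average ρ. -/
theorem stmt3 {Q : ℕ}
    (A : ℕ → Fin Q → ℝ) (Abar : Fin Q → ℝ)
    (hA0 : ∀ t q, 0 ≤ A t q) (hAbar : ∀ t q, A t q ≤ Abar q)
    (ρ : Fin Q → ℝ)
    (hρ : Tendsto (fun T : ℕ => fun q => (∑ t ∈ Finset.range T, A t q) / (T : ℝ))
      atTop (𝓝 ρ))
    (t t' : ℕ → ℕ) (ht : StrictMono t) (ht' : StrictMono t')
    (hlt : ∀ᶠ n in atTop, t' n < t n)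
    (χ : ℝ) (hχ : χ ∈ Set.Ioc (0 : ℝ) 1)
    (hratio : Tendsto (fun n => ((t n : ℝ) - (t' n : ℝ)) / (t n : ℝ)) atTop (𝓝 χ)) :
    Tendsto
      (fun n => fun q => (∑ τ ∈ Finset.Ico (t' n) (t n), A τ q) / ((t n : ℝ) - (t' n : ℝ)))
      atTop (𝓝 ρ) := by
  rw [tendsto_pi_nhds]
  intro q
  set f : ℕ → ℝ := fun T => (∑ τ ∈ Finset.range T, A τ q) / (T : ℝ) with hf
  have hρq : ∀ s : ℕ → ℕ, Tendsto s atTop atTop →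
      Tendsto (fun n => f (s n)) atTop (𝓝 (ρ q)) := by
    intro s hs
    exact (tendsto_pi_nhds.mp hρ q).comp hs
  have h1 : Tendsto (fun n => f (t n)) atTop (𝓝 (ρ q)) := hρq t ht.tendsto_atTop
  have h2 : Tendsto (fun n => f (t' n)) atTop (𝓝 (ρ q)) := hρq t' ht'.tendsto_atTop
  have hinv : Tendsto (fun n => (t n : ℝ) / ((t n : ℝ) - (t' n : ℝ))) atTop (𝓝 χ⁻¹) := by
    have := hratio.inv₀ (ne_of_gt hχ.1)
    simpa [inv_div] using this
  have hmain : Tendsto (fun n => f (t' n) + (f (t n) - f (t' n)) *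
      ((t n : ℝ) / ((t n : ℝ) - (t' n : ℝ)))) atTop (𝓝 (ρ q)) := by
    have := h2.add (((h1.sub h2).mul hinv))
    simpa using this
  refine hmain.congr' ?_
  have htpos : ∀ᶠ n in atTop, 1 ≤ t n := by
    filter_upwards [ht.tendsto_atTop.eventually_ge_atTop 1] with n hn using hn
  filter_upwards [hlt, htpos] with n hlt hpos
  have hle : t' n ≤ t n := hlt.le
  have htne : (t n : ℝ) ≠ 0 := by positivity
  have hdne : (t n : ℝ) - (t' n : ℝ) ≠ 0 := by
    have : (t' n : ℝ) < (t n : ℝ) := by exact_mod_cast hlt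
    linarith
  have hSt : (∑ τ ∈ Finset.range (t n), A τ q) = (t n : ℝ) * f (t n) := by
    rw [hf]; field_simp
  have hSt' : (∑ τ ∈ Finset.range (t' n), A τ q) = (t' n : ℝ) * f (t' n) := by
    rcases Nat.eq_zero_or_pos (t' n) with h0 | h0
    · simp [h0]
    · have : (t' n : ℝ) ≠ 0 := by positivity
      rw [hf]; field_simp
  have hsum : (∑ τ ∈ Finset.Ico (t' n) (t n), A τ q) =
      (∑ τ ∈ Finset.range (t n), A τ q) - (∑ τ ∈ Finset.range (t' n), A τ q) := by
    rw [Finset.sum_Ico_eq_sub _ hle]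
  rw [hsum, hSt, hSt']
  field_simp
  ring
end

section
/- Let the system be operated under an arbitrary scheduling policy and let D be a diagonal Q×Q matrix with D_{qq} > 0 for every q. Suppose {t_c} is an increasing unbounded sequence of naturals with lim_{c→∞} X(t_c)/t_c = η ∈ ℝ_{≥0}^Q and ⟨η, D·η⟩ = limsup_{t→∞} ⟨X(t)/t, D·(X(t)/t)⟩. Then for every ε ∈ (0,1): −[⟨ρ, D·η⟩ − max_{S∈𝒮} ⟨S, D·η⟩]·ε/(1−ε) + ⟨η, D·η⟩·1/(1−ε) ≥ ⟨η, D·η⟩. -/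
open Finset Filter Topology

/-- for every ε ∈ (0,1),
−[⟨ρ,Dη⟩ − max_S ⟨S,Dη⟩]·ε/(1−ε) + ⟨η,Dη⟩/(1−ε) ≥ ⟨η,Dη⟩. -/
theorem stmt6 {Q N : ℕ} (hQ : 0 < Q) (hN : 0 < N)
    (A : ℕ → Fin Q → ℝ) (Abar : Fin Q → ℝ)
    (hA0 : ∀ t q, 0 ≤ A t q) (hAbar : ∀ t q, A t q ≤ Abar q)
    (ρ : Fin Q → ℝ) (hρpos : ∀ q, 0 < ρ q)
    (hρ : ∀ q, Tendsto (fun t : ℕ => (∑ s ∈ Finset.range t, A s q) / (t : ℝ))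
      atTop (𝓝 (ρ q)))
    (S : Fin N → Fin Q → ℝ) (hS : ∀ i q, 0 ≤ S i q)
    (σ : ℕ → Fin N)
    (X : ℕ → Fin Q → ℝ) (hX0 : ∀ q, X 0 q = 0)
    (hXrec : ∀ t q, X (t + 1) q = X t q + A t q - min (S (σ t) q) (X t q))
    (d : Fin Q → ℝ) (hd : ∀ q, 0 < d q)
    (η : Fin Q → ℝ) (hη : ∀ q, 0 ≤ η q)
    (tc : ℕ → ℕ) (htc : StrictMono tc)
    (hηlim : Tendsto (fun c => fun q => X (tc c) q / (tc c : ℝ)) atTop (𝓝 η))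
    (hηlimsup : ∑ q, η q * (d q * η q) =
      limsup (fun t : ℕ => ∑ q, (X t q / (t : ℝ)) * (d q * (X t q / (t : ℝ)))) atTop) :
    ∀ ε : ℝ, ε ∈ Set.Ioo (0 : ℝ) 1 →
      ∑ q, η q * (d q * η q) ≤
        -((∑ q, ρ q * (d q * η q)) - (⨆ j, ∑ q, S j q * (d q * η q))) * (ε / (1 - ε))
          + (∑ q, η q * (d q * η q)) * (1 / (1 - ε)) := by
  have : Nonempty (Fin N) := ⟨⟨0, hN⟩⟩
  set w : Fin Q → ℝ := fun q => d q * η q with hw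
  have hw0 : ∀ q, 0 ≤ w q := fun q => mul_nonneg (hd q).le (hη q)
  set M : ℝ := ⨆ j, ∑ q, S j q * w q with hM
  set V : ℝ := ∑ q, η q * w q with hV
  set P : ℝ := ∑ q, ρ q * w q with hP
  have hbdd : BddAbove (Set.range fun j => ∑ q, S j q * w q) :=
    Set.Finite.bddAbove (Set.finite_range _)
  have hMle : ∀ j, ∑ q, S j q * w q ≤ M := fun j => le_ciSup hbdd j
  -- lower bound on X
  have hXlb : ∀ t q, (∑ s ∈ Finset.range t, A s q) - (∑ s ∈ Finset.range t, S (σ s) q)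
      ≤ X t q := by
    intro t
    induction t with
    | zero => intro q; simp [hX0 q]
    | succ t ih =>
      intro q
      have h1 := ih q
      have h2 : min (S (σ t) q) (X t q) ≤ S (σ t) q := min_le_left _ _
      rw [hXrec t q, Finset.sum_range_succ, Finset.sum_range_succ]
      linarith
  -- the key inequality P ≤ M + V
  have hkey : P ≤ M + V := by
    have hev : ∀ᶠ c in atTop,
        (∑ q, ((∑ s ∈ Finset.range (tc c), A s q) / (tc c : ℝ)) * w q) - M
          ≤ ∑ q, (X (tc c) q / (tc c : ℝ)) * w q := by
      filter_upwards [eventually_ge_atTop 1] with c hc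
      have htcc : 1 ≤ tc c := le_trans hc htc.le_apply
      set t := tc c with ht'
      have ht : (0 : ℝ) < (t : ℝ) := by exact_mod_cast htcc
      have hsum : ∑ q, (∑ s ∈ Finset.range t, A s q) * w q
          ≤ (∑ q, X t q * w q) + (t : ℝ) * M := by
        have h1 : ∑ q, (∑ s ∈ Finset.range t, A s q) * w q
            ≤ ∑ q, (X t q + ∑ s ∈ Finset.range t, S (σ s) q) * w q := by
          apply Finset.sum_le_sum
          intro q _
          have := hXlb t q
          exact mul_le_mul_of_nonneg_right (by linarith) (hw0 q)
        have h2 : ∑ q, (X t q + ∑ s ∈ Finset.range t, S (σ s) q) * w q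
            = (∑ q, X t q * w q) + ∑ s ∈ Finset.range t, ∑ q, S (σ s) q * w q := by
          simp_rw [add_mul, Finset.sum_add_distrib, Finset.sum_mul]
          rw [Finset.sum_comm]
        have h3 : ∑ s ∈ Finset.range t, ∑ q, S (σ s) q * w q ≤ (t : ℝ) * M := by
          calc ∑ s ∈ Finset.range t, ∑ q, S (σ s) q * w q
              ≤ ∑ s ∈ Finset.range t, M := Finset.sum_le_sum fun s _ => hMle (σ s)
            _ = (t : ℝ) * M := by simp [mul_comm]
        linarith
      have e1 : ∑ q, ((∑ s ∈ Finset.range t, A s q) / (t : ℝ)) * w q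
          = (∑ q, (∑ s ∈ Finset.range t, A s q) * w q) / (t : ℝ) := by
        rw [Finset.sum_div]
        exact Finset.sum_congr rfl fun q _ => by ring
      have e2 : ∑ q, (X t q / (t : ℝ)) * w q = (∑ q, X t q * w q) / (t : ℝ) := by
        rw [Finset.sum_div]
        exact Finset.sum_congr rfl fun q _ => by ring
      rw [e1, e2, sub_le_iff_le_add, div_le_iff₀ ht]
      have : ((∑ q, X t q * w q) / (t : ℝ) + M) * (t : ℝ)
          = (∑ q, X t q * w q) + (t : ℝ) * M := by field_simp
      rw [this]
      exact hsum
    have hf : Tendsto (fun c => (∑ q, ((∑ s ∈ Finset.range (tc c), A s q) / (tc c : ℝ)) * w q) - M)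
        atTop (𝓝 (P - M)) := by
      apply Tendsto.sub_const
      exact tendsto_finset_sum _ fun q _ =>
        ((hρ q).comp htc.tendsto_atTop).mul_const (w q)
    have hg : Tendsto (fun c => ∑ q, (X (tc c) q / (tc c : ℝ)) * w q) atTop (𝓝 V) :=
      tendsto_finset_sum _ fun q _ => (tendsto_pi_nhds.1 hηlim q).mul_const (w q)
    have := le_of_tendsto_of_tendsto hf hg hev
    linarith
  intro ε hε
  obtain ⟨hε0, hε1⟩ := hε
  have h1 : 0 < 1 - ε := by linarith
  have hr : -(P - M) * (ε / (1 - ε)) + V * (1 / (1 - ε)) = ((M - P) * ε + V) / (1 - ε) := by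
    field_simp
    ring
  rw [hr, le_div_iff₀ h1]
  nlinarith [mul_nonneg (by linarith : (0:ℝ) ≤ M - P + V) hε0.le]
end

section
/- Suppose the system is operated under the MaxWeight policy with weight matrix D and ρ ∉ 𝒫. Let {t_c} be an increasing unbounded sequence with lim_{c→∞} X(t_c)/t_c = η, where ⟨η, D·η⟩ = limsup_{t→∞} ⟨X(t)/t, D·(X(t)/t)⟩. Then there is no increasing unbounded sequence {t_a} with lim_{a→∞} X(t_a)/t_a = ψ for some ψ ≠ η; consequently lim_{t→∞} X(t)/t = η. -/
open Finset Filter Topology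

private lemma tele (V F : ℕ → ℝ) (a : ℕ) :
    ∀ b, a ≤ b → ((∀ u, a ≤ u → u < b → V (u + 1) ≤ V u + F u) →
      V b ≤ V a + ∑ u ∈ Finset.Ico a b, F u) := by
  refine Nat.le_induction ?_ ?_
  · intro _; simp
  · intro n hn ih h
    rw [Finset.sum_Ico_succ_top hn]
    have h1 := ih (fun u hu hu' => h u hu (hu'.trans (Nat.lt_succ_self n)))
    have h2 := h n hn (Nat.lt_succ_self n)
    linarith

private lemma sublimit_le_limsup (f : ℕ → ℝ) (Ub : ℝ) (hUb : ∀ t, f t ≤ Ub)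
    (u : ℕ → ℕ) (hu : Tendsto u atTop atTop) (l : ℝ)
    (hl : Tendsto (fun a => f (u a)) atTop (𝓝 l)) :
    l ≤ limsup f atTop := by
  have hb : IsBoundedUnder (· ≤ ·) atTop f :=
    ⟨Ub, eventually_map.2 (Eventually.of_forall hUb)⟩
  refine le_of_forall_pos_le_add fun ε hε => ?_
  have h1 : ∀ᶠ a in atTop, l - ε ≤ f (u a) :=
    hl.eventually (eventually_ge_nhds (by linarith))
  have h2 : ∃ᶠ t in atTop, l - ε ≤ f t := hu.frequently h1.frequently
  have := le_limsup_of_frequently_le h2 hb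
  linarith

set_option maxHeartbeats 2000000 in
/-- under MaxWeight in overload, there is no subsequential limit ψ ≠ η;
consequently X(t)/t → η. -/
theorem stmt8 {Q N : ℕ} (hQ : 0 < Q) (hN : 0 < N)
    (A : ℕ → Fin Q → ℝ) (Abar : Fin Q → ℝ)
    (hA0 : ∀ t q, 0 ≤ A t q) (hAbar : ∀ t q, A t q ≤ Abar q)
    (ρ : Fin Q → ℝ) (hρpos : ∀ q, 0 < ρ q)
    (hρ : ∀ q, Tendsto (fun t : ℕ => (∑ s ∈ Finset.range t, A s q) / (t : ℝ))
      atTop (𝓝 (ρ q)))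
    (S : Fin N → Fin Q → ℝ) (hS : ∀ i q, 0 ≤ S i q)
    (σ : ℕ → Fin N)
    (d : Fin Q → ℝ) (hd : ∀ q, 0 < d q)
    (X : ℕ → Fin Q → ℝ) (hX0 : ∀ q, X 0 q = 0)
    (hXrec : ∀ t q, X (t + 1) q = X t q + A t q - min (S (σ t) q) (X t q))
    (hMW : ∀ t j, ∑ q, S j q * (d q * X t q) ≤ ∑ q, S (σ t) q * (d q * X t q))
    (hover : ρ ∉ stabRegion S)
    (η : Fin Q → ℝ)
    (tc : ℕ → ℕ) (htc : StrictMono tc)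
    (hηlim : Tendsto (fun c => fun q => X (tc c) q / (tc c : ℝ)) atTop (𝓝 η))
    (hηlimsup : ∑ q, η q * (d q * η q) =
      limsup (fun t : ℕ => ∑ q, (X t q / (t : ℝ)) * (d q * (X t q / (t : ℝ)))) atTop) :
    (¬ ∃ (ta : ℕ → ℕ) (ψ : Fin Q → ℝ), StrictMono ta ∧
      Tendsto (fun a => fun q => X (ta a) q / (ta a : ℝ)) atTop (𝓝 ψ) ∧ ψ ≠ η) ∧
    Tendsto (fun t : ℕ => fun q => X t q / (t : ℝ)) atTop (𝓝 η) := by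
  have hNe : (Finset.univ : Finset (Fin N)).Nonempty := ⟨⟨0, hN⟩, Finset.mem_univ _⟩
  have hXnn : ∀ t q, 0 ≤ X t q := by
    intro t
    induction t with
    | zero => intro q; exact (hX0 q).ge
    | succ t ih =>
      intro q
      rw [hXrec t q]
      have h1 : min (S (σ t) q) (X t q) ≤ X t q := min_le_right _ _
      have := hA0 t q
      have := ih q
      linarith
  have hAbar0 : ∀ q, 0 ≤ Abar q := fun q => (hA0 0 q).trans (hAbar 0 q)
  have hXle : ∀ t q, X t q ≤ t * Abar q := by
    intro t
    induction t with
    | zero => intro q; simp [hX0 q]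
    | succ t ih =>
      intro q
      rw [hXrec t q]
      have h1 : 0 ≤ min (S (σ t) q) (X t q) := le_min (hS _ q) (hXnn t q)
      have h2 := hAbar t q
      have h3 := ih q
      push_cast
      linarith
  have hxnn : ∀ t q, 0 ≤ X t q / (t : ℝ) := fun t q =>
    div_nonneg (hXnn t q) (Nat.cast_nonneg t)
  have hxub : ∀ t q, X t q / (t : ℝ) ≤ Abar q := by
    intro t q
    rcases Nat.eq_zero_or_pos t with h | h
    · subst h; simpa using hAbar0 q
    · have ht : (0:ℝ) < t := by exact_mod_cast h
      rw [div_le_iff₀ ht]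
      have := hXle t q
      linarith
  set Sbar : Fin Q → ℝ := fun q => Finset.univ.sup' hNe (fun j => S j q) with hSbar
  have hSbarj : ∀ j q, S j q ≤ Sbar q := fun j q => by
    rw [hSbar]; exact Finset.le_sup' (fun j => S j q) (Finset.mem_univ j)
  have hSbar0 : ∀ q, 0 ≤ Sbar q := fun q => (hS ⟨0, hN⟩ q).trans (hSbarj _ q)
  have hXstep : ∀ t q, |X (t+1) q - X t q| ≤ Abar q + Sbar q := by
    intro t q
    rw [hXrec t q, abs_le]
    have h1 : 0 ≤ min (S (σ t) q) (X t q) := le_min (hS _ q) (hXnn t q)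
    have h2 : min (S (σ t) q) (X t q) ≤ Sbar q := (min_le_left _ _).trans (hSbarj _ q)
    have h3 := hAbar t q
    have h4 := hA0 t q
    constructor <;> linarith
  have hXdiff : ∀ q s k, |X (s + k) q - X s q| ≤ (k : ℝ) * (Abar q + Sbar q) := by
    intro q s k
    induction k with
    | zero => simp
    | succ k ih =>
      have h1 := hXstep (s + k) q
      have h2 : |X (s + k + 1) q - X s q| ≤ |X (s + k + 1) q - X (s+k) q| + |X (s+k) q - X s q| :=
        abs_sub_le _ _ _
      push_cast
      calc |X (s + (k+1)) q - X s q| ≤ _ + _ := by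
            rw [show s + (k+1) = s + k + 1 from rfl]; exact h2
        _ ≤ ((k:ℝ)+1) * (Abar q + Sbar q) := by linarith
  -- coordinates of the η-limit
  have hηcoord : ∀ q, Tendsto (fun c => X (tc c) q / (tc c : ℝ)) atTop (𝓝 (η q)) :=
    fun q => tendsto_pi_nhds.mp hηlim q
  have hη0 : ∀ q, 0 ≤ η q := fun q => ge_of_tendsto' (hηcoord q) (fun c => hxnn _ q)
  have htcT : Tendsto tc atTop atTop := htc.tendsto_atTop
  have hτ : Tendsto (fun c => ((tc c : ℕ) : ℝ)) atTop atTop :=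
    tendsto_natCast_atTop_atTop.comp htcT
  -- abbreviations
  set b : ℝ := ∑ q, η q * (d q * η q) with hbdef
  set f : ℕ → ℝ := fun t : ℕ => ∑ q, (X t q / (t : ℝ)) * (d q * (X t q / (t : ℝ))) with hfdef
  set V : ℕ → ℝ := fun t => ∑ q, d q * (X t q)^2 with hVdef
  set g : ℕ → ℝ := fun t => ∑ q, η q * (d q * A t q) with hgdef
  set W : ℕ → ℝ := fun t => ∑ s ∈ Finset.range t, g s with hWdef
  set r : ℝ := ∑ q, η q * (d q * ρ q) with hrdef
  set m : ℝ := Finset.univ.sup' hNe (fun j => ∑ q, η q * (d q * S j q)) with hmdef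
  have hm_le : ∀ j, (∑ q, η q * (d q * S j q)) ≤ m := fun j => by
    rw [hmdef]; exact Finset.le_sup' (fun j => ∑ q, η q * (d q * S j q)) (Finset.mem_univ j)
  obtain ⟨j₀, -, hj₀⟩ : ∃ j ∈ Finset.univ, m = ∑ q, η q * (d q * S j q) := by
    rw [hmdef]; exact Finset.exists_mem_eq_sup' hNe _
  have hm0 : 0 ≤ m := by
    rw [hj₀]
    exact Finset.sum_nonneg fun q _ =>
      mul_nonneg (hη0 q) (mul_nonneg (hd q).le (hS j₀ q))
  have hb0 : 0 ≤ b := by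
    rw [hbdef]
    exact Finset.sum_nonneg fun q _ => mul_nonneg (hη0 q) (mul_nonneg (hd q).le (hη0 q))
  have hr0 : 0 ≤ r := by
    rw [hrdef]
    exact Finset.sum_nonneg fun q _ => mul_nonneg (hη0 q) (mul_nonneg (hd q).le (hρpos q).le)
  -- bound on f
  have hfub : ∀ t, f t ≤ ∑ q, Abar q * (d q * Abar q) := by
    intro t
    refine Finset.sum_le_sum fun q _ => ?_
    have h1 := hxnn t q
    have h2 := hxub t q
    have h3 := (hd q).le
    have h4 : X t q / (t:ℝ) * (X t q / (t:ℝ)) ≤ Abar q * Abar q :=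
      mul_le_mul h2 h2 h1 (h1.trans h2)
    nlinarith [mul_le_mul_of_nonneg_left h4 h3]
  have hfbdd : IsBoundedUnder (· ≤ ·) atTop f :=
    ⟨∑ q, Abar q * (d q * Abar q), eventually_map.2 (Eventually.of_forall hfub)⟩
  -- f versus V
  have hfV : ∀ t : ℕ, 1 ≤ t → V t = f t * (t:ℝ)^2 := by
    intro t ht
    have ht' : ((t:ℝ)) ≠ 0 := by
      have : (0:ℝ) < t := by exact_mod_cast ht
      linarith
    rw [hfdef, hVdef, Finset.sum_mul]
    refine Finset.sum_congr rfl fun q _ => ?_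
    field_simp
  -- convergence of f along tc
  have hftc : Tendsto (fun c => f (tc c)) atTop (𝓝 b) := by
    rw [hfdef, hbdef]
    exact tendsto_finset_sum _ fun q _ =>
      (hηcoord q).mul ((hηcoord q).const_mul (d q))
  -- Cesaro for W
  have hW : Tendsto (fun t : ℕ => W t / (t : ℝ)) atTop (𝓝 r) := by
    have hWt : ∀ t : ℕ, W t = ∑ q, η q * (d q * ∑ s ∈ Finset.range t, A s q) := by
      intro t
      rw [hWdef]
      simp only [hgdef]
      rw [Finset.sum_comm]
      exact Finset.sum_congr rfl fun q _ => by simp [Finset.mul_sum]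
    have : ∀ t : ℕ, W t / (t:ℝ) = ∑ q, η q * (d q * ((∑ s ∈ Finset.range t, A s q) / (t:ℝ))) := by
      intro t
      rw [hWt t, Finset.sum_div]
      exact Finset.sum_congr rfl fun q _ => by ring
    simp only [this, hrdef]
    exact tendsto_finset_sum _ fun q _ => ((hρ q).const_mul (d q)).const_mul (η q)
  have hg0 : ∀ t, 0 ≤ g t := fun t => Finset.sum_nonneg fun q _ =>
    mul_nonneg (hη0 q) (mul_nonneg (hd q).le (hA0 t q))
  -- Lemma A : lower bound on the weight in direction η
  have hAlem : ∀ t : ℕ, W t - m * t ≤ ∑ q, η q * (d q * X t q) := by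
    intro t
    induction t with
    | zero => simp [hWdef, hX0]
    | succ t ih =>
      have hmin : ∑ q, η q * (d q * min (S (σ t) q) (X t q)) ≤ m := by
        refine le_trans ?_ (hm_le (σ t))
        refine Finset.sum_le_sum fun q _ => ?_
        exact mul_le_mul_of_nonneg_left
          (mul_le_mul_of_nonneg_left (min_le_left _ _) (hd q).le) (hη0 q)
      have hexp : ∑ q, η q * (d q * X (t+1) q) =
          (∑ q, η q * (d q * X t q)) + g t
            - ∑ q, η q * (d q * min (S (σ t) q) (X t q)) := by
        simp only [hXrec, hgdef]
        rw [← Finset.sum_add_distrib, ← Finset.sum_sub_distrib]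
        exact Finset.sum_congr rfl fun q _ => by ring
      have hWs : W (t+1) = W t + g t := by rw [hWdef]; exact Finset.sum_range_succ g t
      rw [hexp, hWs]
      push_cast
      linarith
  -- STEP 3 (hard step): b ≤ r - m
  have step3 : b ≤ r - m := by
    set C5 : ℝ := ∑ q, d q * (Abar q + S j₀ q) * (2*Abar q + Sbar q) with hC5def
    have hC5nn : 0 ≤ C5 := by
      rw [hC5def]
      refine Finset.sum_nonneg fun q _ => ?_
      have h1 := hAbar0 q; have h2 := hSbar0 q; have h3 := hS j₀ q
      exact mul_nonneg (mul_nonneg (hd q).le (by linarith)) (by linarith)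
    set K1 : ℝ := ∑ q, d q * (Abar q + Sbar q)^2 with hK1def
    set K2 : ℝ := ∑ q, d q * (Sbar q)^2 with hK2def
    have hK1nn : 0 ≤ K1 := by
      rw [hK1def]; exact Finset.sum_nonneg fun q _ => mul_nonneg (hd q).le (sq_nonneg _)
    have hK2nn : 0 ≤ K2 := by
      rw [hK2def]; exact Finset.sum_nonneg fun q _ => mul_nonneg (hd q).le (sq_nonneg _)
    set K : ℝ := K1 + 2*K2 with hKdef
    have hKnn : 0 ≤ K := by rw [hKdef]; linarith
    have hδbound : ∀ δ : ℝ, 0 < δ → δ < 1 → b ≤ r - m + δ * (b/2 + C5 + m) := by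
      intro δ hδ0 hδ1
      have h1δ : (0:ℝ) < 1 - δ := by linarith
      set t₀ : ℕ → ℕ := fun c => ⌈(1-δ) * ((tc c : ℕ) : ℝ)⌉₊ with ht₀def
      have ht₀le : ∀ c, t₀ c ≤ tc c := by
        intro c
        rw [ht₀def]
        refine Nat.ceil_le.mpr ?_
        nlinarith [hδ0, (Nat.cast_nonneg (tc c) : (0:ℝ) ≤ ((tc c:ℕ):ℝ))]
      have ht₀low : ∀ c, (1-δ) * ((tc c : ℕ):ℝ) ≤ ((t₀ c : ℕ):ℝ) := by
        intro c; rw [ht₀def]; exact Nat.le_ceil _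
      have ht₀up : ∀ c, ((t₀ c :ℕ):ℝ) < (1-δ) * ((tc c:ℕ):ℝ) + 1 := by
        intro c
        rw [ht₀def]
        exact Nat.ceil_lt_add_one (mul_nonneg h1δ.le (Nat.cast_nonneg _))
      have ht₀pos : ∀ c, 1 ≤ tc c → 1 ≤ t₀ c := by
        intro c hc
        rw [ht₀def]
        refine Nat.ceil_pos.mpr ?_
        have : (1:ℝ) ≤ (tc c:ℝ) := by exact_mod_cast hc
        nlinarith
      have hT0top : Tendsto t₀ atTop atTop := by
        have hcast : Tendsto (fun c => ((t₀ c:ℕ):ℝ)) atTop atTop := by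
          refine tendsto_atTop_mono' atTop (Eventually.of_forall ht₀low) ?_
          exact Tendsto.const_mul_atTop h1δ hτ
        exact tendsto_natCast_atTop_iff.mp hcast
      set θc : ℕ → ℝ := fun c => ((t₀ c:ℕ):ℝ) / ((tc c:ℕ):ℝ) with hθcdef
      have hθlim : Tendsto θc atTop (𝓝 (1-δ)) := by
        have hup : Tendsto (fun c => (1-δ) + ((tc c:ℕ):ℝ)⁻¹) atTop (𝓝 ((1-δ) + 0)) :=
          tendsto_const_nhds.add (tendsto_inv_atTop_zero.comp hτ)
        rw [add_zero] at hup
        refine tendsto_of_tendsto_of_tendsto_of_le_of_le' tendsto_const_nhds hup ?_ ?_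
        · filter_upwards [htcT.eventually_ge_atTop 1] with c hc
          have hτpos : (0:ℝ) < (tc c:ℝ) := by
            have : (1:ℝ) ≤ (tc c:ℝ) := by exact_mod_cast hc
            linarith
          simp only [hθcdef]
          rw [le_div_iff₀ hτpos]
          exact ht₀low c
        · filter_upwards [htcT.eventually_ge_atTop 1] with c hc
          have hτpos : (0:ℝ) < (tc c:ℝ) := by
            have : (1:ℝ) ≤ (tc c:ℝ) := by exact_mod_cast hc
            linarith
          simp only [hθcdef]
          rw [div_le_iff₀ hτpos]
          have h2 : ((1-δ) + ((tc c:ℕ):ℝ)⁻¹)*((tc c:ℕ):ℝ) = (1-δ)*((tc c:ℕ):ℝ) + 1 := by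
            field_simp
          rw [h2]
          linarith [ht₀up c]
      set E : ℕ → ℝ := fun c => ∑ q, d q * (Abar q + S j₀ q) *
        ((2*Abar q + Sbar q) * δ + |X (tc c) q / ((tc c:ℕ):ℝ) - η q|) with hEdef
      have hEnn : ∀ c, 0 ≤ E c := by
        intro c
        rw [hEdef]
        refine Finset.sum_nonneg fun q _ => ?_
        have h1 := hAbar0 q; have h2 := hSbar0 q; have h3 := hS j₀ q
        refine mul_nonneg (mul_nonneg (hd q).le (by linarith)) ?_
        exact add_nonneg (mul_nonneg (by linarith) hδ0.le) (abs_nonneg _)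
      have hElim : Tendsto E atTop (𝓝 (δ * C5)) := by
        have hterm : ∀ q : Fin Q, Tendsto (fun c => |X (tc c) q / ((tc c:ℕ):ℝ) - η q|)
            atTop (𝓝 0) := by
          intro q
          have h := ((hηcoord q).sub_const (η q)).abs
          simpa using h
        have hEq : δ * C5 = ∑ q : Fin Q, d q * (Abar q + S j₀ q) *
            ((2*Abar q + Sbar q) * δ + 0) := by
          rw [hC5def, Finset.mul_sum]
          exact Finset.sum_congr rfl fun q _ => by ring
        rw [hEdef, hEq]
        exact tendsto_finset_sum _ fun q _ =>
          (tendsto_const_nhds.add (hterm q)).const_mul _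
      have hεbound : ∀ ε : ℝ, 0 < ε → b ≤ (b+ε)*(1-δ)^2 + 2*r - 2*(r*(1-δ))
          + (1-(1-δ))*(2*(δ*C5)) + K*0 - 2*(m*((1-(1-δ))*(1-δ))) := by
        intro ε hε
        set G : ℕ → ℝ := fun c => (b+ε)*(θc c)^2 + 2*(W (tc c) / ((tc c:ℕ):ℝ))
          - 2*((W (t₀ c) / ((t₀ c:ℕ):ℝ))*(θc c)) + (1-θc c)*(2*(E c))
          + K*(((tc c:ℕ):ℝ))⁻¹ - 2*(m*((1-θc c)*(θc c))) with hGdef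
        have hGlim : Tendsto G atTop (𝓝 ((b+ε)*(1-δ)^2 + 2*r - 2*(r*(1-δ))
            + (1-(1-δ))*(2*(δ*C5)) + K*0 - 2*(m*((1-(1-δ))*(1-δ))))) := by
          rw [hGdef]
          refine Tendsto.sub (Tendsto.add (Tendsto.add (Tendsto.sub
            (Tendsto.add ?_ ?_) ?_) ?_) ?_) ?_
          · exact (hθlim.pow 2).const_mul (b+ε)
          · exact (hW.comp htcT).const_mul 2
          · exact ((hW.comp hT0top).mul hθlim).const_mul 2
          · exact (tendsto_const_nhds.sub hθlim).mul (hElim.const_mul 2)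
          · exact (tendsto_inv_atTop_zero.comp hτ).const_mul K
          · exact (((tendsto_const_nhds.sub hθlim).mul hθlim).const_mul m).const_mul 2
        have hb_ev : ∀ᶠ t in atTop, f t ≤ b + ε := by
          have hlt : limsup f atTop < b + ε := by rw [← hηlimsup]; linarith
          exact (eventually_lt_of_limsup_lt hlt hfbdd).mono fun t ht => ht.le
        refine le_of_tendsto_of_tendsto hftc hGlim ?_
        filter_upwards [htcT.eventually_ge_atTop 1, hT0top.eventually hb_ev] with c hc1 hc2
        have hτ1 : (1:ℝ) ≤ ((tc c:ℕ):ℝ) := by exact_mod_cast hc1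
        have hτpos : (0:ℝ) < ((tc c:ℕ):ℝ) := by linarith
        have hT01 : 1 ≤ t₀ c := ht₀pos c hc1
        have hT0pos : (0:ℝ) < ((t₀ c:ℕ):ℝ) := by
          have : (1:ℝ) ≤ ((t₀ c:ℕ):ℝ) := by exact_mod_cast hT01
          linarith
        have hcastle : ((t₀ c:ℕ):ℝ) ≤ ((tc c:ℕ):ℝ) := by exact_mod_cast ht₀le c
        set bnd : Fin Q → ℝ := fun q => (2*Abar q + Sbar q)*δ
          + |X (tc c) q / ((tc c:ℕ):ℝ) - η q| with hbnddef
        have hbnd0 : ∀ q, 0 ≤ bnd q := by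
          intro q
          rw [hbnddef]
          have h1 := hAbar0 q; have h2 := hSbar0 q
          exact add_nonneg (mul_nonneg (by linarith) hδ0.le) (abs_nonneg _)
        have hwin : ∀ u, t₀ c ≤ u → u ≤ tc c → ∀ q,
            |X u q / (u:ℝ) - η q| ≤ bnd q := by
          intro u hu1 hu2 q
          have hu1' : 1 ≤ u := le_trans hT01 hu1
          have hucast1 : (1:ℝ) ≤ (u:ℝ) := by exact_mod_cast hu1'
          have hupos : (0:ℝ) < (u:ℝ) := by linarith
          have hucast : ((u:ℕ):ℝ) ≤ ((tc c:ℕ):ℝ) := by exact_mod_cast hu2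
          have hT0u : ((t₀ c:ℕ):ℝ) ≤ (u:ℝ) := by exact_mod_cast hu1
          have hgap2 : ((tc c:ℕ):ℝ) - (u:ℝ) ≤ δ * ((tc c:ℕ):ℝ) := by
            have := ht₀low c
            linarith
          have hXd : |X (tc c) q - X u q| ≤ (((tc c:ℕ):ℝ) - (u:ℝ)) * (Abar q + Sbar q) := by
            obtain ⟨k, hk⟩ : ∃ k, tc c = u + k := ⟨tc c - u, (Nat.add_sub_cancel' hu2).symm⟩
            rw [hk]
            calc |X (u+k) q - X u q| ≤ (k:ℝ)*(Abar q + Sbar q) := hXdiff q u k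
              _ = (((u+k : ℕ):ℝ) - (u:ℝ))*(Abar q + Sbar q) := by push_cast; ring
          have ht1 : |X u q / (u:ℝ) - X u q / ((tc c:ℕ):ℝ)| ≤ Abar q * δ := by
            have heq : X u q / (u:ℝ) - X u q / ((tc c:ℕ):ℝ)
                = X u q * (((tc c:ℕ):ℝ) - (u:ℝ)) / ((u:ℝ) * ((tc c:ℕ):ℝ)) := by
              field_simp
            rw [heq, abs_of_nonneg (div_nonneg
              (mul_nonneg (hXnn u q) (by linarith)) (by positivity))]
            rw [div_le_iff₀ (by positivity)]
            have hXu := hXle u q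
            calc X u q * (((tc c:ℕ):ℝ) - (u:ℝ))
                ≤ ((u:ℝ) * Abar q) * (((tc c:ℕ):ℝ) - (u:ℝ)) :=
                  mul_le_mul_of_nonneg_right hXu (by linarith)
              _ ≤ ((u:ℝ) * Abar q) * (δ * ((tc c:ℕ):ℝ)) :=
                  mul_le_mul_of_nonneg_left hgap2 (mul_nonneg hupos.le (hAbar0 q))
              _ = Abar q * δ * ((u:ℝ) * ((tc c:ℕ):ℝ)) := by ring
          have ht2 : |X u q / ((tc c:ℕ):ℝ) - X (tc c) q / ((tc c:ℕ):ℝ)|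
              ≤ (Abar q + Sbar q) * δ := by
            rw [div_sub_div_same, abs_div, abs_of_pos hτpos, div_le_iff₀ hτpos]
            rw [abs_sub_comm]
            calc |X (tc c) q - X u q| ≤ (((tc c:ℕ):ℝ) - (u:ℝ)) * (Abar q + Sbar q) := hXd
              _ ≤ (δ * ((tc c:ℕ):ℝ)) * (Abar q + Sbar q) := by
                  apply mul_le_mul_of_nonneg_right hgap2
                  have h1 := hAbar0 q; have h2 := hSbar0 q
                  linarith
              _ = (Abar q + Sbar q) * δ * ((tc c:ℕ):ℝ) := by ring
          have htri : |X u q / (u:ℝ) - η q| ≤ |X u q / (u:ℝ) - X u q / ((tc c:ℕ):ℝ)|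
              + |X u q / ((tc c:ℕ):ℝ) - X (tc c) q / ((tc c:ℕ):ℝ)|
              + |X (tc c) q / ((tc c:ℕ):ℝ) - η q| := by
            have h1 := abs_sub_le (X u q / (u:ℝ)) (X (tc c) q / ((tc c:ℕ):ℝ)) (η q)
            have h2 := abs_sub_le (X u q / (u:ℝ)) (X u q / ((tc c:ℕ):ℝ))
              (X (tc c) q / ((tc c:ℕ):ℝ))
            linarith
          simp only [hbnddef]
          linarith [ht1, ht2, htri]
        have hstep : ∀ u, t₀ c ≤ u → u < tc c →
            V (u+1) ≤ V u + (2*((tc c:ℕ):ℝ)*g u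
              + (2*((tc c:ℕ):ℝ)*E c + K - 2*m*((t₀ c:ℕ):ℝ))) := by
          intro u hu1 hu2
          have hwinu := hwin u hu1 hu2.le
          have hu1' : 1 ≤ u := le_trans hT01 hu1
          have hucast1 : (1:ℝ) ≤ (u:ℝ) := by exact_mod_cast hu1'
          have hupos : (0:ℝ) < (u:ℝ) := by linarith
          have hucast : ((u:ℕ):ℝ) ≤ ((tc c:ℕ):ℝ) := by exact_mod_cast hu2.le
          have hT0u : ((t₀ c:ℕ):ℝ) ≤ (u:ℝ) := by exact_mod_cast hu1
          have hXub2 : ∀ q, X u q ≤ (u:ℝ)*(η q + bnd q) := by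
            intro q
            have h := (abs_le.mp (hwinu q)).2
            have h' : X u q / (u:ℝ) ≤ η q + bnd q := by linarith
            have h2 := (div_le_iff₀ hupos).mp h'
            linarith
          have hXlb2 : ∀ q, (u:ℝ)*(η q - bnd q) ≤ X u q := by
            intro q
            have h := (abs_le.mp (hwinu q)).1
            have h' : η q - bnd q ≤ X u q / (u:ℝ) := by linarith
            have h2 := (le_div_iff₀ hupos).mp h'
            linarith
          have hVexp : V (u+1) = V u + 2*(∑ q, d q*(X u q*A u q))
              - 2*(∑ q, d q*(X u q*min (S (σ u) q) (X u q)))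
              + ∑ q, d q*(A u q - min (S (σ u) q) (X u q))^2 := by
            simp only [hVdef]
            rw [Finset.mul_sum, Finset.mul_sum, ← Finset.sum_add_distrib,
              ← Finset.sum_sub_distrib, ← Finset.sum_add_distrib]
            refine Finset.sum_congr rfl fun q _ => ?_
            rw [hXrec u q]; ring
          have hq2 : ∑ q, d q*(A u q - min (S (σ u) q) (X u q))^2 ≤ K1 := by
            rw [hK1def]
            refine Finset.sum_le_sum fun q _ => ?_
            have h1 := hA0 u q; have h2 := hAbar u q
            have h3 : 0 ≤ min (S (σ u) q) (X u q) := le_min (hS _ q) (hXnn u q)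
            have h4 : min (S (σ u) q) (X u q) ≤ Sbar q := (min_le_left _ _).trans (hSbarj _ q)
            have h5 := hAbar0 q; have h6 := hSbar0 q
            have habs : (A u q - min (S (σ u) q) (X u q))^2 ≤ (Abar q + Sbar q)^2 := by
              nlinarith
            exact mul_le_mul_of_nonneg_left habs (hd q).le
          have hminb : (∑ q, d q*(X u q * S (σ u) q)) - K2
              ≤ ∑ q, d q*(X u q * min (S (σ u) q) (X u q)) := by
            rw [hK2def, ← Finset.sum_sub_distrib]
            refine Finset.sum_le_sum fun q _ => ?_
            have h3 := hXnn u q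
            have h4 := hS (σ u) q
            have h5 : S (σ u) q ≤ Sbar q := hSbarj _ q
            have h6 := hSbar0 q
            have hd' := (hd q).le
            rcases le_total (S (σ u) q) (X u q) with h | h
            · rw [min_eq_left h]
              have := mul_nonneg hd' (sq_nonneg (Sbar q))
              linarith
            · rw [min_eq_right h]
              have hS2 : S (σ u) q^2 ≤ Sbar q^2 := by nlinarith
              have k1 : X u q * S (σ u) q ≤ X u q * X u q + Sbar q^2 := by
                nlinarith [sq_nonneg (X u q - S (σ u) q), mul_nonneg h3 h4]
              have k2 := mul_le_mul_of_nonneg_left k1 hd'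
              nlinarith [k2]
          have hmw' : ∑ q, d q*(X u q * S j₀ q) ≤ ∑ q, d q*(X u q * S (σ u) q) := by
            calc ∑ q, d q*(X u q * S j₀ q) = ∑ q, S j₀ q * (d q * X u q) :=
                  Finset.sum_congr rfl fun q _ => by ring
              _ ≤ ∑ q, S (σ u) q * (d q * X u q) := hMW u j₀
              _ = ∑ q, d q*(X u q * S (σ u) q) := Finset.sum_congr rfl fun q _ => by ring
          have harr : ∑ q, d q*(X u q * A u q)
              ≤ (u:ℝ)*g u + (u:ℝ)*(∑ q, d q*(Abar q * bnd q)) := by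
            simp only [hgdef]
            rw [Finset.mul_sum, Finset.mul_sum, ← Finset.sum_add_distrib]
            refine Finset.sum_le_sum fun q _ => ?_
            have hXb := hXub2 q
            have hA1 := hA0 u q; have hA2 := hAbar u q
            have hb' := hbnd0 q
            have hd' := (hd q).le
            have hu0 : (0:ℝ) ≤ (u:ℝ) := hupos.le
            have f1 : X u q * (d q * A u q) ≤ ((u:ℝ)*(η q + bnd q)) * (d q * A u q) :=
              mul_le_mul_of_nonneg_right hXb (mul_nonneg hd' hA1)
            have f2 : bnd q * A u q ≤ bnd q * Abar q := mul_le_mul_of_nonneg_left hA2 hb'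
            have f3 : ((u:ℝ) * d q) * (bnd q * A u q) ≤ ((u:ℝ) * d q) * (bnd q * Abar q) :=
              mul_le_mul_of_nonneg_left f2 (mul_nonneg hu0 hd')
            nlinarith [f1, f3]
          have hsrv : (u:ℝ)*m - (u:ℝ)*(∑ q, d q*(S j₀ q * bnd q))
              ≤ ∑ q, d q*(X u q * S j₀ q) := by
            rw [hj₀, Finset.mul_sum, Finset.mul_sum, ← Finset.sum_sub_distrib]
            refine Finset.sum_le_sum fun q _ => ?_
            have hd' := (hd q).le
            have hSnn := hS j₀ q
            have f1 : ((u:ℝ)*(η q - bnd q)) * (d q * S j₀ q) ≤ X u q * (d q * S j₀ q) :=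
              mul_le_mul_of_nonneg_right (hXlb2 q) (mul_nonneg hd' hSnn)
            nlinarith [f1]
          have hEsplit : E c = (∑ q, d q*(Abar q * bnd q)) + (∑ q, d q*(S j₀ q * bnd q)) := by
            simp only [hEdef, hbnddef]
            rw [← Finset.sum_add_distrib]
            exact Finset.sum_congr rfl fun q _ => by ring
          have hSann : 0 ≤ ∑ q, d q*(Abar q * bnd q) :=
            Finset.sum_nonneg fun q _ => mul_nonneg (hd q).le
              (mul_nonneg (hAbar0 q) (hbnd0 q))
          have hSbnn : 0 ≤ ∑ q, d q*(S j₀ q * bnd q) :=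
            Finset.sum_nonneg fun q _ => mul_nonneg (hd q).le
              (mul_nonneg (hS j₀ q) (hbnd0 q))
          have hx1 : (u:ℝ)*g u ≤ ((tc c:ℕ):ℝ)*g u :=
            mul_le_mul_of_nonneg_right hucast (hg0 u)
          have hx2 : (u:ℝ)*((∑ q, d q*(Abar q * bnd q)) + (∑ q, d q*(S j₀ q * bnd q)))
              ≤ ((tc c:ℕ):ℝ)*((∑ q, d q*(Abar q * bnd q)) + (∑ q, d q*(S j₀ q * bnd q))) :=
            mul_le_mul_of_nonneg_right hucast (by linarith)
          have hx3 : ((tc c:ℕ):ℝ)*((∑ q, d q*(Abar q * bnd q)) + (∑ q, d q*(S j₀ q * bnd q)))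
              = ((tc c:ℕ):ℝ)*(E c) := by rw [hEsplit]
          have hx4 : ((t₀ c:ℕ):ℝ)*m ≤ (u:ℝ)*m := mul_le_mul_of_nonneg_right hT0u hm0
          rw [hKdef]
          linarith [hVexp, hq2, hminb, hmw', harr, hsrv, hx1, hx2, hx3, hx4]
        have htel := tele V (fun u => 2*((tc c:ℕ):ℝ)*g u
          + (2*((tc c:ℕ):ℝ)*E c + K - 2*m*((t₀ c:ℕ):ℝ))) (t₀ c) (tc c) (ht₀le c) hstep
        have hsplitsum : ∑ u ∈ Finset.Ico (t₀ c) (tc c), (2*((tc c:ℕ):ℝ)*g u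
            + (2*((tc c:ℕ):ℝ)*E c + K - 2*m*((t₀ c:ℕ):ℝ)))
            = 2*((tc c:ℕ):ℝ)*(W (tc c) - W (t₀ c))
              + (((tc c:ℕ):ℝ) - ((t₀ c:ℕ):ℝ))*(2*((tc c:ℕ):ℝ)*E c + K - 2*m*((t₀ c:ℕ):ℝ)) := by
          rw [Finset.sum_add_distrib, Finset.sum_const, ← Finset.mul_sum,
            Finset.sum_Ico_eq_sub g (ht₀le c), Nat.card_Ico, nsmul_eq_mul,
            Nat.cast_sub (ht₀le c)]
        have hVt0 : V (t₀ c) ≤ (b+ε)*((t₀ c:ℕ):ℝ)^2 := by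
          rw [hfV (t₀ c) hT01]
          exact mul_le_mul_of_nonneg_right hc2 (sq_nonneg _)
        have hVtc : V (tc c) = f (tc c) * ((tc c:ℕ):ℝ)^2 := hfV (tc c) hc1
        have hGmul : G c * ((tc c:ℕ):ℝ)^2 = (b+ε)*((t₀ c:ℕ):ℝ)^2
            + 2*((tc c:ℕ):ℝ)*(W (tc c) - W (t₀ c))
            + (((tc c:ℕ):ℝ) - ((t₀ c:ℕ):ℝ))*(2*((tc c:ℕ):ℝ)*E c)
            + K*((tc c:ℕ):ℝ)
            - 2*(m*((((tc c:ℕ):ℝ) - ((t₀ c:ℕ):ℝ))*((t₀ c:ℕ):ℝ))) := by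
          simp only [hGdef, hθcdef]
          field_simp
          ring
        have hTK : 0 ≤ ((t₀ c:ℕ):ℝ)*K := mul_nonneg hT0pos.le hKnn
        have hfinal : f (tc c) * ((tc c:ℕ):ℝ)^2 ≤ G c * ((tc c:ℕ):ℝ)^2 := by
          rw [hGmul, ← hVtc]
          rw [hsplitsum] at htel
          nlinarith [htel, hVt0, hTK]
        have hsq : (0:ℝ) < ((tc c:ℕ):ℝ)^2 := by positivity
        exact le_of_mul_le_mul_right hfinal hsq
      have hδ2 : b ≤ b*(1-δ)^2 + 2*r - 2*(r*(1-δ)) + (1-(1-δ))*(2*(δ*C5))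
          - 2*(m*((1-(1-δ))*(1-δ))) := by
        refine le_of_forall_pos_le_add fun ε hε => ?_
        have h := hεbound ε hε
        have h2 : (1-δ)^2 ≤ 1 := by nlinarith
        nlinarith [h]
      have h3 : 0 ≤ δ*(-2*b + δ*b + 2*r + 2*δ*C5 - 2*m + 2*m*δ) := by nlinarith [hδ2]
      have h4 : 0 ≤ -2*b + δ*b + 2*r + 2*δ*C5 - 2*m + 2*m*δ := by
        by_contra h5
        push_neg at h5
        nlinarith
      nlinarith [h4]
    by_contra hcon
    push_neg at hcon
    have hCC : 0 ≤ b/2 + C5 + m := by linarith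
    have hε0pos : 0 < b - (r - m) := by linarith
    set δ0 : ℝ := min ((b - (r - m))/(2*(b/2 + C5 + m + 1))) (1/2) with hδ0def
    have hden : 0 < 2*(b/2 + C5 + m + 1) := by linarith
    have hpos : 0 < δ0 := lt_min (div_pos hε0pos hden) (by norm_num)
    have hlt : δ0 < 1 := lt_of_le_of_lt (min_le_right _ _) (by norm_num)
    have h := hδbound δ0 hpos hlt
    have h6 : δ0 ≤ (b - (r - m))/(2*(b/2 + C5 + m + 1)) := min_le_left _ _
    have h7 : δ0*(b/2 + C5 + m) ≤ (b - (r-m))/2 := by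
      calc δ0*(b/2+C5+m) ≤ ((b - (r-m))/(2*(b/2+C5+m+1)))*(b/2+C5+m) :=
            mul_le_mul_of_nonneg_right h6 hCC
        _ ≤ (b - (r-m))/2 := by
            rw [div_mul_eq_mul_div, div_le_div_iff₀ hden (by norm_num)]
            nlinarith
    linarith
  -- key lemma : every sublimit along a sequence tending to infinity equals η
  have keylem : ∀ (u : ℕ → ℕ) (ψ : Fin Q → ℝ), Tendsto u atTop atTop →
      Tendsto (fun a => fun q => X (u a) q / (u a : ℝ)) atTop (𝓝 ψ) → ψ = η := by
    intro u ψ hu hψ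
    have hψc : ∀ q, Tendsto (fun a => X (u a) q / (u a : ℝ)) atTop (𝓝 (ψ q)) :=
      fun q => tendsto_pi_nhds.mp hψ q
    have hp : r - m ≤ ∑ q, η q * (d q * ψ q) := by
      have hL : Tendsto (fun a => W (u a) / ((u a : ℕ) : ℝ) - m) atTop (𝓝 (r - m)) :=
        (hW.comp hu).sub tendsto_const_nhds
      have hR : Tendsto (fun a => ∑ q, η q * (d q * (X (u a) q / (u a : ℝ)))) atTop
          (𝓝 (∑ q, η q * (d q * ψ q))) :=
        tendsto_finset_sum _ fun q _ => ((hψc q).const_mul (d q)).const_mul (η q)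
      refine le_of_tendsto_of_tendsto hL hR ?_
      filter_upwards [hu.eventually (eventually_ge_atTop 1)] with a ha
      have hT : (0:ℝ) < (u a : ℝ) := by
        have : 0 < u a := ha
        exact_mod_cast this
      have h1 := hAlem (u a)
      have h2 : (∑ q, η q * (d q * X (u a) q)) / ((u a : ℕ):ℝ) =
          ∑ q, η q * (d q * (X (u a) q / ((u a : ℕ):ℝ))) := by
        rw [Finset.sum_div]; exact Finset.sum_congr rfl fun q _ => by ring
      have h4 : (W (u a) - m * ((u a : ℕ):ℝ)) / ((u a : ℕ):ℝ) ≤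
          (∑ q, η q * (d q * X (u a) q)) / ((u a : ℕ):ℝ) := by gcongr
      have h5 : (W (u a) - m * ((u a : ℕ):ℝ)) / ((u a : ℕ):ℝ) =
          W (u a) / ((u a : ℕ):ℝ) - m := by field_simp
      show W (u a) / ((u a : ℕ):ℝ) - m ≤ _
      rw [← h5, ← h2]
      exact h4
    have hq : (∑ q, ψ q * (d q * ψ q)) ≤ b := by
      have hflim : Tendsto (fun a => f (u a)) atTop (𝓝 (∑ q, ψ q * (d q * ψ q))) := by
        simp only [hfdef]
        exact tendsto_finset_sum _ fun q _ => (hψc q).mul ((hψc q).const_mul (d q))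
      have h6 := sublimit_le_limsup f (∑ q, Abar q * (d q * Abar q)) hfub u hu _ hflim
      rwa [← hηlimsup] at h6
    have hsum : ∑ q, d q * (ψ q - η q)^2 ≤ 0 := by
      have hexp : ∑ q, d q * (ψ q - η q)^2 =
          (∑ q, ψ q * (d q * ψ q)) - 2 * (∑ q, η q * (d q * ψ q)) + b := by
        rw [hbdef, Finset.mul_sum, ← Finset.sum_sub_distrib, ← Finset.sum_add_distrib]
        exact Finset.sum_congr rfl fun q _ => by ring
      rw [hexp]
      linarith [hp, hq, step3]
    have hz : ∀ q ∈ Finset.univ, d q * (ψ q - η q)^2 = 0 := by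
      rw [← Finset.sum_eq_zero_iff_of_nonneg
        (fun q _ => mul_nonneg (hd q).le (sq_nonneg _))]
      exact le_antisymm hsum (Finset.sum_nonneg fun q _ => mul_nonneg (hd q).le (sq_nonneg _))
    funext q
    have h7 := hz q (Finset.mem_univ q)
    have h8 : (ψ q - η q)^2 = 0 := by
      rcases mul_eq_zero.mp h7 with h | h
      · exact absurd h (hd q).ne'
      · exact h
    have h9 : ψ q - η q = 0 := by
      have := sq_eq_zero_iff.mp h8
      exact this
    linarith
  refine ⟨?_, ?_⟩
  · rintro ⟨ta, ψ, hmono, hlim, hne⟩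
    exact hne (keylem ta ψ hmono.tendsto_atTop hlim)
  · apply tendsto_of_subseq_tendsto
    intro ns hns
    have hK : IsCompact (Set.pi Set.univ fun q : Fin Q => Set.Icc (0:ℝ) (Abar q)) :=
      isCompact_univ_pi fun q => isCompact_Icc
    have hmem : ∀ a : ℕ, (fun q => X (ns a) q / ((ns a : ℕ) : ℝ)) ∈
        Set.pi Set.univ fun q : Fin Q => Set.Icc (0:ℝ) (Abar q) :=
      fun a => fun q _ => ⟨hxnn _ q, hxub _ q⟩
    obtain ⟨L, -, φ, hφ, hLy⟩ := hK.tendsto_subseq hmem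
    refine ⟨φ, ?_⟩
    have hLη : L = η := keylem (fun n => ns (φ n)) L (hns.comp hφ.tendsto_atTop) hLy
    rw [← hLη]
    exact hLy
end

section
/- Suppose the system is operated under the MaxWeight policy with weight matrix D and ρ ∉ 𝒫, and suppose η := lim_{t→∞} X(t)/t exists. Then η is a fixed point: there exist α_1, …, α_N with α_m ≥ 0 and Σ_{m=1}^N α_m = 1 such that η = (ρ − Σ_{m=1}^N α_m S_m)⁺; moreover, for every m with α_m > 0 one has ⟨S_m, D·η⟩ = max_{S∈𝒮} ⟨S, D·η⟩. -/
open Finset Filter Topology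

/-- under MaxWeight in overload, the limit η of X(t)/t is a fixed point:
η = (ρ − Σ α_m S_m)⁺ with α ≥ 0, Σ α = 1, and each S_m with α_m > 0 attains
max_{S∈𝒮} ⟨S, Dη⟩. -/
theorem stmt9 {Q N : ℕ} (hQ : 0 < Q) (hN : 0 < N)
    (A : ℕ → Fin Q → ℝ) (Abar : Fin Q → ℝ)
    (hA0 : ∀ t q, 0 ≤ A t q) (hAbar : ∀ t q, A t q ≤ Abar q)
    (ρ : Fin Q → ℝ) (hρpos : ∀ q, 0 < ρ q)
    (hρ : ∀ q, Tendsto (fun t : ℕ => (∑ s ∈ Finset.range t, A s q) / (t : ℝ))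
      atTop (𝓝 (ρ q)))
    (S : Fin N → Fin Q → ℝ) (hS : ∀ i q, 0 ≤ S i q)
    (σ : ℕ → Fin N)
    (d : Fin Q → ℝ) (hd : ∀ q, 0 < d q)
    (X : ℕ → Fin Q → ℝ) (hX0 : ∀ q, X 0 q = 0)
    (hXrec : ∀ t q, X (t + 1) q = X t q + A t q - min (S (σ t) q) (X t q))
    (hMW : ∀ t j, ∑ q, S j q * (d q * X t q) ≤ ∑ q, S (σ t) q * (d q * X t q))
    (hover : ρ ∉ stabRegion S)
    (η : Fin Q → ℝ)
    (hηlim : Tendsto (fun t : ℕ => fun q => X t q / (t : ℝ)) atTop (𝓝 η)) :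
    ∃ α : Fin N → ℝ, (∀ m, 0 ≤ α m) ∧ (∑ m, α m) = 1 ∧
      (∀ q, η q = max (ρ q - ∑ m, α m * S m q) 0) ∧
      ∀ m, 0 < α m →
        ∑ q, S m q * (d q * η q) = ⨆ j, ∑ q, S j q * (d q * η q) := by
  haveI : Nonempty (Fin N) := ⟨⟨0, hN⟩⟩
  -- coordinatewise convergence of X t q / t
  have hηq : ∀ q, Tendsto (fun t : ℕ => X t q / (t : ℝ)) atTop (𝓝 (η q)) := by
    intro q
    exact ((continuous_apply q).tendsto η).comp hηlim
  -- nonnegativity of X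
  have hXnn : ∀ t q, 0 ≤ X t q := by
    intro t
    induction t with
    | zero => intro q; rw [hX0]
    | succ t ih =>
      intro q
      have h1 := hXrec t q
      have h2 : min (S (σ t) q) (X t q) ≤ X t q := min_le_right _ _
      have := hA0 t q
      linarith
  -- telescoping
  have htel : ∀ t q, X t q = ∑ s ∈ Finset.range t, (A s q - min (S (σ s) q) (X s q)) := by
    intro t q
    induction t with
    | zero => simp [hX0]
    | succ t ih =>
      rw [Finset.sum_range_succ, ← ih, hXrec]
      ring
  -- empirical frequencies
  set c : ℕ → Fin N → ℝ :=
    fun t m => ((((Finset.range t).filter (fun s => σ s = m)).card : ℕ) : ℝ) with hcdef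
  set u : ℕ → Fin N → ℝ := fun t m => c t m / t with hudef
  have hcsum : ∀ t, ∑ m, c t m = (t : ℝ) := by
    intro t
    have := Finset.card_eq_sum_card_fiberwise
      (f := σ) (s := Finset.range t) (t := Finset.univ) (fun x _ => Finset.mem_univ _)
    simp only [hcdef]
    rw [← Nat.cast_sum]
    rw [← this, Finset.card_range]
  have hcnn : ∀ t m, 0 ≤ c t m := fun t m => Nat.cast_nonneg _
  have hcle : ∀ t m, c t m ≤ (t : ℝ) := by
    intro t m
    have h : (((Finset.range t).filter (fun s => σ s = m)).card : ℕ) ≤ t := by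
      calc _ ≤ (Finset.range t).card := Finset.card_filter_le _ _
        _ = t := Finset.card_range t
    simp only [hcdef]
    exact_mod_cast h
  -- service sums fiberwise
  have hserv : ∀ t q, ∑ s ∈ Finset.range t, S (σ s) q = ∑ m, c t m * S m q := by
    intro t q
    rw [← Finset.sum_fiberwise_of_maps_to
      (g := σ) (s := Finset.range t) (t := Finset.univ) (fun x _ => Finset.mem_univ _)
      (f := fun s => S (σ s) q)]
    refine Finset.sum_congr rfl fun m _ => ?_
    rw [Finset.sum_congr rfl (fun s hs => ?_), Finset.sum_const, nsmul_eq_mul]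
    exact (Finset.mem_filter.mp hs).2 ▸ rfl
  -- u t lands in compact cube
  have hucube : ∀ t, u t ∈ Set.Icc (0 : Fin N → ℝ) 1 := by
    intro t
    constructor <;> intro m
    · exact div_nonneg (hcnn t m) (Nat.cast_nonneg t)
    · show c t m / t ≤ 1
      rcases Nat.eq_zero_or_pos t with h | h
      · simp [h]
      · rw [div_le_one (by exact_mod_cast h)]
        exact hcle t m
  obtain ⟨α, hαmem, φ, hφ, hφlim⟩ :=
    (isCompact_Icc (a := (0 : Fin N → ℝ)) (b := 1)).tendsto_subseq hucube
  have hφtop : Tendsto φ atTop atTop := hφ.tendsto_atTop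
  have hαm : ∀ m, Tendsto (fun k => u (φ k) m) atTop (𝓝 (α m)) := by
    intro m
    exact ((continuous_apply m).tendsto α).comp hφlim
  have hα0 : ∀ m, 0 ≤ α m := fun m => hαmem.1 m
  -- sum of α is 1
  have hαsum : (∑ m, α m) = 1 := by
    have h1 : Tendsto (fun k => ∑ m, u (φ k) m) atTop (𝓝 (∑ m, α m)) :=
      tendsto_finset_sum _ (fun m _ => hαm m)
    have h2 : (fun k => ∑ m, u (φ k) m) =ᶠ[atTop] (fun _ => (1 : ℝ)) := by
      filter_upwards [hφtop.eventually_ge_atTop 1] with k hk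
      have ht : (0 : ℝ) < (φ k : ℝ) := by exact_mod_cast hk
      simp only [hudef]
      rw [← Finset.sum_div, hcsum, div_self ht.ne']
    exact tendsto_nhds_unique (h1.congr' h2) tendsto_const_nhds
  -- empirical service average limit
  have hSemp : ∀ q, Tendsto (fun k => (∑ s ∈ Finset.range (φ k), S (σ s) q) / (φ k : ℝ))
      atTop (𝓝 (∑ m, α m * S m q)) := by
    intro q
    have h1 : Tendsto (fun k => ∑ m, u (φ k) m * S m q) atTop (𝓝 (∑ m, α m * S m q)) :=
      tendsto_finset_sum _ (fun m _ => (hαm m).mul_const (S m q))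
    refine h1.congr fun k => ?_
    rw [hserv, Finset.sum_div]
    exact Finset.sum_congr rfl fun m _ => by simp only [hudef]; ring
  have hρφ : ∀ q, Tendsto (fun k => (∑ s ∈ Finset.range (φ k), A s q) / (φ k : ℝ))
      atTop (𝓝 (ρ q)) := fun q => (hρ q).comp hφtop
  have hηφ : ∀ q, Tendsto (fun k => X (φ k) q / (φ k : ℝ)) atTop (𝓝 (η q)) :=
    fun q => (hηq q).comp hφtop
  -- fixed point
  have hfix : ∀ q, η q = max (ρ q - ∑ m, α m * S m q) 0 := by
    intro q
    have hηnn : 0 ≤ η q :=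
      ge_of_tendsto (hηq q) (Eventually.of_forall fun t =>
        div_nonneg (hXnn t q) (Nat.cast_nonneg t))
    by_cases hpos : 0 < η q
    · -- overloaded coordinate: η q = ρ q - Σ α S
      set B : ℝ := ∑ j, S j q with hB
      have hSB : ∀ j, S j q ≤ B :=
        fun j => Finset.single_le_sum (fun i _ => hS i q) (Finset.mem_univ j)
      obtain ⟨T, hT⟩ : ∃ T, ∀ t ≥ T, B ≤ X t q := by
        have h1 : ∀ᶠ t : ℕ in atTop, η q / 2 < X t q / t :=
          (hηq q).eventually (eventually_gt_nhds (by linarith))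
        have h2 : Tendsto (fun t : ℕ => η q / 2 * t) atTop atTop :=
          Tendsto.const_mul_atTop (by linarith) tendsto_natCast_atTop_atTop
        have h3 : ∀ᶠ t : ℕ in atTop, B ≤ η q / 2 * t := h2.eventually_ge_atTop B
        have h4 : ∀ᶠ t : ℕ in atTop, B ≤ X t q := by
          filter_upwards [h1, h3, eventually_ge_atTop 1] with t h1 h3 h5
          have ht : (0 : ℝ) < (t : ℝ) := by exact_mod_cast h5
          have : η q / 2 * t < X t q := by
            rw [lt_div_iff₀ ht] at h1
            linarith [h1]
          linarith
        exact eventually_atTop.mp h4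
      have hmin : ∀ t, T ≤ t → min (S (σ t) q) (X t q) = S (σ t) q :=
        fun t ht => min_eq_left (le_trans (hSB (σ t)) (hT t ht))
      set C : ℝ := X T q - ∑ s ∈ Finset.range T, (A s q - S (σ s) q) with hC
      have hform : ∀ t, T ≤ t → X t q = C + ∑ s ∈ Finset.range t, (A s q - S (σ s) q) := by
        intro t ht
        induction t, ht using Nat.le_induction with
        | base => simp [hC]
        | succ t ht ih =>
          rw [Finset.sum_range_succ, hXrec, hmin t ht, ih]
          ring
      have hlim2 : Tendsto (fun k => C / (φ k : ℝ)
          + (∑ s ∈ Finset.range (φ k), A s q) / (φ k : ℝ)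
          - (∑ s ∈ Finset.range (φ k), S (σ s) q) / (φ k : ℝ))
          atTop (𝓝 (0 + ρ q - ∑ m, α m * S m q)) := by
        refine Tendsto.sub (Tendsto.add ?_ (hρφ q)) (hSemp q)
        exact (tendsto_const_div_atTop_nhds_zero_nat C).comp hφtop
      have heq : (fun k => C / (φ k : ℝ)
          + (∑ s ∈ Finset.range (φ k), A s q) / (φ k : ℝ)
          - (∑ s ∈ Finset.range (φ k), S (σ s) q) / (φ k : ℝ))
          =ᶠ[atTop] (fun k => X (φ k) q / (φ k : ℝ)) := by
        filter_upwards [hφtop.eventually_ge_atTop T] with k hk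
        rw [hform (φ k) hk, Finset.sum_sub_distrib]
        ring
      have hval := tendsto_nhds_unique (hlim2.congr' heq) (hηφ q)
      rw [zero_add] at hval
      rw [← hval] at hηnn ⊢
      exact (max_eq_left hηnn).symm
    · -- η q = 0, show ρ q ≤ Σ α S
      have hη0 : η q = 0 := le_antisymm (not_lt.mp hpos) hηnn
      have hle : (ρ q - ∑ m, α m * S m q) ≤ 0 := by
        have hineq : ∀ᶠ k in atTop,
            (∑ s ∈ Finset.range (φ k), A s q) / (φ k : ℝ)
              - (∑ s ∈ Finset.range (φ k), S (σ s) q) / (φ k : ℝ)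
            ≤ X (φ k) q / (φ k : ℝ) := by
          filter_upwards [hφtop.eventually_ge_atTop 1] with k hk
          have ht : (0 : ℝ) < (φ k : ℝ) := by exact_mod_cast hk
          have hXge : (∑ s ∈ Finset.range (φ k), A s q)
              - ∑ s ∈ Finset.range (φ k), S (σ s) q ≤ X (φ k) q := by
            rw [htel (φ k) q, ← Finset.sum_sub_distrib]
            refine Finset.sum_le_sum fun s _ => ?_
            have := min_le_left (S (σ s) q) (X s q)
            linarith
          rw [div_sub_div_same]
          exact div_le_div_of_nonneg_right hXge ht.le
        have h1 := ((hρφ q).sub (hSemp q))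
        have := le_of_tendsto_of_tendsto h1 (hηφ q) hineq
        rw [hη0] at this
        exact this
      rw [hη0, max_eq_right hle]
  -- complementary slackness
  have hF : ∀ i : Fin N, Tendsto (fun t : ℕ => (∑ q, S i q * (d q * X t q)) / (t : ℝ))
      atTop (𝓝 (∑ q, S i q * (d q * η q))) := by
    intro i
    have h1 : Tendsto (fun t : ℕ => ∑ q, S i q * (d q * (X t q / t)))
        atTop (𝓝 (∑ q, S i q * (d q * η q))) :=
      tendsto_finset_sum _ fun q _ => ((hηq q).const_mul (d q)).const_mul (S i q)
    refine h1.congr fun t => ?_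
    rw [Finset.sum_div]
    exact Finset.sum_congr rfl fun q _ => by ring
  have hcs : ∀ m, 0 < α m → ∀ j,
      ∑ q, S j q * (d q * η q) ≤ ∑ q, S m q * (d q * η q) := by
    intro m hm j
    by_contra hlt
    push_neg at hlt
    -- σ t = m happens frequently
    have hfreq : ∃ᶠ t in atTop, σ t = m := by
      by_contra h
      rw [Filter.not_frequently] at h
      obtain ⟨T, hT⟩ := eventually_atTop.mp h
      have hb : ∀ t, c t m ≤ (T : ℝ) := by
        intro t
        have hsub : (Finset.range t).filter (fun s => σ s = m) ⊆ Finset.range T := by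
          intro s hs
          rw [Finset.mem_range]
          by_contra hs'
          push_neg at hs'
          exact hT s hs' (Finset.mem_filter.mp hs).2
        have h := Finset.card_le_card hsub
        rw [Finset.card_range] at h
        simp only [hcdef]
        exact_mod_cast h
      have h0 : Tendsto (fun k => u (φ k) m) atTop (𝓝 0) := by
        have hup : ∀ᶠ k in atTop, u (φ k) m ≤ (T : ℝ) / (φ k : ℝ) := by
          filter_upwards [hφtop.eventually_ge_atTop 1] with k hk
          have ht : (0 : ℝ) < (φ k : ℝ) := by exact_mod_cast hk
          exact div_le_div_of_nonneg_right (hb (φ k)) ht.le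
        have hdn : ∀ᶠ k in atTop, 0 ≤ u (φ k) m :=
          Eventually.of_forall fun k => (hucube (φ k)).1 m
        refine tendsto_of_tendsto_of_tendsto_of_le_of_le' tendsto_const_nhds
          ((tendsto_const_div_atTop_nhds_zero_nat (T : ℝ)).comp hφtop) hdn hup
      have := tendsto_nhds_unique (hαm m) h0
      linarith
    have hev : ∀ᶠ t : ℕ in atTop,
        ∑ q, S m q * (d q * X t q) < ∑ q, S j q * (d q * X t q) := by
      have hd' := (hF j).sub (hF m)
      have hpos : (0 : ℝ) < (∑ q, S j q * (d q * η q)) - ∑ q, S m q * (d q * η q) := by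
        linarith
      have h2 : ∀ᶠ t : ℕ in atTop,
          0 < (∑ q, S j q * (d q * X t q)) / (t : ℝ)
            - (∑ q, S m q * (d q * X t q)) / (t : ℝ) :=
        hd'.eventually (eventually_gt_nhds hpos)
      filter_upwards [h2, eventually_ge_atTop 1] with t h2 h1
      have ht : (0 : ℝ) < (t : ℝ) := by exact_mod_cast h1
      have h3 : (∑ q, S m q * (d q * X t q)) / (t : ℝ)
          < (∑ q, S j q * (d q * X t q)) / (t : ℝ) := by linarith
      exact (div_lt_div_iff_of_pos_right ht).mp h3
    obtain ⟨t, htm, htlt⟩ := (hfreq.and_eventually hev).exists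
    have := hMW t j
    rw [htm] at this
    linarith
  refine ⟨α, hα0, hαsum, hfix, fun m hm => ?_⟩
  refine le_antisymm
    (le_ciSup (f := fun j => ∑ q, S j q * (d q * η q))
      (Set.Finite.bddAbove (Set.finite_range _)) m)
    (ciSup_le (hcs m hm))
end

section
/- Let D be a diagonal Q×Q matrix with D_{qq} > 0 for every q, and let η ∈ ℝ_{≥0}^Q be a fixed point, i.e. η = (ρ − Σ_{m=1}^N α_m S_m)⁺ for some α_m ≥ 0 with Σ_{m=1}^N α_m = 1 such that ⟨S_m, D·η⟩ = max_{S∈𝒮} ⟨S, D·η⟩ for every m with α_m > 0. Then ⟨η, D·η⟩ = ⟨ρ, D·η⟩ − max_{S∈𝒮} ⟨S, D·η⟩. -/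
open Finset Filter Topology

/-- for a fixed point η, ⟨η,Dη⟩ = ⟨ρ,Dη⟩ − max_{S∈𝒮} ⟨S,Dη⟩. -/
theorem stmt10 {Q N : ℕ} (hQ : 0 < Q) (hN : 0 < N)
    (ρ : Fin Q → ℝ) (hρpos : ∀ q, 0 < ρ q)
    (S : Fin N → Fin Q → ℝ) (hS : ∀ i q, 0 ≤ S i q)
    (d : Fin Q → ℝ) (hd : ∀ q, 0 < d q)
    (η : Fin Q → ℝ) (hη : ∀ q, 0 ≤ η q)
    (α : Fin N → ℝ) (hα0 : ∀ m, 0 ≤ α m) (hα1 : (∑ m, α m) = 1)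
    (hfix : ∀ q, η q = max (ρ q - ∑ m, α m * S m q) 0)
    (hmax : ∀ m, 0 < α m →
      ∑ q, S m q * (d q * η q) = ⨆ j, ∑ q, S j q * (d q * η q)) :
    ∑ q, η q * (d q * η q) =
      ∑ q, ρ q * (d q * η q) - ⨆ j, ∑ q, S j q * (d q * η q) := by
  set M := ⨆ j, ∑ q, S j q * (d q * η q) with hM
  have step1 : ∀ q, η q * (d q * η q)
      = (ρ q - ∑ m, α m * S m q) * (d q * η q) := by
    intro q
    rcases le_or_gt (ρ q - ∑ m, α m * S m q) 0 with h | h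
    · have hz : η q = 0 := by rw [hfix q, max_eq_right h]
      simp [hz]
    · have : η q = ρ q - ∑ m, α m * S m q := by
        rw [hfix q, max_eq_left h.le]
      rw [this]
  have step2 : (∑ m, α m * ∑ q, S m q * (d q * η q)) = M := by
    have : ∀ m, α m * (∑ q, S m q * (d q * η q)) = α m * M := by
      intro m
      rcases (hα0 m).lt_or_eq with h | h
      · rw [hmax m h]
      · simp [← h]
    calc (∑ m, α m * ∑ q, S m q * (d q * η q)) = ∑ m, α m * M := by
          exact Finset.sum_congr rfl fun m _ => this m
      _ = (∑ m, α m) * M := by rw [Finset.sum_mul]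
      _ = M := by rw [hα1, one_mul]
  calc ∑ q, η q * (d q * η q)
      = ∑ q, (ρ q - ∑ m, α m * S m q) * (d q * η q) :=
        Finset.sum_congr rfl fun q _ => step1 q
    _ = ∑ q, (ρ q * (d q * η q) - ∑ m, α m * (S m q * (d q * η q))) := by
        apply Finset.sum_congr rfl
        intro q _
        rw [sub_mul, Finset.sum_mul]
        ring_nf
    _ = (∑ q, ρ q * (d q * η q)) - ∑ q, ∑ m, α m * (S m q * (d q * η q)) :=
        Finset.sum_sub_distrib _ _
    _ = (∑ q, ρ q * (d q * η q)) - ∑ m, α m * ∑ q, S m q * (d q * η q) := by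
        rw [Finset.sum_comm]
        congr 1
        exact Finset.sum_congr rfl fun m _ => (Finset.mul_sum _ _ _).symm
    _ = (∑ q, ρ q * (d q * η q)) - M := by rw [step2]
end

section
/- Suppose the system is operated under the MaxWeight policy with weight matrix D and ρ ∉ 𝒫, and let η := lim_{t→∞} X(t)/t (which exists). Then η is the unique minimizer of the convex program min ⟨x, D·x⟩ over x ∈ Ψ(ρ,𝒮); that is, ⟨η, D·η⟩ ≤ ⟨x, D·x⟩ for every x ∈ Ψ(ρ,𝒮), with equality only when x = η. -/
open Finset Filter Topology

lemma aux_sq (a b : ℝ) : max a 0 ^ 2 + 2 * max a 0 * (b - a) ≤ max b 0 ^ 2 := by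
  rcases le_or_gt a 0 with ha | ha
  · rcases le_or_gt b 0 with hb | hb
    · simp [max_eq_right ha, max_eq_right hb]
    · rw [max_eq_right ha]; nlinarith [sq_nonneg (max b 0)]
  · rw [max_eq_left ha.le]
    rcases le_or_gt b 0 with hb | hb
    · rw [max_eq_right hb]; nlinarith
    · rw [max_eq_left hb.le]; nlinarith [sq_nonneg (b - a)]

lemma aux_eq (a b : ℝ) (h : max b 0 ^ 2 = max a 0 ^ 2 + 2 * max a 0 * (b - a)) :
    max b 0 = max a 0 := by
  rcases le_or_gt a 0 with ha | ha
  · rcases le_or_gt b 0 with hb | hb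
    · simp [max_eq_right ha, max_eq_right hb]
    · rw [max_eq_right ha] at h ⊢
      rw [max_eq_left hb.le] at h
      nlinarith
  · rw [max_eq_left ha.le] at h ⊢
    rcases le_or_gt b 0 with hb | hb
    · rw [max_eq_right hb] at h ⊢; nlinarith
    · rw [max_eq_left hb.le] at h ⊢; nlinarith [sq_nonneg (b - a)]

lemma sum_comp_count {N : ℕ} (σ : ℕ → Fin N) (f : Fin N → ℝ) (t : ℕ) :
    ∑ s ∈ Finset.range t, f (σ s) =
      ∑ m, (((Finset.range t).filter (fun s => σ s = m)).card : ℝ) * f m := by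
  have : ∀ s, f (σ s) = ∑ m, if σ s = m then f m else 0 := by
    intro s; simp [Finset.sum_ite_eq]
  simp_rw [this]
  rw [Finset.sum_comm]
  congr 1; funext m
  rw [Finset.sum_ite, Finset.sum_const, Finset.sum_const]
  simp [mul_comm]

/-- the limit η of X(t)/t under MaxWeight in overload is the unique
minimizer of ⟨x, Dx⟩ over Ψ(ρ,𝒮). -/
theorem stmt11 {Q N : ℕ} (hQ : 0 < Q) (hN : 0 < N)
    (A : ℕ → Fin Q → ℝ) (Abar : Fin Q → ℝ)
    (hA0 : ∀ t q, 0 ≤ A t q) (hAbar : ∀ t q, A t q ≤ Abar q)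
    (ρ : Fin Q → ℝ) (hρpos : ∀ q, 0 < ρ q)
    (hρ : ∀ q, Tendsto (fun t : ℕ => (∑ s ∈ Finset.range t, A s q) / (t : ℝ))
      atTop (𝓝 (ρ q)))
    (S : Fin N → Fin Q → ℝ) (hS : ∀ i q, 0 ≤ S i q)
    (σ : ℕ → Fin N)
    (d : Fin Q → ℝ) (hd : ∀ q, 0 < d q)
    (X : ℕ → Fin Q → ℝ) (hX0 : ∀ q, X 0 q = 0)
    (hXrec : ∀ t q, X (t + 1) q = X t q + A t q - min (S (σ t) q) (X t q))
    (hMW : ∀ t j, ∑ q, S j q * (d q * X t q) ≤ ∑ q, S (σ t) q * (d q * X t q))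
    (hover : ρ ∉ stabRegion S)
    (η : Fin Q → ℝ)
    (hηlim : Tendsto (fun t : ℕ => fun q => X t q / (t : ℝ)) atTop (𝓝 η)) :
    η ∈ Psi ρ S ∧
    (∀ x ∈ Psi ρ S, ∑ q, η q * (d q * η q) ≤ ∑ q, x q * (d q * x q)) ∧
    (∀ x ∈ Psi ρ S, ∑ q, x q * (d q * x q) = ∑ q, η q * (d q * η q) → x = η) := by
  -- coordinatewise limits
  have hηq : ∀ q, Tendsto (fun t : ℕ => X t q / (t : ℝ)) atTop (𝓝 (η q)) :=
    fun q => tendsto_pi_nhds.mp hηlim q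
  -- X nonneg
  have hXnn : ∀ t q, 0 ≤ X t q := by
    intro t
    induction t with
    | zero => intro q; rw [hX0]
    | succ t ih => intro q; rw [hXrec t q]; have := min_le_right (S (σ t) q) (X t q)
                   have := hA0 t q; linarith [ih q]
  have hηnn : ∀ q, 0 ≤ η q := fun q =>
    ge_of_tendsto' (hηq q) (fun t => div_nonneg (hXnn t q) (Nat.cast_nonneg t))
  -- telescoping
  have hXsum : ∀ t q, X t q = ∑ s ∈ Finset.range t, (A s q - min (S (σ s) q) (X s q)) := by
    intro t
    induction t with
    | zero => intro q; simp [hX0]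
    | succ t ih => intro q; rw [Finset.sum_range_succ, ← ih q, hXrec t q]; ring
  have hXsum' : ∀ t q, ∑ s ∈ Finset.range t, min (S (σ s) q) (X s q)
      = (∑ s ∈ Finset.range t, A s q) - X t q := by
    intro t q
    have := hXsum t q
    rw [Finset.sum_sub_distrib] at this
    linarith
  -- bound on service
  set B : Fin Q → ℝ := fun q => ∑ m, S m q with hB
  have hSB : ∀ m q, S m q ≤ B q := fun m q =>
    Finset.single_le_sum (fun i _ => hS i q) (Finset.mem_univ m)
  -- time fractions
  set c : ℕ → Fin N → ℕ := fun t m => ((Finset.range t).filter (fun s => σ s = m)).card with hc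
  set αs : ℕ → Fin N → ℝ := fun t m => (c t m : ℝ) / t with hαs
  have hαmem : ∀ t, αs t ∈ Set.Icc (0 : Fin N → ℝ) 1 := by
    intro t
    constructor <;> intro m
    · exact div_nonneg (Nat.cast_nonneg _) (Nat.cast_nonneg _)
    · show (c t m : ℝ) / t ≤ 1
      rcases Nat.eq_zero_or_pos t with h | h
      · simp [h]
      · rw [div_le_one (by exact_mod_cast h)]
        exact_mod_cast Finset.card_filter_le _ _ |>.trans (by simp)
  obtain ⟨αl, hαlmem, φ, hφmono, hφtend⟩ :=
    (isCompact_Icc (a := (0 : Fin N → ℝ)) (b := 1)).tendsto_subseq hαmem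
  have hφ : Tendsto φ atTop atTop := hφmono.tendsto_atTop
  have hαlq : ∀ m, Tendsto (fun k => αs (φ k) m) atTop (𝓝 (αl m)) :=
    fun m => tendsto_pi_nhds.mp hφtend m
  have hαlnn : ∀ m, 0 ≤ αl m := fun m => hαlmem.1 m
  -- sum of fractions is 1
  have hcsum : ∀ t, ∑ m, c t m = t := by
    intro t
    have h := Finset.card_eq_sum_card_fiberwise (s := Finset.range t)
      (t := (Finset.univ : Finset (Fin N))) (f := σ) (fun s _ => Finset.mem_univ _)
    simpa [hc, Finset.card_range] using h.symm
  have hαsum1 : ∀ t, 1 ≤ t → ∑ m, αs t m = 1 := by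
    intro t ht
    have : (0:ℝ) < t := by exact_mod_cast ht
    rw [hαs]
    simp only [← Finset.sum_div]
    rw [div_eq_one_iff_eq this.ne']
    exact_mod_cast congrArg (Nat.cast (R := ℝ)) (hcsum t)
  have hαlsum : ∑ m, αl m = 1 := by
    have h1 : Tendsto (fun k => ∑ m, αs (φ k) m) atTop (𝓝 (∑ m, αl m)) :=
      tendsto_finset_sum _ (fun m _ => hαlq m)
    have h2 : Tendsto (fun k => ∑ m, αs (φ k) m) atTop (𝓝 1) := by
      apply Tendsto.congr' _ tendsto_const_nhds
      filter_upwards [hφ.eventually_ge_atTop 1] with k hk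
      exact (hαsum1 _ hk).symm
    exact tendsto_nhds_unique h1 h2
  -- the limiting service allocation
  set v : Fin Q → ℝ := fun q => ∑ m, αl m * S m q with hv
  have hαv : ∀ q, Tendsto (fun k => ∑ m, αs (φ k) m * S m q) atTop (𝓝 (v q)) :=
    fun q => tendsto_finset_sum _ (fun m _ => (hαlq m).mul_const _)
  -- sum of counted service
  have hserv : ∀ t q, (∑ s ∈ Finset.range t, S (σ s) q) / t = ∑ m, αs t m * S m q := by
    intro t q
    rw [sum_comp_count σ (fun m => S m q) t, Finset.sum_div]
    congr 1; funext m
    rw [hαs]; ring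
  -- η = (ρ - v)⁺
  have hη_eq : ∀ q, η q = max (ρ q - v q) 0 := by
    intro q
    rcases (hηnn q).lt_or_eq with hpos | hzero
    · -- positive coordinate: service fully used eventually
      obtain ⟨T, hT⟩ : ∃ T : ℕ, ∀ t, T ≤ t → B q ≤ X t q := by
        have h1 : ∀ᶠ t : ℕ in atTop, η q / 2 ≤ X t q / t :=
          (hηq q).eventually (eventually_ge_nhds (by linarith))
        have h2 : Tendsto (fun t : ℕ => (η q / 2) * t) atTop atTop :=
          (tendsto_natCast_atTop_atTop (R := ℝ)).const_mul_atTop (by linarith)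
        have h3 : ∀ᶠ t : ℕ in atTop, B q ≤ (η q / 2) * t := h2.eventually_ge_atTop (B q)
        have h4 : ∀ᶠ t : ℕ in atTop, (1:ℕ) ≤ t := eventually_ge_atTop 1
        rw [eventually_atTop] at *
        obtain ⟨T1, hT1⟩ := h1; obtain ⟨T2, hT2⟩ := h3; obtain ⟨T3, hT3⟩ := h4
        refine ⟨max T1 (max T2 T3), fun t ht => ?_⟩
        have e1 := hT1 t (le_trans (le_max_left _ _) ht)
        have e2 := hT2 t (le_trans ((le_max_left _ _).trans (le_max_right _ _)) ht)
        have e3 := hT3 t (le_trans ((le_max_right _ _).trans (le_max_right _ _)) ht)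
        have htpos : (0:ℝ) < t := by exact_mod_cast e3
        calc B q ≤ (η q / 2) * t := e2
        _ ≤ (X t q / t) * t := by nlinarith
        _ = X t q := by field_simp
      have hmin : ∀ t, T ≤ t → min (S (σ t) q) (X t q) = S (σ t) q :=
        fun t ht => min_eq_left ((hSB (σ t) q).trans (hT t ht))
      set C : ℝ := ∑ s ∈ Finset.range T, (S (σ s) q - min (S (σ s) q) (X s q)) with hC
      have hkeyt : ∀ t, T ≤ t →
          ∑ m, αs t m * S m q
            = (∑ s ∈ Finset.range t, A s q) / t - X t q / t + C / t := by
        intro t ht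
        have hsplit : ∑ s ∈ Finset.range t, S (σ s) q
            = (∑ s ∈ Finset.range t, min (S (σ s) q) (X s q)) + C := by
          rw [← Finset.sum_range_add_sum_Ico (fun s => S (σ s) q) ht,
              ← Finset.sum_range_add_sum_Ico (fun s => min (S (σ s) q) (X s q)) ht, hC,
              Finset.sum_sub_distrib]
          have : ∑ s ∈ Finset.Ico T t, min (S (σ s) q) (X s q)
              = ∑ s ∈ Finset.Ico T t, S (σ s) q := by
            apply Finset.sum_congr rfl
            intro s hs
            exact hmin s (Finset.mem_Ico.mp hs).1
          rw [this]; ring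
        rw [← hserv t q, hsplit, hXsum' t q]
        ring
      have hlim1 : Tendsto (fun t : ℕ =>
          (∑ s ∈ Finset.range t, A s q) / t - X t q / t + C / t) atTop
          (𝓝 (ρ q - η q + 0)) :=
        ((hρ q).sub (hηq q)).add (tendsto_const_div_atTop_nhds_zero_nat C)
      have hlim2 : Tendsto (fun k => ∑ m, αs (φ k) m * S m q) atTop (𝓝 (ρ q - η q + 0)) := by
        apply Tendsto.congr' _ (hlim1.comp hφ)
        filter_upwards [hφ.eventually_ge_atTop T] with k hk
        exact (hkeyt (φ k) hk).symm
      have hve : v q = ρ q - η q := by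
        have := tendsto_nhds_unique (hαv q) hlim2
        linarith
      rw [hve]
      have : ρ q - (ρ q - η q) = η q := by ring
      rw [this, max_eq_left (hηnn q)]
    · -- zero coordinate: ρ q ≤ v q
      have hle : ∀ t : ℕ, 1 ≤ t →
          (∑ s ∈ Finset.range t, A s q) / t - X t q / t ≤ ∑ m, αs t m * S m q := by
        intro t ht
        have htpos : (0:ℝ) < t := by exact_mod_cast ht
        rw [← hserv t q, ← sub_div]
        gcongr
        rw [← hXsum' t q]
        exact Finset.sum_le_sum (fun s _ => min_le_left _ _)
      have h1 : Tendsto (fun k => (∑ s ∈ Finset.range (φ k), A s q) / (φ k) -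
          X (φ k) q / (φ k)) atTop (𝓝 (ρ q - η q)) :=
        ((hρ q).sub (hηq q)).comp hφ
      have h2 : ρ q - η q ≤ v q := by
        apply le_of_tendsto_of_tendsto h1 (hαv q)
        filter_upwards [hφ.eventually_ge_atTop 1] with k hk
        exact hle (φ k) hk
      rw [← hzero] at h2 ⊢
      rw [max_eq_right (by linarith)]
  -- weights
  set w : Fin N → ℝ := fun j => ∑ q, S j q * (d q * η q) with hw
  have hwnn : ∀ j, 0 ≤ w j := fun j =>
    Finset.sum_nonneg (fun q _ => mul_nonneg (hS j q)
      (mul_nonneg (hd q).le (hηnn q)))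
  set err : ℕ → ℝ := fun t => ∑ q, B q * (d q * |η q - X t q / t|) with herrdef
  have herrnn : ∀ t, 0 ≤ err t := fun t =>
    Finset.sum_nonneg (fun q _ => mul_nonneg
      (Finset.sum_nonneg fun m _ => hS m q) (mul_nonneg (hd q).le (abs_nonneg _)))
  have herr : Tendsto err atTop (𝓝 0) := by
    have : Tendsto err atTop (𝓝 (∑ q : Fin Q, B q * (d q * |η q - η q|))) := by
      apply tendsto_finset_sum
      intro q _
      exact (Tendsto.const_mul _ (Tendsto.const_mul _
        ((tendsto_const_nhds.sub (hηq q)).abs)))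
    simpa using this
  have hkey : ∀ j t, w j ≤ w (σ t) + 2 * err t := by
    intro j t
    have hPle : ∀ i : Fin N, ∑ q, S i q * (d q * (X t q / t))
        = (∑ q, S i q * (d q * X t q)) / t := by
      intro i
      rw [Finset.sum_div]
      congr 1; funext q; ring
    have hP : ∑ q, S j q * (d q * (X t q / t)) ≤ ∑ q, S (σ t) q * (d q * (X t q / t)) := by
      rw [hPle, hPle]
      rcases Nat.eq_zero_or_pos t with h0 | h0
      · subst h0; simp [hX0]
      · have : (0:ℝ) < t := by exact_mod_cast h0
        exact div_le_div_of_nonneg_right (hMW t j) this.le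
    have hR1 : ∑ q, S j q * (d q * (η q - X t q / t)) ≤ err t := by
      apply Finset.sum_le_sum
      intro q _
      have h1 := hS j q
      have h2 := hSB j q
      have h3 := (hd q).le
      have h4 := le_abs_self (η q - X t q / t)
      have h5 := abs_nonneg (η q - X t q / t)
      nlinarith [mul_le_mul_of_nonneg_left (mul_le_mul_of_nonneg_left h4 h3) h1,
        mul_le_mul_of_nonneg_right h2 (mul_nonneg h3 h5)]
    have hR2 : -(err t) ≤ ∑ q, S (σ t) q * (d q * (η q - X t q / t)) := by
      rw [neg_le]
      rw [← Finset.sum_neg_distrib]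
      apply Finset.sum_le_sum
      intro q _
      have h1 := hS (σ t) q
      have h2 := hSB (σ t) q
      have h3 := (hd q).le
      have h4 := neg_abs_le (η q - X t q / t)
      have h5 := abs_nonneg (η q - X t q / t)
      nlinarith [mul_le_mul_of_nonneg_left (mul_le_mul_of_nonneg_left h4 h3) h1,
        mul_le_mul_of_nonneg_right h2 (mul_nonneg h3 h5)]
    have hsplit : ∀ i : Fin N, w i = (∑ q, S i q * (d q * (X t q / t)))
        + ∑ q, S i q * (d q * (η q - X t q / t)) := by
      intro i
      show (∑ q, S i q * (d q * η q)) = _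
      rw [← Finset.sum_add_distrib]
      exact Finset.sum_congr rfl (fun q _ => by ring)
    have e1 := hsplit j
    have e2 := hsplit (σ t)
    linarith
  -- averaged inequality
  have havg : ∀ j, ∀ t : ℕ, 1 ≤ t →
      w j - 2 * ((∑ s ∈ Finset.range t, err s) / t) ≤ ∑ m, αs t m * w m := by
    intro j t ht
    have htpos : (0:ℝ) < t := by exact_mod_cast ht
    have hsum : (t:ℝ) * w j ≤ (∑ s ∈ Finset.range t, w (σ s)) +
        2 * ∑ s ∈ Finset.range t, err s := by
      have := Finset.sum_le_sum (fun s (_ : s ∈ Finset.range t) => hkey j s)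
      simp only [Finset.sum_add_distrib, Finset.sum_const, Finset.card_range,
        nsmul_eq_mul, ← Finset.mul_sum] at this
      linarith
    have hcomp : (∑ s ∈ Finset.range t, w (σ s)) / t = ∑ m, αs t m * w m := by
      rw [sum_comp_count σ w t, Finset.sum_div]
      congr 1; funext m
      rw [hαs]; ring
    have hfinal : w j ≤ (∑ s ∈ Finset.range t, w (σ s)) / t
        + 2 * ((∑ s ∈ Finset.range t, err s) / t) := by
      calc w j = ((t:ℝ) * w j) / t := by field_simp
      _ ≤ ((∑ s ∈ Finset.range t, w (σ s)) + 2 * ∑ s ∈ Finset.range t, err s) / t :=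
          div_le_div_of_nonneg_right hsum htpos.le
      _ = (∑ s ∈ Finset.range t, w (σ s)) / t + 2 * ((∑ s ∈ Finset.range t, err s) / t) := by
          ring
    linarith [hfinal, hcomp]
  -- limit: every weight is dominated by the average weight
  have hW : ∀ j, w j ≤ ∑ m, αl m * w m := by
    intro j
    have hces : Tendsto (fun t : ℕ => (∑ s ∈ Finset.range t, err s) / t) atTop (𝓝 0) := by
      have := herr.cesaro
      simpa [inv_mul_eq_div] using this
    have hL : Tendsto (fun t : ℕ => w j - 2 * ((∑ s ∈ Finset.range t, err s) / t)) atTop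
        (𝓝 (w j - 2 * 0)) := tendsto_const_nhds.sub (hces.const_mul 2)
    have hR : Tendsto (fun k => ∑ m, αs (φ k) m * w m) atTop (𝓝 (∑ m, αl m * w m)) :=
      tendsto_finset_sum _ (fun m _ => (hαlq m).mul_const _)
    have : w j - 2 * 0 ≤ ∑ m, αl m * w m := by
      apply le_of_tendsto_of_tendsto (hL.comp hφ) hR
      filter_upwards [hφ.eventually_ge_atTop 1] with k hk
      exact havg j (φ k) hk
    linarith
  -- the average weight as an inner product
  have hswap : ∀ (β : Fin N → ℝ),
      ∑ q, η q * (d q * ∑ m, β m * S m q) = ∑ m, β m * w m := by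
    intro β
    have : ∀ q, η q * (d q * ∑ m, β m * S m q)
        = ∑ m, β m * (S m q * (d q * η q)) := by
      intro q
      rw [Finset.mul_sum, Finset.mul_sum]
      exact Finset.sum_congr rfl (fun m _ => by ring)
    simp_rw [this]
    rw [Finset.sum_comm]
    exact Finset.sum_congr rfl (fun m _ => by rw [← Finset.mul_sum])
  -- dominance for any admissible β
  have hdom : ∀ (β : Fin N → ℝ), (∀ m, 0 ≤ β m) → (∑ m, β m) ≤ 1 →
      ∑ m, β m * w m ≤ ∑ m, αl m * w m := by
    intro β hβ0 hβ1
    set W : ℝ := ∑ m, αl m * w m with hWdef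
    have hWnn : 0 ≤ W := le_trans (hwnn ⟨0, hN⟩) (hW ⟨0, hN⟩)
    calc ∑ m, β m * w m ≤ ∑ m, β m * W :=
          Finset.sum_le_sum (fun m _ => mul_le_mul_of_nonneg_left (hW m) (hβ0 m))
    _ = (∑ m, β m) * W := by rw [Finset.sum_mul]
    _ ≤ 1 * W := mul_le_mul_of_nonneg_right hβ1 hWnn
    _ = W := one_mul W
  -- conclusion
  have hgoal_eta : ∑ q, η q * (d q * η q) = ∑ q, d q * η q ^ 2 :=
    Finset.sum_congr rfl (fun q _ => by ring)
  have hmem : η ∈ Psi ρ S := ⟨αl, hαlnn, le_of_eq hαlsum, funext hη_eq⟩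
  refine ⟨hmem, ?_, ?_⟩
  · intro x hx
    obtain ⟨β, hβ0, hβ1, hxdef⟩ := hx
    set u : Fin Q → ℝ := fun q => ∑ m, β m * S m q with hu
    have hxq : ∀ q, x q = max (ρ q - u q) 0 := fun q => by rw [hxdef]
    have hΔ : ∑ m, β m * w m ≤ ∑ m, αl m * w m := hdom β hβ0 hβ1
    have hper : ∀ q ∈ Finset.univ,
        d q * η q ^ 2 + (η q * (d q * v q) - η q * (d q * u q)) * 2 ≤ d q * x q ^ 2 := by
      intro q _
      have base := aux_sq (ρ q - v q) (ρ q - u q)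
      rw [← hη_eq q, ← hxq q] at base
      nlinarith [mul_le_mul_of_nonneg_left base (hd q).le]
    have hswapv : ∑ q, η q * (d q * v q) = ∑ m, αl m * w m := hswap αl
    have hswapu : ∑ q, η q * (d q * u q) = ∑ m, β m * w m := hswap β
    have hsumineq := Finset.sum_le_sum hper
    rw [Finset.sum_add_distrib, ← Finset.sum_mul, Finset.sum_sub_distrib,
      hswapv, hswapu] at hsumineq
    have hx2 : ∑ q, x q * (d q * x q) = ∑ q, d q * x q ^ 2 :=
      Finset.sum_congr rfl (fun q _ => by ring)
    rw [hgoal_eta, hx2]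
    linarith
  · intro x hx hEq
    obtain ⟨β, hβ0, hβ1, hxdef⟩ := hx
    set u : Fin Q → ℝ := fun q => ∑ m, β m * S m q with hu
    have hxq : ∀ q, x q = max (ρ q - u q) 0 := fun q => by rw [hxdef]
    have hΔ : ∑ m, β m * w m ≤ ∑ m, αl m * w m := hdom β hβ0 hβ1
    set G : Fin Q → ℝ := fun q =>
      d q * x q ^ 2 - (d q * η q ^ 2 + (η q * (d q * v q) - η q * (d q * u q)) * 2) with hG
    have hGnn : ∀ q ∈ Finset.univ, 0 ≤ G q := by
      intro q _
      have base := aux_sq (ρ q - v q) (ρ q - u q)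
      rw [← hη_eq q, ← hxq q] at base
      simp only [hG]
      nlinarith [mul_le_mul_of_nonneg_left base (hd q).le]
    have hx2 : ∑ q, x q * (d q * x q) = ∑ q, d q * x q ^ 2 :=
      Finset.sum_congr rfl (fun q _ => by ring)
    have hswapv : ∑ q, η q * (d q * v q) = ∑ m, αl m * w m := hswap αl
    have hswapu : ∑ q, η q * (d q * u q) = ∑ m, β m * w m := hswap β
    have hGsum : ∑ q, G q ≤ 0 := by
      simp only [hG]
      rw [Finset.sum_sub_distrib, Finset.sum_add_distrib, ← Finset.sum_mul,
        Finset.sum_sub_distrib, hswapv, hswapu]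
      rw [hgoal_eta, hx2] at hEq
      linarith
    have hGzero : ∀ q ∈ Finset.univ, G q = 0 :=
      (Finset.sum_eq_zero_iff_of_nonneg hGnn).mp
        (le_antisymm hGsum (Finset.sum_nonneg hGnn))
    funext q
    have hq := hGzero q (Finset.mem_univ q)
    simp only [hG] at hq
    have hdq := hd q
    have heq2 : x q ^ 2 = η q ^ 2 + 2 * η q * (v q - u q) := by
      have : d q * (x q ^ 2 - (η q ^ 2 + 2 * η q * (v q - u q))) = 0 := by ring_nf; linarith [hq]
      rcases mul_eq_zero.mp this with h | h
      · exact absurd h hdq.ne'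
      · linarith
    have := aux_eq (ρ q - v q) (ρ q - u q) (by
      rw [← hη_eq q, ← hxq q]
      have : (ρ q - u q) - (ρ q - v q) = v q - u q := by ring
      rw [this]
      linarith [heq2])
    rw [hxq q, hη_eq q, this]
end

section
/- Let ρ ∈ ℝ_{≥0}^Q and let 𝒫 ⊆ ℝ_{≥0}^Q be a convex set that is downward closed in the nonnegative orthant (if r ∈ 𝒫 and 0 ≤ r' ≤ r componentwise then r' ∈ 𝒫). Then the set Ψ := {(ρ − r)⁺ : r ∈ 𝒫} is a convex subset of ℝ^Q. -/
open Finset Filter Topology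

/-- if 𝒫 is convex and downward closed in the nonnegative orthant, then
Ψ = {(ρ − r)⁺ : r ∈ 𝒫} is convex. -/
theorem stmt12 {Q : ℕ}
    (ρ : Fin Q → ℝ) (hρ : ∀ q, 0 ≤ ρ q)
    (P : Set (Fin Q → ℝ))
    (hPnn : ∀ r ∈ P, ∀ q, 0 ≤ r q)
    (hPconv : Convex ℝ P)
    (hPdown : ∀ r ∈ P, ∀ r' : Fin Q → ℝ,
      (∀ q, 0 ≤ r' q) → (∀ q, r' q ≤ r q) → r' ∈ P) :
    Convex ℝ {x : Fin Q → ℝ | ∃ r ∈ P, x = fun q => max (ρ q - r q) 0} := by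
  rintro x ⟨r1, hr1, rfl⟩ y ⟨r2, hr2, rfl⟩ a b ha hb hab
  refine ⟨fun q => ρ q - (a * max (ρ q - r1 q) 0 + b * max (ρ q - r2 q) 0), ?_, ?_⟩
  · refine hPdown _ (hPconv hr1 hr2 ha hb hab) _ (fun q => ?_) (fun q => ?_)
    all_goals
      have h3 : a * ρ q + b * ρ q = ρ q := by rw [← add_mul, hab, one_mul]
    · have h1 : max (ρ q - r1 q) 0 ≤ ρ q := by
        have := hPnn r1 hr1 q; have := hρ q
        simp only [max_le_iff]; constructor <;> linarith
      have h2 : max (ρ q - r2 q) 0 ≤ ρ q := by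
        have := hPnn r2 hr2 q; have := hρ q
        simp only [max_le_iff]; constructor <;> linarith
      have e1 := mul_le_mul_of_nonneg_left h1 ha
      have e2 := mul_le_mul_of_nonneg_left h2 hb
      linarith
    · have e1 := mul_le_mul_of_nonneg_left (le_max_left (ρ q - r1 q) 0) ha
      have e2 := mul_le_mul_of_nonneg_left (le_max_left (ρ q - r2 q) 0) hb
      simp only [Pi.add_apply, Pi.smul_apply, smul_eq_mul]
      linarith
  · funext q
    simp only [Pi.add_apply, Pi.smul_apply, smul_eq_mul]
    have m1 : (0:ℝ) ≤ max (ρ q - r1 q) 0 := le_max_right _ _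
    have m2 : (0:ℝ) ≤ max (ρ q - r2 q) 0 := le_max_right _ _
    have hz : 0 ≤ a * max (ρ q - r1 q) 0 + b * max (ρ q - r2 q) 0 := by positivity
    have hcancel : ρ q - (ρ q - (a * max (ρ q - r1 q) 0 + b * max (ρ q - r2 q) 0))
        = a * max (ρ q - r1 q) 0 + b * max (ρ q - r2 q) 0 := by ring
    rw [hcancel, max_eq_left hz]
end

section
/- Assume ρ ∉ 𝒫 and let η ∈ ℝ_{≥0}^Q. There exists a diagonal Q×Q matrix D with D_{qq} > 0 for every q such that, under the MaxWeight policy with weight matrix D, lim_{t→∞} X(t)/t = η, if and only if both of the following hold: (1) η = (ρ − Σ_{m=1}^N α_m S_m)⁺ for some α_m ≥ 0 with Σ_{m=1}^N α_m = 1; and (2) there exists v ∈ ℝ_{≥0}^Q with v_q = 0 if and only if η_q = 0, such that for every m with α_m > 0 one has ⟨v, S_m⟩ ≥ ⟨v, S_k⟩ for every k ∈ {1,…,N}. -/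
open Finset Filter Topology


lemma my_abel (w E : ℕ → ℝ) (T : ℕ) :
    ∑ t ∈ Finset.range T, w t * (E (t+1) - E t)
      = w T * E T - w 0 * E 0 - ∑ t ∈ Finset.range T, (w (t+1) - w t) * E (t+1) := by
  induction T with
  | zero => simp
  | succ T ih => rw [Finset.sum_range_succ, Finset.sum_range_succ, ih]; ring



lemma natsq_atTop : Tendsto (fun T : ℕ => (T : ℝ)^2) atTop atTop :=
  (tendsto_pow_atTop two_ne_zero).comp tendsto_natCast_atTop_atTop

/-- If `f ≥ 0` and `f t / t → 0`, then `(∑_{t<T} f t)/T² → 0`. -/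
lemma my_cesaro_sq (f : ℕ → ℝ) (hf : ∀ t, 0 ≤ f t)
    (h : Tendsto (fun t : ℕ => f t / t) atTop (𝓝 0)) :
    Tendsto (fun T : ℕ => (∑ t ∈ Finset.range T, f t) / (T : ℝ)^2) atTop (𝓝 0) := by
  have hces := h.cesaro
  have hf0 : Tendsto (fun T : ℕ => f 0 / (T : ℝ)^2) atTop (𝓝 0) :=
    Tendsto.div_atTop tendsto_const_nhds natsq_atTop
  have hub : Tendsto (fun T : ℕ => (T:ℝ)⁻¹ * ∑ t ∈ Finset.range T, f t / t + f 0 / (T:ℝ)^2)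
      atTop (𝓝 0) := by simpa using hces.add hf0
  apply squeeze_zero_norm' _ (by simpa using hub)
  filter_upwards [Filter.eventually_ge_atTop 1] with T hT
  have hTpos : (0:ℝ) < T := by exact_mod_cast hT
  have hnn : 0 ≤ ∑ t ∈ Finset.range T, f t := Finset.sum_nonneg fun t _ => hf t
  rw [Real.norm_eq_abs, abs_of_nonneg (by positivity)]
  -- ∑_{t<T} f t ≤ f 0 + T * ∑ (f t / t)
  have key : ∑ t ∈ Finset.range T, f t ≤ f 0 + (T:ℝ) * ∑ t ∈ Finset.range T, f t / t := by
    have h1 : ∀ t ∈ Finset.range T, t ≠ 0 → f t ≤ (T:ℝ) * (f t / t) := by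
      intro t ht ht0
      have htpos : (0:ℝ) < t := by exact_mod_cast Nat.pos_of_ne_zero ht0
      have htT : (t:ℝ) ≤ T := by exact_mod_cast Nat.le_of_lt_succ (Nat.lt_succ_of_lt (Finset.mem_range.mp ht))
      rw [mul_div_assoc']
      rw [le_div_iff₀ htpos]
      nlinarith [hf t]
    have hsplit : ∑ t ∈ Finset.range T, f t = f 0 + ∑ t ∈ Finset.Ico 1 T, f t := by
      rw [Finset.range_eq_Ico, ← Finset.sum_Ico_consecutive _ (Nat.zero_le 1) hT]
      norm_num
    rw [hsplit]
    gcongr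
    calc ∑ t ∈ Finset.Ico 1 T, f t ≤ ∑ t ∈ Finset.Ico 1 T, (T:ℝ) * (f t / t) := by
          apply Finset.sum_le_sum
          intro t ht
          exact h1 t (Finset.mem_range.mpr (Finset.mem_Ico.mp ht).2) (by have := (Finset.mem_Ico.mp ht).1; omega)
      _ ≤ ∑ t ∈ Finset.range T, (T:ℝ) * (f t / t) := by
          apply Finset.sum_le_sum_of_subset_of_nonneg
          · rw [Finset.range_eq_Ico]; exact Finset.Ico_subset_Ico (Nat.zero_le 1) le_rfl
          · intro t _ _
            rcases Nat.eq_zero_or_pos t with h0 | hp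
            · simp [h0]
            · have h2 : (0:ℝ) < t := by exact_mod_cast hp
              have h3 := hf t
              positivity
      _ = (T:ℝ) * ∑ t ∈ Finset.range T, f t / t := by rw [Finset.mul_sum]
  calc (∑ t ∈ Finset.range T, f t) / (T:ℝ)^2
      ≤ (f 0 + (T:ℝ) * ∑ t ∈ Finset.range T, f t / t) / (T:ℝ)^2 := by gcongr
    _ = (T:ℝ)⁻¹ * ∑ t ∈ Finset.range T, f t / t * ((T:ℝ)/(T:ℝ)) + f 0 / (T:ℝ)^2 := by
        field_simp; ring
    _ = (T:ℝ)⁻¹ * ∑ t ∈ Finset.range T, f t / t + f 0 / (T:ℝ)^2 := by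
        rw [div_self hTpos.ne']; ring

lemma backward_main {Q N : ℕ}
    (A : ℕ → Fin Q → ℝ) (Abar : Fin Q → ℝ)
    (hA0 : ∀ t q, 0 ≤ A t q) (hAbar : ∀ t q, A t q ≤ Abar q)
    (ρ : Fin Q → ℝ)
    (hρ : ∀ q, Tendsto (fun t : ℕ => (∑ s ∈ Finset.range t, A s q) / (t : ℝ))
      atTop (𝓝 (ρ q)))
    (S : Fin N → Fin Q → ℝ) (hS : ∀ i q, 0 ≤ S i q)
    (η : Fin Q → ℝ) (hη : ∀ q, 0 ≤ η q)
    (α : Fin N → ℝ) (hα0 : ∀ m, 0 ≤ α m) (hα1 : (∑ m, α m) = 1)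
    (hηeq : ∀ q, η q = max (ρ q - ∑ m, α m * S m q) 0)
    (v : Fin Q → ℝ) (hv0 : ∀ q, 0 ≤ v q) (hviff : ∀ q, v q = 0 ↔ η q = 0)
    (hvmax : ∀ m, 0 < α m → ∀ k, ∑ q, v q * S k q ≤ ∑ q, v q * S m q)
    (d : Fin Q → ℝ) (hd : ∀ q, 0 < d q) (hdv : ∀ q, v q = d q * η q)
    (σ : ℕ → Fin N) (X : ℕ → Fin Q → ℝ)
    (hX0 : ∀ q, X 0 q = 0)
    (hXrec : ∀ t q, X (t + 1) q = X t q + A t q - min (S (σ t) q) (X t q))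
    (hMW : ∀ t j, ∑ q, S j q * (d q * X t q) ≤ ∑ q, S (σ t) q * (d q * X t q)) :
    Tendsto (fun t : ℕ => fun q => X t q / (t : ℝ)) atTop (𝓝 η) := by
  -- notation
  set μ : Fin Q → ℝ := fun q => ∑ m, α m * S m q with hμ
  set Smax : Fin Q → ℝ := fun q => ∑ i, S i q with hSmax
  have hSmax0 : ∀ q, 0 ≤ Smax q := fun q => Finset.sum_nonneg fun i _ => hS i q
  have hSle : ∀ j q, S j q ≤ Smax q := fun j q =>
    Finset.single_le_sum (fun i _ => hS i q) (Finset.mem_univ j)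
  set w : ℕ → Fin Q → ℝ := fun t q => X t q - t * η q with hw
  set B : Fin Q → ℝ := fun q => Abar q + Smax q + η q with hB
  have hAbar0 : ∀ q, 0 ≤ Abar q := fun q => le_trans (hA0 0 q) (hAbar 0 q)
  have hB0 : ∀ q, 0 ≤ B q := fun q => by
    have := hAbar0 q; have := hSmax0 q; have := hη q; simp only [hB]; linarith
  set L : ℕ → ℝ := fun t => ∑ q, d q * (w t q)^2 with hL
  set e : ℕ → Fin Q → ℝ := fun t q => A t q - ρ q with he
  set E : ℕ → Fin Q → ℝ := fun t q => (∑ s ∈ Finset.range t, A s q) - t * ρ q with hE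
  -- X nonneg
  have hXnn : ∀ t q, 0 ≤ X t q := by
    intro t
    induction t with
    | zero => intro q; rw [hX0 q]
    | succ t ih =>
        intro q
        rw [hXrec t q]
        have h1 := min_le_right (S (σ t) q) (X t q)
        have := hA0 t q; have := ih q; linarith
  have hminnn : ∀ t q, 0 ≤ min (S (σ t) q) (X t q) :=
    fun t q => le_min (hS _ q) (hXnn t q)
  have hminle : ∀ t q, min (S (σ t) q) (X t q) ≤ Smax q :=
    fun t q => le_trans (min_le_left _ _) (hSle _ q)
  -- increments of w bounded
  have hΔ : ∀ t q, |w (t+1) q - w t q| ≤ B q := by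
    intro t q
    have : w (t+1) q - w t q = A t q - min (S (σ t) q) (X t q) - η q := by
      simp only [hw]; rw [hXrec t q]; push_cast; ring
    rw [this, abs_le]
    constructor
    · have := hA0 t q; have := hminle t q; have := hAbar0 q; simp only [hB]; linarith
    · have := hAbar t q; have := hminnn t q; have := hη q; have := hSmax0 q
      simp only [hB]; linarith
  have hw0 : ∀ q, w 0 q = 0 := by intro q; simp [hw, hX0 q]
  have hwB : ∀ t q, |w t q| ≤ B q * t := by
    intro t q
    induction t with
    | zero => simp [hw0 q]
    | succ t ih =>
        have h1 := hΔ t q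
        have h2 : |w (t+1) q| ≤ |w t q| + |w (t+1) q - w t q| := by
          have := abs_add_le (w t q) (w (t+1) q - w t q); simpa using this
        push_cast
        nlinarith [hB0 q]
  -- key drift inequality
  set C : ℝ := (∑ q, d q * (B q)^2) + 2 * (∑ q, d q * (Smax q)^2) with hC
  have hdrift : ∀ t, L (t+1) ≤ L t + C + 2 * ∑ q, d q * w t q * e t q := by
    intro t
    -- square expansion per coordinate
    have hsq : ∀ q, d q * (w (t+1) q)^2 ≤ d q * (w t q)^2 + d q * (B q)^2
        + 2 * (d q * w t q * (w (t+1) q - w t q)) := by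
      intro q
      have h1 := hΔ t q
      rw [abs_le] at h1
      have hΔsq : (w (t+1) q - w t q)^2 ≤ (B q)^2 := sq_le_sq' h1.1 h1.2
      have hid : d q * (w (t+1) q)^2 = d q * (w t q)^2
          + d q * (w (t+1) q - w t q)^2
          + 2 * (d q * w t q * (w (t+1) q - w t q)) := by ring
      have := mul_le_mul_of_nonneg_left hΔsq (hd q).le
      linarith
    have hLstep : L (t+1) ≤ L t + (∑ q, d q * (B q)^2)
        + 2 * ∑ q, d q * w t q * (w (t+1) q - w t q) := by
      simp only [hL]
      calc ∑ q, d q * (w (t+1) q)^2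
          ≤ ∑ q, (d q * (w t q)^2 + d q * (B q)^2
              + 2 * (d q * w t q * (w (t+1) q - w t q))) :=
            Finset.sum_le_sum fun q _ => hsq q
        _ = (∑ q, d q * (w t q)^2) + (∑ q, d q * (B q)^2)
              + 2 * ∑ q, d q * w t q * (w (t+1) q - w t q) := by
            rw [Finset.sum_add_distrib, Finset.sum_add_distrib, Finset.mul_sum]
    -- decompose the drift term
    have hdecomp : ∀ q, w (t+1) q - w t q = e t q + (ρ q - η q - μ q)
        + (μ q - S (σ t) q) + (S (σ t) q - min (S (σ t) q) (X t q)) := by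
      intro q
      simp only [hw, he]
      rw [hXrec t q]
      push_cast; ring
    have hsplit : ∑ q, d q * w t q * (w (t+1) q - w t q)
        = (∑ q, d q * w t q * e t q) + (∑ q, d q * w t q * (ρ q - η q - μ q))
          + (∑ q, d q * w t q * (μ q - S (σ t) q))
          + (∑ q, d q * w t q * (S (σ t) q - min (S (σ t) q) (X t q))) := by
      rw [← Finset.sum_add_distrib, ← Finset.sum_add_distrib, ← Finset.sum_add_distrib]
      apply Finset.sum_congr rfl
      intro q _
      rw [hdecomp q]; ring
    -- T1 ≤ 0
    have hT1 : (∑ q, d q * w t q * (ρ q - η q - μ q)) ≤ 0 := by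
      apply Finset.sum_nonpos
      intro q _
      rcases eq_or_lt_of_le (hη q) with h0 | hpos
      · -- η q = 0 : ρ q - μ q ≤ 0 and w = X ≥ 0
        have hρμ : ρ q - μ q ≤ 0 := by
          by_contra hc
          push_neg at hc
          have := hηeq q
          rw [max_eq_left hc.le] at this
          simp only [hμ] at this
          linarith [this ▸ h0]
        have hwX : w t q = X t q := by simp [hw, ← h0]
        rw [hwX]
        have : ρ q - η q - μ q ≤ 0 := by rw [← h0]; simpa using hρμ
        have := mul_nonneg (hd q).le (hXnn t q)
        exact mul_nonpos_of_nonneg_of_nonpos this ‹ρ q - η q - μ q ≤ 0›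
      · -- η q > 0 : η q = ρ q - μ q so factor is 0
        have : η q = ρ q - μ q := by
          have h := hηeq q
          rcases max_cases (ρ q - ∑ m, α m * S m q) 0 with ⟨h1, _⟩ | ⟨h1, _⟩
          · rw [h1] at h; exact h
          · rw [h1] at h; exfalso; linarith
        rw [show ρ q - η q - μ q = 0 by linarith]
        simp
    -- T2 ≤ 0
    have hT2 : (∑ q, d q * w t q * (μ q - S (σ t) q)) ≤ 0 := by
      have hrw : (∑ q, d q * w t q * (μ q - S (σ t) q))
          = ((∑ q, μ q * (d q * X t q)) - ∑ q, S (σ t) q * (d q * X t q))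
            - (t : ℝ) * ((∑ q, v q * μ q) - ∑ q, v q * S (σ t) q) := by
        rw [← Finset.sum_sub_distrib, ← Finset.sum_sub_distrib, Finset.mul_sum,
          ← Finset.sum_sub_distrib]
        apply Finset.sum_congr rfl
        intro q _
        simp only [hw]
        rw [hdv q]; ring
      rw [hrw]
      have hA1 : (∑ q, μ q * (d q * X t q)) ≤ ∑ q, S (σ t) q * (d q * X t q) := by
        have hswap : ∀ c : Fin Q → ℝ, ∑ q, (∑ m, α m * S m q) * c q
            = ∑ m, α m * ∑ q, S m q * c q := by
          intro c
          simp_rw [Finset.sum_mul, Finset.mul_sum, mul_assoc]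
          exact Finset.sum_comm
        have : (∑ q, μ q * (d q * X t q))
            = ∑ m, α m * ∑ q, S m q * (d q * X t q) := hswap _
        rw [this]
        calc ∑ m, α m * ∑ q, S m q * (d q * X t q)
            ≤ ∑ m, α m * ∑ q, S (σ t) q * (d q * X t q) := by
              apply Finset.sum_le_sum
              intro m _
              exact mul_le_mul_of_nonneg_left (hMW t m) (hα0 m)
          _ = ∑ q, S (σ t) q * (d q * X t q) := by
              rw [← Finset.sum_mul, hα1, one_mul]
      have hB1 : (∑ q, v q * S (σ t) q) ≤ ∑ q, v q * μ q := by
        have hswap : ∀ c : Fin Q → ℝ, ∑ q, (∑ m, α m * S m q) * c q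
            = ∑ m, α m * ∑ q, S m q * c q := by
          intro c
          simp_rw [Finset.sum_mul, Finset.mul_sum, mul_assoc]
          exact Finset.sum_comm
        have hvμ : (∑ q, v q * μ q) = ∑ m, α m * ∑ q, v q * S m q := by
          have h0 : (∑ q, v q * μ q) = ∑ q, (∑ m, α m * S m q) * v q := by
            apply Finset.sum_congr rfl
            intro q _
            rw [mul_comm]
          rw [h0, hswap]
          apply Finset.sum_congr rfl
          intro m _
          congr 1
          apply Finset.sum_congr rfl
          intro q _
          rw [mul_comm]
        rw [hvμ]
        calc (∑ q, v q * S (σ t) q) = ∑ m, α m * ∑ q, v q * S (σ t) q := by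
              rw [← Finset.sum_mul, hα1, one_mul]
          _ ≤ ∑ m, α m * ∑ q, v q * S m q := by
              apply Finset.sum_le_sum
              intro m _
              rcases eq_or_lt_of_le (hα0 m) with h0 | hpos
              · rw [← h0]; simp
              · exact mul_le_mul_of_nonneg_left (hvmax m hpos (σ t)) (hα0 m)
      have ht0 : (0:ℝ) ≤ t := Nat.cast_nonneg t
      nlinarith
    -- T3 ≤ ∑ d Smax²
    have hT3 : (∑ q, d q * w t q * (S (σ t) q - min (S (σ t) q) (X t q)))
        ≤ ∑ q, d q * (Smax q)^2 := by
      apply Finset.sum_le_sum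
      intro q _
      rcases le_or_gt (S (σ t) q) (X t q) with hle | hlt
      · rw [min_eq_left hle]
        simp only [sub_self, mul_zero]
        exact mul_nonneg (hd q).le (sq_nonneg _)
      · rw [min_eq_right hlt.le]
        have hwle : w t q ≤ Smax q := by
          have h1 : w t q ≤ X t q := by
            simp only [hw]
            have : 0 ≤ (t:ℝ) * η q := mul_nonneg (Nat.cast_nonneg t) (hη q)
            linarith
          have h2 := hSle (σ t) q
          linarith
        have hδnn : 0 ≤ S (σ t) q - X t q := by linarith
        have hδle : S (σ t) q - X t q ≤ Smax q := by
          have := hSle (σ t) q; have := hXnn t q; linarith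
        have h3 : w t q * (S (σ t) q - X t q) ≤ Smax q * (S (σ t) q - X t q) :=
          mul_le_mul_of_nonneg_right hwle hδnn
        have h4 : Smax q * (S (σ t) q - X t q) ≤ Smax q * Smax q :=
          mul_le_mul_of_nonneg_left hδle (hSmax0 q)
        calc d q * w t q * (S (σ t) q - X t q)
            = d q * (w t q * (S (σ t) q - X t q)) := by ring
          _ ≤ d q * (Smax q * Smax q) :=
              mul_le_mul_of_nonneg_left (h3.trans h4) (hd q).le
          _ = d q * (Smax q)^2 := by ring
    rw [hsplit] at hLstep
    simp only [hC]
    linarith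
  -- partial sums of the drift inequality
  have hL0 : L 0 = 0 := by
    simp only [hL]
    apply Finset.sum_eq_zero
    intro q _
    rw [hw0 q]
    ring
  have hLsum : ∀ T, L T ≤ C * T + 2 * ∑ t ∈ Finset.range T, ∑ q, d q * w t q * e t q := by
    intro T
    induction T with
    | zero => simp [hL0]
    | succ T ih =>
        have := hdrift T
        rw [Finset.sum_range_succ]
        push_cast
        linarith
  -- swap summation order
  have hswap2 : ∀ T, (∑ t ∈ Finset.range T, ∑ q, d q * w t q * e t q)
      = ∑ q, d q * ∑ t ∈ Finset.range T, w t q * e t q := by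
    intro T
    rw [Finset.sum_comm]
    apply Finset.sum_congr rfl
    intro q _
    rw [Finset.mul_sum]
    apply Finset.sum_congr rfl
    intro t _
    ring
  -- facts about E
  have hEdiff : ∀ t q, E (t+1) q - E t q = e t q := by
    intro t q
    simp only [hE, he]
    rw [Finset.sum_range_succ]
    push_cast
    ring
  have hEto : ∀ q, Tendsto (fun t : ℕ => E t q / t) atTop (𝓝 0) := by
    intro q
    have h1 : Tendsto (fun t : ℕ => (∑ s ∈ Finset.range t, A s q) / t - ρ q) atTop (𝓝 0) := by
      simpa using (hρ q).sub_const (ρ q)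
    refine Filter.Tendsto.congr' ?_ h1
    filter_upwards [Filter.eventually_ge_atTop 1] with t ht
    have htpos : (0:ℝ) < t := by exact_mod_cast ht
    simp only [hE]
    field_simp
  have hEabs : ∀ q, Tendsto (fun t : ℕ => |E t q| / t) atTop (𝓝 0) := by
    intro q
    have := (hEto q).abs
    simp only [abs_zero] at this
    refine Filter.Tendsto.congr' ?_ this
    filter_upwards [Filter.eventually_ge_atTop 1] with t ht
    have htpos : (0:ℝ) < t := by exact_mod_cast ht
    rw [abs_div, abs_of_pos htpos]
  -- Abel summation per queue
  have habel : ∀ q T, (∑ t ∈ Finset.range T, w t q * e t q)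
      = w T q * E T q - ∑ t ∈ Finset.range T, (w (t+1) q - w t q) * E (t+1) q := by
    intro q T
    have h1 : (∑ t ∈ Finset.range T, w t q * e t q)
        = ∑ t ∈ Finset.range T, w t q * (E (t+1) q - E t q) := by
      apply Finset.sum_congr rfl
      intro t _
      rw [hEdiff t q]
    rw [h1, my_abel (fun t => w t q) (fun t => E t q) T, hw0 q]
    ring
  -- each Abel term is o(T²)
  have hPq : ∀ q, Tendsto (fun T : ℕ => (∑ t ∈ Finset.range T, w t q * e t q) / (T:ℝ)^2)
      atTop (𝓝 0) := by
    intro q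
    have hterm1 : Tendsto (fun T : ℕ => w T q * E T q / (T:ℝ)^2) atTop (𝓝 0) := by
      apply squeeze_zero_norm' (a := fun T : ℕ => B q * (|E T q| / T))
      · filter_upwards [Filter.eventually_ge_atTop 1] with T hT
        have hTpos : (0:ℝ) < T := by exact_mod_cast hT
        rw [Real.norm_eq_abs, abs_div, abs_of_pos (by positivity : (0:ℝ) < (T:ℝ)^2), abs_mul]
        rw [div_le_iff₀ (by positivity)]
        have h1 := hwB T q
        have h2 : |w T q| * |E T q| ≤ (B q * T) * |E T q| :=
          mul_le_mul_of_nonneg_right h1 (abs_nonneg _)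
        calc |w T q| * |E T q| ≤ (B q * T) * |E T q| := h2
          _ = B q * (|E T q| / T) * (T:ℝ)^2 := by field_simp
      · simpa using (hEabs q).const_mul (B q)
    have hterm2 : Tendsto (fun T : ℕ =>
        (∑ t ∈ Finset.range T, (w (t+1) q - w t q) * E (t+1) q) / (T:ℝ)^2) atTop (𝓝 0) := by
      have hF : Tendsto (fun t : ℕ => (B q * |E (t+1) q|) / t) atTop (𝓝 0) := by
        have h1 : Tendsto (fun t : ℕ => |E (t+1) q| / ((t:ℝ)+1)) atTop (𝓝 0) := by
          have := (hEabs q).comp (tendsto_add_atTop_nat 1)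
          apply this.congr
          intro t
          simp
        have h2 : Tendsto (fun t : ℕ => B q * (2 * (|E (t+1) q| / ((t:ℝ)+1)))) atTop (𝓝 0) := by
          simpa using (h1.const_mul 2).const_mul (B q)
        apply tendsto_of_tendsto_of_tendsto_of_le_of_le' tendsto_const_nhds h2
        · filter_upwards [Filter.eventually_ge_atTop 1] with t ht
          have htpos : (0:ℝ) < t := by exact_mod_cast ht
          exact div_nonneg (mul_nonneg (hB0 q) (abs_nonneg _)) htpos.le
        · filter_upwards [Filter.eventually_ge_atTop 1] with t ht
          have htpos : (0:ℝ) < t := by exact_mod_cast ht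
          have ht1 : (1:ℝ) ≤ t := by exact_mod_cast ht
          rw [div_le_iff₀ htpos]
          have hle : (t:ℝ) + 1 ≤ 2 * t := by linarith
          have hE1 : 0 ≤ |E (t+1) q| / ((t:ℝ)+1) := by positivity
          have : B q * |E (t+1) q| = (B q * (|E (t+1) q| / ((t:ℝ)+1))) * ((t:ℝ)+1) := by
            field_simp
          rw [this]
          have hBE : 0 ≤ B q * (|E (t+1) q| / ((t:ℝ)+1)) := mul_nonneg (hB0 q) hE1
          calc (B q * (|E (t+1) q| / ((t:ℝ)+1))) * ((t:ℝ)+1)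
              ≤ (B q * (|E (t+1) q| / ((t:ℝ)+1))) * (2*t) := by
                exact mul_le_mul_of_nonneg_left hle hBE
            _ = B q * (2 * (|E (t+1) q| / ((t:ℝ)+1))) * t := by ring
      have := my_cesaro_sq (fun t => B q * |E (t+1) q|)
        (fun t => mul_nonneg (hB0 q) (abs_nonneg _)) hF
      apply squeeze_zero_norm' (a := fun T : ℕ =>
        (∑ t ∈ Finset.range T, B q * |E (t+1) q|) / (T:ℝ)^2)
      · filter_upwards [Filter.eventually_ge_atTop 1] with T hT
        have hTpos : (0:ℝ) < T := by exact_mod_cast hT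
        rw [Real.norm_eq_abs, abs_div, abs_of_pos (by positivity : (0:ℝ) < (T:ℝ)^2)]
        gcongr
        calc |∑ t ∈ Finset.range T, (w (t+1) q - w t q) * E (t+1) q|
            ≤ ∑ t ∈ Finset.range T, |(w (t+1) q - w t q) * E (t+1) q| :=
              Finset.abs_sum_le_sum_abs _ _
          _ ≤ ∑ t ∈ Finset.range T, B q * |E (t+1) q| := by
              apply Finset.sum_le_sum
              intro t _
              rw [abs_mul]
              exact mul_le_mul_of_nonneg_right (hΔ t q) (abs_nonneg _)
      · exact this
    have hts := hterm1.sub hterm2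
    simp only [sub_zero] at hts
    refine Filter.Tendsto.congr' ?_ hts
    filter_upwards with T
    rw [habel q T]
    ring
  -- L T / T² → 0
  have hLto : Tendsto (fun T : ℕ => L T / (T:ℝ)^2) atTop (𝓝 0) := by
    have hub : Tendsto (fun T : ℕ => C / T + 2 * ∑ q, d q *
        ((∑ t ∈ Finset.range T, w t q * e t q) / (T:ℝ)^2)) atTop (𝓝 0) := by
      have h1 : Tendsto (fun T : ℕ => C / (T:ℝ)) atTop (𝓝 0) :=
        Tendsto.div_atTop tendsto_const_nhds tendsto_natCast_atTop_atTop
      have h2 : Tendsto (fun T : ℕ => ∑ q, d q *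
          ((∑ t ∈ Finset.range T, w t q * e t q) / (T:ℝ)^2)) atTop (𝓝 0) := by
        have := tendsto_finset_sum (Finset.univ : Finset (Fin Q))
          (fun q _ => ((hPq q).const_mul (d q)))
        simpa using this
      simpa using h1.add (h2.const_mul 2)
    apply tendsto_of_tendsto_of_tendsto_of_le_of_le' tendsto_const_nhds hub
    · filter_upwards with T
      apply div_nonneg _ (sq_nonneg _)
      exact Finset.sum_nonneg fun q _ => mul_nonneg (hd q).le (sq_nonneg _)
    · filter_upwards [Filter.eventually_ge_atTop 1] with T hT
      have hTpos : (0:ℝ) < T := by exact_mod_cast hT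
      have h3 := hLsum T
      rw [hswap2 T] at h3
      calc L T / (T:ℝ)^2 ≤ (C * T + 2 * ∑ q, d q * ∑ t ∈ Finset.range T, w t q * e t q) / (T:ℝ)^2 := by
            gcongr
        _ = C / T + 2 * ∑ q, d q * ((∑ t ∈ Finset.range T, w t q * e t q) / (T:ℝ)^2) := by
            rw [add_div]
            congr 1
            · field_simp
            · rw [mul_div_assoc, Finset.sum_div]
              congr 1
              apply Finset.sum_congr rfl
              intro q _
              rw [mul_div_assoc]
  -- conclude per-queue convergence
  rw [tendsto_pi_nhds]
  intro q
  have hwto : Tendsto (fun T : ℕ => w T q / T) atTop (𝓝 0) := by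
    have hsq : Tendsto (fun T : ℕ => (w T q / T)^2) atTop (𝓝 0) := by
      have hub : Tendsto (fun T : ℕ => (L T / (T:ℝ)^2) / d q) atTop (𝓝 0) := by
        simpa using hLto.div_const (d q)
      apply tendsto_of_tendsto_of_tendsto_of_le_of_le' tendsto_const_nhds hub
      · filter_upwards with T
        positivity
      · filter_upwards [Filter.eventually_ge_atTop 1] with T hT
        have hTpos : (0:ℝ) < T := by exact_mod_cast hT
        have h1 : d q * (w T q)^2 ≤ L T :=
          Finset.single_le_sum (f := fun r => d r * (w T r)^2)
            (fun r _ => mul_nonneg (hd r).le (sq_nonneg _)) (Finset.mem_univ q)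
        rw [div_pow, div_div, div_le_div_iff₀ (by positivity) (mul_pos (by positivity) (hd q))]
        calc (w T q)^2 * ((T:ℝ)^2 * d q) = (d q * (w T q)^2) * (T:ℝ)^2 := by ring
          _ ≤ L T * (T:ℝ)^2 := mul_le_mul_of_nonneg_right h1 (sq_nonneg _)
    have := hsq.sqrt
    rw [Real.sqrt_zero] at this
    apply squeeze_zero_norm' _ this
    filter_upwards with T
    rw [Real.norm_eq_abs, Real.sqrt_sq_eq_abs]
  have : Tendsto (fun T : ℕ => w T q / T + η q) atTop (𝓝 (η q)) := by
    simpa using hwto.add_const (η q)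
  refine Filter.Tendsto.congr' ?_ this
  filter_upwards [Filter.eventually_ge_atTop 1] with T hT
  have hTpos : (0:ℝ) < T := by exact_mod_cast hT
  simp only [hw]
  field_simp
  ring



lemma forward_main {Q N : ℕ} (hN : 0 < N)
    (A : ℕ → Fin Q → ℝ)
    (hA0 : ∀ t q, 0 ≤ A t q)
    (ρ : Fin Q → ℝ)
    (hρ : ∀ q, Tendsto (fun t : ℕ => (∑ s ∈ Finset.range t, A s q) / (t : ℝ))
      atTop (𝓝 (ρ q)))
    (S : Fin N → Fin Q → ℝ) (hS : ∀ i q, 0 ≤ S i q)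
    (η : Fin Q → ℝ) (hη : ∀ q, 0 ≤ η q)
    (d : Fin Q → ℝ) (hd : ∀ q, 0 < d q)
    (H : ∀ (σ : ℕ → Fin N) (X : ℕ → Fin Q → ℝ),
        (∀ q, X 0 q = 0) →
        (∀ t q, X (t + 1) q = X t q + A t q - min (S (σ t) q) (X t q)) →
        (∀ t j, ∑ q, S j q * (d q * X t q) ≤ ∑ q, S (σ t) q * (d q * X t q)) →
        Tendsto (fun t : ℕ => fun q => X t q / (t : ℝ)) atTop (𝓝 η)) :
    (∃ α : Fin N → ℝ, (∀ m, 0 ≤ α m) ∧ (∑ m, α m) = 1 ∧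
      (∀ q, η q = max (ρ q - ∑ m, α m * S m q) 0) ∧
      ∃ v : Fin Q → ℝ, (∀ q, 0 ≤ v q) ∧ (∀ q, v q = 0 ↔ η q = 0) ∧
        ∀ m, 0 < α m → ∀ k, ∑ q, v q * S k q ≤ ∑ q, v q * S m q) := by
  haveI : Nonempty (Fin N) := Fin.pos_iff_nonempty.mp hN
  classical
  -- construct a MaxWeight trajectory
  have hex : ∀ x : Fin Q → ℝ, ∃ j : Fin N,
      ∀ k, ∑ q, S k q * (d q * x q) ≤ ∑ q, S j q * (d q * x q) := by
    intro x
    obtain ⟨j, -, hj⟩ := Finset.exists_max_image Finset.univ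
      (fun k => ∑ q, S k q * (d q * x q)) Finset.univ_nonempty
    exact ⟨j, fun k => hj k (Finset.mem_univ k)⟩
  choose pick hpick using hex
  set X : ℕ → Fin Q → ℝ := fun t => Nat.rec (fun _ => 0)
    (fun t Xt q => Xt q + A t q - min (S (pick Xt) q) (Xt q)) t with hXdef
  set σ : ℕ → Fin N := fun t => pick (X t) with hσ
  have hX0 : ∀ q, X 0 q = 0 := fun q => rfl
  have hXrec : ∀ t q, X (t + 1) q = X t q + A t q - min (S (σ t) q) (X t q) :=
    fun t q => rfl
  have hMW : ∀ t j, ∑ q, S j q * (d q * X t q) ≤ ∑ q, S (σ t) q * (d q * X t q) :=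
    fun t j => hpick (X t) j
  have hT := H σ X hX0 hXrec hMW
  rw [tendsto_pi_nhds] at hT
  -- conservation: X T = arrivals - departures
  have hcons : ∀ T q, X T q = (∑ t ∈ Finset.range T, A t q)
      - ∑ t ∈ Finset.range T, min (S (σ t) q) (X t q) := by
    intro T q
    induction T with
    | zero => simp [hX0 q]
    | succ T ih =>
        rw [Finset.sum_range_succ, Finset.sum_range_succ, hXrec T q, ih]
        ring
  -- empirical distribution of chosen schedules
  set a : ℕ → Fin N → ℝ := fun T m =>
    ((Finset.range T).filter (fun t => σ t = m)).card / T with ha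
  have hmem : ∀ T, a T ∈ Set.Icc (0 : Fin N → ℝ) 1 := by
    intro T
    constructor
    · intro m
      simp only [ha, Pi.zero_apply]
      exact div_nonneg (Nat.cast_nonneg _) (Nat.cast_nonneg _)
    · intro m
      simp only [ha, Pi.one_apply]
      rcases Nat.eq_zero_or_pos T with h0 | hp
      · simp [h0]
      · have hTpos : (0:ℝ) < T := by exact_mod_cast hp
        rw [div_le_one hTpos]
        have := (Finset.card_filter_le (Finset.range T) (fun t => σ t = m)).trans_eq (Finset.card_range T)
        exact_mod_cast this
  obtain ⟨αl, hαl_mem, φ, hφ, hconv⟩ := (isCompact_Icc).tendsto_subseq hmem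
  rw [tendsto_pi_nhds] at hconv
  have hφ_atTop : Tendsto φ atTop atTop := hφ.tendsto_atTop
  have hαl0 : ∀ m, 0 ≤ αl m := fun m => hαl_mem.1 m
  -- the a T sum to 1 for T ≥ 1
  have hsum1 : ∀ T : ℕ, 1 ≤ T → (∑ m, a T m) = 1 := by
    intro T hT1
    have hTpos : (0:ℝ) < T := by exact_mod_cast hT1
    have hcard : (∑ m, (((Finset.range T).filter (fun t => σ t = m)).card : ℝ)) = T := by
      have := Finset.card_eq_sum_card_fiberwise
        (f := σ) (s := Finset.range T) (t := Finset.univ) (fun x _ => Finset.mem_univ _)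
      rw [Finset.card_range] at this
      exact_mod_cast this.symm
    simp only [ha, ← Finset.sum_div, hcard]
    field_simp
  have hαl1 : (∑ m, αl m) = 1 := by
    have h1 : Tendsto (fun k => ∑ m, a (φ k) m) atTop (𝓝 (∑ m, αl m)) := by
      apply tendsto_finset_sum
      intro m _
      exact hconv m
    have h2 : (fun k => ∑ m, a (φ k) m) =ᶠ[atTop] (fun _ => (1:ℝ)) := by
      filter_upwards [Filter.eventually_ge_atTop 1] with k hk
      exact hsum1 (φ k) (le_trans hk (hφ.le_apply))
    exact tendsto_nhds_unique (h1.congr' h2) tendsto_const_nhds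
  -- grouping service sums by fibers
  have hserv : ∀ q T, (∑ t ∈ Finset.range T, S (σ t) q)
      = ∑ m, (((Finset.range T).filter (fun t => σ t = m)).card : ℝ) * S m q := by
    intro q T
    have := Finset.sum_fiberwise_eq_sum_filter (Finset.range T) Finset.univ σ
      (fun t => S (σ t) q)
    simp only [Finset.mem_univ, Finset.filter_true] at this
    rw [← this]
    apply Finset.sum_congr rfl
    intro m _
    rw [Finset.sum_congr rfl (fun t ht => by rw [(Finset.mem_filter.mp ht).2] :
      ∀ t ∈ (Finset.range T).filter (fun t => σ t = m), S (σ t) q = S m q)]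
    rw [Finset.sum_const, nsmul_eq_mul]
  -- departures average converge
  have hdep : ∀ q, Tendsto (fun T : ℕ =>
      (∑ t ∈ Finset.range T, min (S (σ t) q) (X t q)) / T) atTop (𝓝 (ρ q - η q)) := by
    intro q
    have h1 := (hρ q).sub (hT q)
    apply h1.congr
    intro T
    rw [hcons T q]
    ring
  -- X is nonnegative, min ≤ S
  have hXnn : ∀ t q, 0 ≤ X t q := by
    intro t
    induction t with
    | zero => intro q; rw [hX0 q]
    | succ t ih =>
        intro q
        rw [hXrec t q]
        have h1 := min_le_right (S (σ t) q) (X t q)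
        have := hA0 t q; have := ih q; linarith
  set Smax : Fin Q → ℝ := fun q => ∑ i, S i q with hSmax
  have hSle : ∀ j q, S j q ≤ Smax q := fun j q =>
    Finset.single_le_sum (fun i _ => hS i q) (Finset.mem_univ j)
  -- the candidate limit combination satisfies the fixed point equation
  have hkey : ∀ q, η q = max (ρ q - ∑ m, αl m * S m q) 0 := by
    intro q
    -- empirical service average tends to the limit combination along φ
    have hSlim : Tendsto (fun k => ∑ m, a (φ k) m * S m q) atTop
        (𝓝 (∑ m, αl m * S m q)) := by
      apply tendsto_finset_sum
      intro m _
      exact (hconv m).mul_const (S m q)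
    have hSsum : ∀ T : ℕ, 1 ≤ T → (∑ m, a T m * S m q)
        = (∑ t ∈ Finset.range T, S (σ t) q) / T := by
      intro T hT1
      have hTpos : (0:ℝ) < T := by exact_mod_cast hT1
      rw [hserv q T, Finset.sum_div]
      apply Finset.sum_congr rfl
      intro m _
      simp only [ha]
      ring
    rcases eq_or_lt_of_le (hη q) with h0 | hpos
    · -- η q = 0 : show ρ q ≤ ∑ αl S
      have hmono : ∀ T : ℕ, 1 ≤ T →
          (∑ t ∈ Finset.range T, min (S (σ t) q) (X t q)) / T ≤ ∑ m, a T m * S m q := by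
        intro T hT1
        have hTpos : (0:ℝ) < T := by exact_mod_cast hT1
        rw [hSsum T hT1]
        apply div_le_div_of_nonneg_right _ hTpos.le
        apply Finset.sum_le_sum
        intro t _
        exact min_le_left _ _
      have hle : ρ q ≤ ∑ m, αl m * S m q := by
        have hl1 : Tendsto (fun k => (∑ t ∈ Finset.range (φ k),
            min (S (σ t) q) (X t q)) / (φ k : ℝ)) atTop (𝓝 (ρ q - η q)) :=
          (hdep q).comp hφ_atTop
        rw [← h0, sub_zero] at hl1
        apply le_of_tendsto_of_tendsto hl1 hSlim
        filter_upwards [Filter.eventually_ge_atTop 1] with k hk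
        exact hmono (φ k) (le_trans hk hφ.le_apply)
      rw [← h0, eq_comm, max_eq_right]
      linarith
    · -- η q > 0 : the queue eventually exceeds Smax, min = S
      have hev : ∀ᶠ t in atTop, min (S (σ t) q) (X t q) = S (σ t) q := by
        have h1 : ∀ᶠ t : ℕ in atTop, η q / 2 < X t q / t :=
          (hT q).eventually (eventually_gt_nhds (by linarith))
        have h2a : Tendsto (fun t : ℕ => (η q / 2) * (t : ℝ)) atTop atTop :=
          Filter.Tendsto.const_mul_atTop (by linarith : (0:ℝ) < η q / 2)
            tendsto_natCast_atTop_atTop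
        have h2 : ∀ᶠ t : ℕ in atTop, Smax q ≤ (η q / 2) * t :=
          h2a.eventually_ge_atTop (Smax q)
        filter_upwards [h1, h2, Filter.eventually_ge_atTop 1] with t ht1 ht2 ht3
        have htpos : (0:ℝ) < t := by exact_mod_cast ht3
        have h3 : (η q / 2) * t < X t q := (lt_div_iff₀ htpos).mp ht1
        exact min_eq_left (le_trans (hSle (σ t) q) (le_trans ht2 h3.le))
      obtain ⟨t0, ht0⟩ := Filter.eventually_atTop.mp hev
      have hdiff : Tendsto (fun T : ℕ => (∑ t ∈ Finset.range T, S (σ t) q) / T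
          - (∑ t ∈ Finset.range T, min (S (σ t) q) (X t q)) / T) atTop (𝓝 0) := by
        have hconst : ∀ T : ℕ, t0 ≤ T → (∑ t ∈ Finset.range T, S (σ t) q)
            - (∑ t ∈ Finset.range T, min (S (σ t) q) (X t q))
            = (∑ t ∈ Finset.range t0, (S (σ t) q - min (S (σ t) q) (X t q))) := by
          intro T hT0
          rw [← Finset.sum_sub_distrib]
          rw [← Finset.sum_range_add_sum_Ico _ hT0]
          have : (∑ t ∈ Finset.Ico t0 T, (S (σ t) q - min (S (σ t) q) (X t q))) = 0 := by
            apply Finset.sum_eq_zero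
            intro t ht
            rw [ht0 t (Finset.mem_Ico.mp ht).1]
            ring
          rw [this, add_zero]
        set c : ℝ := ∑ t ∈ Finset.range t0, (S (σ t) q - min (S (σ t) q) (X t q)) with hc
        have h3 : Tendsto (fun T : ℕ => c / T) atTop (𝓝 0) :=
          Tendsto.div_atTop tendsto_const_nhds tendsto_natCast_atTop_atTop
        refine Filter.Tendsto.congr' ?_ h3
        filter_upwards [Filter.eventually_ge_atTop t0, Filter.eventually_ge_atTop 1] with T hTt0 hT1
        have hTpos : (0:ℝ) < T := by exact_mod_cast hT1
        rw [div_sub_div_same, hconst T hTt0]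
      have hSto : Tendsto (fun T : ℕ => (∑ t ∈ Finset.range T, S (σ t) q) / T)
          atTop (𝓝 (ρ q - η q)) := by
        have := hdiff.add (hdep q)
        simp only [zero_add] at this
        apply this.congr
        intro T
        ring
      have hlim2 : (∑ m, αl m * S m q) = ρ q - η q := by
        have h1 : Tendsto (fun k => (∑ t ∈ Finset.range (φ k), S (σ t) q) / (φ k : ℝ))
            atTop (𝓝 (ρ q - η q)) := hSto.comp hφ_atTop
        have h2 : (fun k => ∑ m, a (φ k) m * S m q) =ᶠ[atTop]
            (fun k => (∑ t ∈ Finset.range (φ k), S (σ t) q) / (φ k : ℝ)) := by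
          filter_upwards [Filter.eventually_ge_atTop 1] with k hk
          exact hSsum (φ k) (le_trans hk hφ.le_apply)
        exact tendsto_nhds_unique (hSlim.congr' h2) h1
      rw [hlim2, eq_comm, max_eq_left (by linarith)]
      linarith
  refine ⟨αl, hαl0, hαl1, hkey, fun q => d q * η q, ?_, ?_, ?_⟩
  · intro q
    exact mul_nonneg (hd q).le (hη q)
  · intro q
    constructor
    · intro h
      rcases mul_eq_zero.mp h with h | h
      · exact absurd h (hd q).ne'
      · exact h
    · intro h
      simp only [h, mul_zero]
  · -- maximality of scheduled vectors in the limit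
    intro m hm k
    -- σ t = m infinitely often
    have hinf : {t | σ t = m}.Infinite := by
      by_contra hfin
      rw [Set.not_infinite] at hfin
      have hbd : ∀ T : ℕ, (((Finset.range T).filter (fun t => σ t = m)).card : ℝ)
          ≤ hfin.toFinset.card := by
        intro T
        have : (Finset.range T).filter (fun t => σ t = m) ⊆ hfin.toFinset := by
          intro t ht
          rw [Set.Finite.mem_toFinset]
          exact (Finset.mem_filter.mp ht).2
        exact_mod_cast Finset.card_le_card this
      have hzero : Tendsto (fun k => a (φ k) m) atTop (𝓝 0) := by
        apply squeeze_zero_norm' (a := fun k => (hfin.toFinset.card : ℝ) / (φ k : ℝ))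
        · filter_upwards [Filter.eventually_ge_atTop 1] with j hj
          have hjpos : (0:ℝ) < (φ j : ℝ) := by
            have := le_trans hj hφ.le_apply
            exact_mod_cast this
          rw [Real.norm_eq_abs, abs_of_nonneg (div_nonneg (Nat.cast_nonneg _) (Nat.cast_nonneg _) : (0:ℝ) ≤ a (φ j) m)]
          exact div_le_div_of_nonneg_right (hbd (φ j)) hjpos.le
        · exact Tendsto.div_atTop tendsto_const_nhds
            (tendsto_natCast_atTop_atTop.comp hφ_atTop)
      have := tendsto_nhds_unique (hconv m) hzero
      rw [this] at hm
      exact lt_irrefl 0 hm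
    have hfreq : ∃ᶠ t in atTop, σ t = m := Nat.frequently_atTop_iff_infinite.mpr hinf
    obtain ⟨ψ, hψ, hψm⟩ := Filter.extraction_of_frequently_atTop hfreq
    -- limits of the weighted sums along ψ
    have hlimf : ∀ j : Fin N, Tendsto (fun t : ℕ => ∑ q, S j q * (d q * X t q) / t)
        atTop (𝓝 (∑ q, S j q * (d q * η q))) := by
      intro j
      apply tendsto_finset_sum
      intro q _
      have h1 : Tendsto (fun t : ℕ => S j q * (d q * (X t q / t))) atTop
          (𝓝 (S j q * (d q * η q))) := (((hT q).const_mul (d q)).const_mul (S j q))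
      apply h1.congr'
      filter_upwards with t
      ring
    have hψtop : Tendsto ψ atTop atTop := hψ.tendsto_atTop
    have hk' : Tendsto (fun n => ∑ q, S k q * (d q * X (ψ n) q) / (ψ n : ℝ)) atTop
        (𝓝 (∑ q, S k q * (d q * η q))) := (hlimf k).comp hψtop
    have hm' : Tendsto (fun n => ∑ q, S m q * (d q * X (ψ n) q) / (ψ n : ℝ)) atTop
        (𝓝 (∑ q, S m q * (d q * η q))) := (hlimf m).comp hψtop
    have hle' : ∀ᶠ n in atTop, (∑ q, S k q * (d q * X (ψ n) q) / (ψ n : ℝ))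
        ≤ ∑ q, S m q * (d q * X (ψ n) q) / (ψ n : ℝ) := by
      filter_upwards [Filter.eventually_ge_atTop 1] with n hn
      have hpos : (0:ℝ) < (ψ n : ℝ) := by
        have := le_trans hn hψ.le_apply
        exact_mod_cast this
      have hineq := hMW (ψ n) k
      rw [hψm n] at hineq
      rw [← Finset.sum_div, ← Finset.sum_div]
      exact div_le_div_of_nonneg_right hineq hpos.le
    have hfin2 := le_of_tendsto_of_tendsto hk' hm' hle'
    have e1 : ∀ j : Fin N, (∑ q, (d q * η q) * S j q) = ∑ q, S j q * (d q * η q) :=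
      fun j => Finset.sum_congr rfl fun q _ => mul_comm _ _
    show (∑ q, d q * η q * S k q) ≤ ∑ q, d q * η q * S m q
    rw [e1 k, e1 m]
    exact hfin2


/-- in overload, there exists a MaxWeight matrix D steering X(t)/t → η
iff η is of the form (ρ − Σ α_m S_m)⁺ with α ≥ 0 summing to 1, and there exists v ≥ 0,
with v_q = 0 iff η_q = 0, such that every S_m with α_m > 0 maximizes ⟨v, ·⟩ over 𝒮. -/
theorem stmt15 {Q N : ℕ} (hQ : 0 < Q) (hN : 0 < N)
    (A : ℕ → Fin Q → ℝ) (Abar : Fin Q → ℝ)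
    (hA0 : ∀ t q, 0 ≤ A t q) (hAbar : ∀ t q, A t q ≤ Abar q)
    (ρ : Fin Q → ℝ) (hρpos : ∀ q, 0 < ρ q)
    (hρ : ∀ q, Tendsto (fun t : ℕ => (∑ s ∈ Finset.range t, A s q) / (t : ℝ))
      atTop (𝓝 (ρ q)))
    (S : Fin N → Fin Q → ℝ) (hS : ∀ i q, 0 ≤ S i q)
    (hover : ρ ∉ stabRegion S)
    (η : Fin Q → ℝ) (hη : ∀ q, 0 ≤ η q) :
    (∃ d : Fin Q → ℝ, (∀ q, 0 < d q) ∧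
      ∀ (σ : ℕ → Fin N) (X : ℕ → Fin Q → ℝ),
        (∀ q, X 0 q = 0) →
        (∀ t q, X (t + 1) q = X t q + A t q - min (S (σ t) q) (X t q)) →
        (∀ t j, ∑ q, S j q * (d q * X t q) ≤ ∑ q, S (σ t) q * (d q * X t q)) →
        Tendsto (fun t : ℕ => fun q => X t q / (t : ℝ)) atTop (𝓝 η)) ↔
    (∃ α : Fin N → ℝ, (∀ m, 0 ≤ α m) ∧ (∑ m, α m) = 1 ∧
      (∀ q, η q = max (ρ q - ∑ m, α m * S m q) 0) ∧
      ∃ v : Fin Q → ℝ, (∀ q, 0 ≤ v q) ∧ (∀ q, v q = 0 ↔ η q = 0) ∧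
        ∀ m, 0 < α m → ∀ k, ∑ q, v q * S k q ≤ ∑ q, v q * S m q) := by
  constructor
  · rintro ⟨d, hd, H⟩
    exact forward_main hN A hA0 ρ hρ S hS η hη d hd H
  · rintro ⟨α, hα0, hα1, hηeq, v, hv0, hviff, hvmax⟩
    set d : Fin Q → ℝ := fun q => if η q = 0 then 1 else v q / η q with hddef
    have hd : ∀ q, 0 < d q := by
      intro q
      simp only [hddef]
      split_ifs with h
      · norm_num
      · have hηpos : 0 < η q := lt_of_le_of_ne (hη q) (Ne.symm h)
        have hvpos : 0 < v q := by
          rcases eq_or_lt_of_le (hv0 q) with h0 | h0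
          · exact absurd ((hviff q).mp h0.symm) h
          · exact h0
        positivity
    have hdv : ∀ q, v q = d q * η q := by
      intro q
      simp only [hddef]
      split_ifs with h
      · rw [h, mul_zero]
        exact (hviff q).mpr h
      · field_simp
    exact ⟨d, hd, fun σ X hX0 hXrec hMW =>
      backward_main A Abar hA0 hAbar ρ hρ S hS η hη α hα0 hα1 hηeq
        v hv0 hviff hvmax d hd hdv σ X hX0 hXrec hMW⟩
end
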